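/- arXiv:0709.2504 — 5 statements merged into one kernel-verified Lean document; each statement's English description precedes it below -/
import Mathlib

section
/- Let x be a unimodular complex number (|x| = 1) and let σ be a Schur function such that σ(z) - x = O((z-1)^2) as z tends nontangentially to 1. Then σ(z) = x for all z in the open unit disk. -/
noncomputable section

open Complex Filter

/-- The open unit disk in the complex plane. -/
def unitDisk : Set ℂ := {z : ℂ | ‖z‖ < 1}

/-- A Schur function: analytic on the open unit disk and bounded by one in modulus there. -/
def SchurFunction (f : ℂ → ℂ) : Prop :=
  DifferentiableOn ℂ f unitDisk ∧ ∀ z ∈ unitDisk, ‖f z‖ ≤ 1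

/-- The Stolz region with parameter `K` at the boundary point `1`. -/
def stolzRegion (K : ℝ) : Set ℂ :=
  {z : ℂ | ‖z‖ < 1 ∧ ‖z - 1‖ < K * (1 - ‖z‖)}

/-- `f(z) = O((z-1)^m)` as `z` tends nontangentially to `1`:
`(z-1)^{-m} f(z)` stays bounded as `z → 1` within each Stolz region. -/
def NTBigO (f : ℂ → ℂ) (m : ℕ) : Prop :=
  ∀ K > (1 : ℝ), f =O[nhdsWithin 1 (stolzRegion K)] fun z => (z - 1) ^ m

lemma mobius_bound (s t r p : ℝ) (hs0 : 0 ≤ s) (hs1 : s ≤ 1) (ht0 : 0 ≤ t) (ht1 : t ≤ 1)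
    (hr0 : 0 ≤ r) (hr1 : r ≤ 1) (hp : p ≤ t * s)
    (h1 : s ^ 2 + t ^ 2 - 2 * p ≤ r ^ 2 * (1 + t ^ 2 * s ^ 2 - 2 * p)) :
    (1 - t) * (1 - r) ≤ 2 * (1 - s) := by
  have hY : 0 ≤ (t * s - p) * (1 - r ^ 2) := by
    apply mul_nonneg (by linarith) (by nlinarith)
  have hQ : ((1 + r * t) * s - (t + r)) * ((1 - r * t) * s - (t - r)) ≤ 0 := by nlinarith [h1, hY]
  have claim : s * (1 + r * t) ≤ t + r := by
    by_contra h
    push_neg at h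
    have hts : t * s ≤ 1 := by nlinarith
    have hF2 : 0 < (1 - r * t) * s - (t - r) := by nlinarith
    nlinarith [mul_pos (by nlinarith : (0:ℝ) < (1 + r * t) * s - (t + r)) hF2]
  nlinarith [claim, mul_nonneg (by nlinarith : (0:ℝ) ≤ 1 - r * t) (by linarith : (0:ℝ) ≤ 1 - s)]

lemma unitDisk_eq : unitDisk = Metric.ball (0 : ℂ) 1 := by
  ext z
  simp [unitDisk, Metric.mem_ball, Complex.dist_eq]

lemma radial_mem : ∀ r : ℝ, r ∈ Set.Ioo (0:ℝ) 1 → (r : ℂ) ∈ unitDisk := by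
  intro r hr
  simp only [unitDisk, Set.mem_setOf_eq, Complex.norm_real, Real.norm_eq_abs]
  rw [abs_of_pos hr.1]
  exact hr.2

lemma radial_tendsto :
    Tendsto (fun r : ℝ => (r : ℂ)) (nhdsWithin 1 (Set.Iio 1)) (nhdsWithin 1 (stolzRegion 2)) := by
  rw [tendsto_nhdsWithin_iff]
  constructor
  · have h : Tendsto (fun r : ℝ => (r : ℂ)) (nhds 1) (nhds ((1:ℝ):ℂ)) :=
      Complex.continuous_ofReal.tendsto 1
    simp only [Complex.ofReal_one] at h
    exact h.mono_left nhdsWithin_le_nhds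
  · filter_upwards [Ioo_mem_nhdsLT_of_mem (by norm_num : (1:ℝ) ∈ Set.Ioc 0 1)]
      with r hr
    obtain ⟨hr0, hr1⟩ := hr
    have habs : ‖(r : ℂ)‖ = r := by
      rw [Complex.norm_real, Real.norm_eq_abs, abs_of_pos hr0]
    have hsub : ‖(r : ℂ) - 1‖ = 1 - r := by
      have : (r : ℂ) - 1 = ((r - 1 : ℝ) : ℂ) := by push_cast; ring
      rw [this, Complex.norm_real, Real.norm_eq_abs, abs_of_neg (by linarith)]
      ring
    constructor
    · rw [habs]; exact hr1
    · rw [habs, hsub]; linarith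

theorem rigidity_lemma (x : ℂ) (hx : ‖x‖ = 1) (σ : ℂ → ℂ)
    (hσ : SchurFunction σ) (hO : NTBigO (fun z => σ z - x) 2) :
    ∀ z ∈ unitDisk, σ z = x := by
  obtain ⟨hdiff, hbd⟩ := hσ
  -- radial big-O bound
  have hO2 := (hO 2 (by norm_num)).comp_tendsto radial_tendsto
  rw [Asymptotics.isBigO_iff] at hO2
  obtain ⟨C, hC⟩ := hO2
  have hbound : ∀ᶠ r : ℝ in nhdsWithin 1 (Set.Iio 1),
      ‖σ (r : ℂ) - x‖ ≤ C * (1 - r) ^ 2 ∧ r ∈ Set.Ioo (0:ℝ) 1 := by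
    filter_upwards [hC, Ioo_mem_nhdsLT_of_mem (by norm_num : (1:ℝ) ∈ Set.Ioc 0 1)]
      with r h1 h2
    refine ⟨?_, h2⟩
    have hsub : ‖(r : ℂ) - 1‖ = 1 - r := by
      have : (r : ℂ) - 1 = ((r - 1 : ℝ) : ℂ) := by push_cast; ring
      rw [this, Complex.norm_real, Real.norm_eq_abs, abs_of_neg (by linarith [h2.2])]
      ring
    have := h1
    simp only [Function.comp, norm_pow] at this
    rwa [hsub] at this
  have hne : (nhdsWithin (1:ℝ) (Set.Iio 1)).NeBot := nhdsLT_neBot 1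
  by_cases hlt : ∀ z ∈ unitDisk, ‖σ z‖ < 1
  · -- impossible: Schwarz lemma contradiction
    exfalso
    have h0 : (0 : ℂ) ∈ unitDisk := by simp [unitDisk]
    set a := σ 0 with ha_def
    have hta : ‖a‖ < 1 := hlt 0 h0
    set g : ℂ → ℂ := fun z => (σ z - a) * (1 - (starRingEnd ℂ) a * σ z)⁻¹ with hg
    have hden : ∀ z ∈ unitDisk, 1 - (starRingEnd ℂ) a * σ z ≠ 0 := by
      intro z hz
      have h1 : ‖(starRingEnd ℂ) a * σ z‖ < 1 := by
        rw [norm_mul, Complex.norm_conj]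
        nlinarith [hlt z hz, norm_nonneg a, norm_nonneg (σ z)]
      intro h
      rw [sub_eq_zero] at h
      rw [← h] at h1
      simp at h1
    have hgd : DifferentiableOn ℂ g (Metric.ball 0 1) := by
      rw [← unitDisk_eq]
      exact (hdiff.sub_const a).mul
        (((differentiableOn_const 1).sub (hdiff.const_mul _)).inv hden)
    have hg0 : g 0 = 0 := by simp [hg, ← ha_def]
    have hkey : ∀ z ∈ unitDisk,
        (1 - ‖a‖) * (1 - ‖z‖) ≤ 2 * (1 - ‖σ z‖) := by
      intro z hz
      have hmaps : Set.MapsTo g (Metric.ball 0 1) (Metric.ball 0 1) := by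
        rw [← unitDisk_eq]
        intro w hw
        have hsw := hlt w hw
        simp only [unitDisk, Set.mem_setOf_eq] at hw ⊢
        have hsq : Complex.normSq (1 - (starRingEnd ℂ) a * σ w) - Complex.normSq (σ w - a)
            = (1 - Complex.normSq a) * (1 - Complex.normSq (σ w)) := by
          simp only [Complex.normSq_apply, Complex.sub_re, Complex.sub_im, Complex.mul_re,
            Complex.mul_im, Complex.one_re, Complex.one_im, Complex.conj_re, Complex.conj_im]
          ring
        have hna : Complex.normSq a < 1 := by
          rw [← Complex.sq_norm]; nlinarith [norm_nonneg a]
        have hnw : Complex.normSq (σ w) < 1 := by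
          rw [← Complex.sq_norm]; nlinarith [norm_nonneg (σ w)]
        have hlt2 : Complex.normSq (σ w - a) < Complex.normSq (1 - (starRingEnd ℂ) a * σ w) := by
          nlinarith
        have habslt : ‖σ w - a‖ < ‖1 - (starRingEnd ℂ) a * σ w‖ := by
          have e1 := Complex.sq_norm (σ w - a)
          have e2 := Complex.sq_norm (1 - (starRingEnd ℂ) a * σ w)
          nlinarith [norm_nonneg (σ w - a),
            norm_nonneg (1 - (starRingEnd ℂ) a * σ w)]
        have hBpos : 0 < ‖1 - (starRingEnd ℂ) a * σ w‖ :=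
          lt_of_le_of_lt (norm_nonneg _) habslt
        show ‖(σ w - a) * (1 - (starRingEnd ℂ) a * σ w)⁻¹‖ < 1
        rw [norm_mul, norm_inv, mul_inv_lt_iff₀ hBpos]
        linarith
      have hschwarz := Complex.norm_le_norm_of_mapsTo_ball hgd (hmaps.mono_right Metric.ball_subset_closedBall) hg0
        (show ‖z‖ < 1 from hz)
      -- convert to A ≤ r * B
      have hBpos : 0 < ‖1 - (starRingEnd ℂ) a * σ z‖ := by
        have := hden z hz
        simpa [norm_pos_iff] using this
      have habs : ‖σ z - a‖ ≤ ‖z‖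
          * ‖1 - (starRingEnd ℂ) a * σ z‖ := by
        have : ‖g z‖
            = ‖σ z - a‖ * (‖1 - (starRingEnd ℂ) a * σ z‖)⁻¹ := by
          rw [hg]; simp [map_mul, map_inv₀]
        rw [this] at hschwarz
        rw [mul_inv_le_iff₀ hBpos] at hschwarz
        linarith [hschwarz]
      set s := ‖σ z‖
      set t := ‖a‖
      set r := ‖z‖
      set p := ((starRingEnd ℂ) a * σ z).re with hp_def
      have hA2 : (‖σ z - a‖) ^ 2 = s ^ 2 + t ^ 2 - 2 * p := by
        have e1 : s ^ 2 = Complex.normSq (σ z) := Complex.sq_norm _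
        have e2 : t ^ 2 = Complex.normSq a := Complex.sq_norm _
        rw [Complex.sq_norm, e1, e2, hp_def]
        simp only [Complex.normSq_apply, Complex.sub_re, Complex.sub_im, Complex.mul_re,
          Complex.mul_im, Complex.conj_re, Complex.conj_im]
        ring
      have hB2 : (‖1 - (starRingEnd ℂ) a * σ z‖) ^ 2
          = 1 + t ^ 2 * s ^ 2 - 2 * p := by
        have e1 : s ^ 2 = Complex.normSq (σ z) := Complex.sq_norm _
        have e2 : t ^ 2 = Complex.normSq a := Complex.sq_norm _
        rw [Complex.sq_norm, e1, e2, hp_def]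
        simp only [Complex.normSq_apply, Complex.sub_re, Complex.sub_im, Complex.mul_re,
          Complex.mul_im, Complex.one_re, Complex.one_im, Complex.conj_re, Complex.conj_im]
        ring
      have hp_le : p ≤ t * s := by
        calc p ≤ ‖(starRingEnd ℂ) a * σ z‖ := Complex.re_le_norm _
        _ = t * s := by rw [norm_mul, Complex.norm_conj]
      have hsq : (‖σ z - a‖) ^ 2 ≤ (‖z‖) ^ 2
          * (‖1 - (starRingEnd ℂ) a * σ z‖) ^ 2 := by
        nlinarith [habs, norm_nonneg (σ z - a), norm_nonneg z, hBpos.le]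
      exact mobius_bound s t r p (norm_nonneg _) (hbd z hz) (norm_nonneg _)
        hta.le (norm_nonneg _) hz.le hp_le (by nlinarith [hA2, hB2, hsq])
    -- radial contradiction
    have hev : ∀ᶠ r : ℝ in nhdsWithin 1 (Set.Iio 1),
        (1 - ‖a‖) ≤ 2 * C * (1 - r) := by
      filter_upwards [hbound] with r ⟨h1, h2⟩
      have hr0 := h2.1
      have hr1 := h2.2
      have hmem := radial_mem r h2
      have hk := hkey _ hmem
      have habsr : ‖(r : ℂ)‖ = r := by
        rw [Complex.norm_real, Real.norm_eq_abs, abs_of_pos hr0]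
      rw [habsr] at hk
      have hup : 1 - ‖σ (r : ℂ)‖ ≤ C * (1 - r) ^ 2 := by
        have h3 : ‖x‖ ≤ ‖x - σ (r:ℂ)‖ + ‖σ (r:ℂ)‖ := by
          calc ‖x‖ = ‖(x - σ (r:ℂ)) + σ (r:ℂ)‖ := by ring_nf
          _ ≤ _ := norm_add_le _ _
        have h4 : ‖x - σ (r:ℂ)‖ = ‖σ (r:ℂ) - x‖ :=
          norm_sub_rev _ _
        rw [hx] at h3
        linarith [h1, h3, h4.le, h4.ge]
      have hpos : (0:ℝ) < 1 - r := by linarith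
      have : (1 - ‖a‖) * (1 - r) ≤ 2 * C * (1 - r) ^ 2 := by nlinarith
      nlinarith
    have htend : Tendsto (fun r : ℝ => 2 * C * (1 - r)) (nhdsWithin 1 (Set.Iio 1)) (nhds 0) := by
      have hc : Continuous fun r : ℝ => 2 * C * (1 - r) := by continuity
      have := hc.tendsto 1
      simp only [sub_self, mul_zero] at this
      exact this.mono_left nhdsWithin_le_nhds
    have hev2 := htend.eventually_lt_const (show (0:ℝ) < 1 - ‖a‖ by linarith)
    obtain ⟨r, h1, h2⟩ := (hev.and hev2).exists
    linarith
  · -- maximum modulus: σ is constant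
    push_neg at hlt
    obtain ⟨z₀, hz₀, hge⟩ := hlt
    have hmax : IsMaxOn (norm ∘ σ) unitDisk z₀ := by
      intro z hz
      simp only [Function.comp, Set.mem_setOf_eq]
      exact le_trans (hbd z hz) hge
    have heqOn : Set.EqOn σ (Function.const ℂ (σ z₀)) unitDisk := by
      apply Complex.eqOn_of_isPreconnected_of_isMaxOn_norm _ _ hdiff hz₀ hmax
      · rw [unitDisk_eq]; exact (convex_ball 0 1).isPreconnected
      · rw [unitDisk_eq]; exact Metric.isOpen_ball
    have hconst : σ z₀ = x := by
      have hev : ∀ᶠ r : ℝ in nhdsWithin 1 (Set.Iio 1),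
          ‖σ z₀ - x‖ ≤ C * (1 - r) ^ 2 := by
        filter_upwards [hbound] with r ⟨h1, h2⟩
        have := heqOn (radial_mem r h2)
        simp only [Function.const] at this
        rwa [this] at h1
      have htend : Tendsto (fun r : ℝ => C * (1 - r) ^ 2) (nhdsWithin 1 (Set.Iio 1))
          (nhds 0) := by
        have hc : Continuous fun r : ℝ => C * (1 - r) ^ 2 := by continuity
        have := hc.tendsto 1
        simp only [sub_self] at this
        norm_num at this
        exact this.mono_left nhdsWithin_le_nhds
      have hle : ‖σ z₀ - x‖ ≤ 0 := ge_of_tendsto htend hev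
      have : ‖σ z₀ - x‖ = 0 := le_antisymm hle (norm_nonneg _)
      rw [norm_eq_zero] at this
      exact sub_eq_zero.mp this
    intro z hz
    have := heqOn hz
    simp only [Function.const] at this
    rw [this, hconst]
end
end

section
/- (Burns–Krantz rigidity, nontangential version.) Assume that a Schur function s satisfies s(z) = z + O((1-z)^4) as z tends nontangentially to 1. Then s(z) = z for all z in the open unit disk. -/
noncomputable section

open Complex Filter
open Metric Set

/-- Compatibility: the complex modulus as an absolute value. -/
def Complex.abs : AbsoluteValue ℂ ℝ := NormedField.toAbsoluteValue ℂ

lemma Complex.norm_eq_abs (z : ℂ) : ‖z‖ = Complex.abs z := rfl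

lemma Complex.abs_conj (z : ℂ) : Complex.abs ((starRingEnd ℂ) z) = Complex.abs z :=
  Complex.norm_conj z

lemma Complex.abs_ofReal (r : ℝ) : Complex.abs (r : ℂ) = |r| := by
  show ‖(r : ℂ)‖ = |r|
  simp

lemma Complex.sq_abs (z : ℂ) : Complex.abs z ^ 2 = Complex.normSq z := Complex.sq_norm z

lemma Complex.continuous_abs : Continuous Complex.abs := continuous_norm

lemma Complex.abs_two : Complex.abs 2 = 2 := by
  show ‖(2 : ℂ)‖ = 2
  simp

lemma Complex.abs_apply (z : ℂ) : Complex.abs z = Real.sqrt (Complex.normSq z) := rfl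

lemma Complex.re_le_abs (z : ℂ) : z.re ≤ Complex.abs z := Complex.re_le_norm z


lemma bk_denom_ne {a z : ℂ} (ha : Complex.abs a < 1) (hz : Complex.abs z < 1) :
    1 - (starRingEnd ℂ) a * z ≠ 0 := by
  intro h
  have : (starRingEnd ℂ) a * z = 1 := by linear_combination -h
  have := congrArg Complex.abs this
  rw [map_mul, map_one, Complex.abs_conj] at this
  nlinarith [Complex.abs.nonneg a, Complex.abs.nonneg z]

lemma bk_ident (u v : ℂ) :
    Complex.abs (1 - (starRingEnd ℂ) u * v) ^ 2 - Complex.abs (u - v) ^ 2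
      = (1 - Complex.abs u ^ 2) * (1 - Complex.abs v ^ 2) := by
  simp only [Complex.sq_abs, Complex.normSq_apply, Complex.sub_re, Complex.sub_im,
    Complex.mul_re, Complex.mul_im, Complex.one_re, Complex.one_im, Complex.conj_re,
    Complex.conj_im]
  ring

/-- Möbius transform of the disk. -/
def moeb (a z : ℂ) : ℂ := (a - z) / (1 - (starRingEnd ℂ) a * z)

lemma moeb_self (a : ℂ) : moeb a a = 0 := by simp [moeb]

lemma moeb_zero (a : ℂ) : moeb a 0 = a := by simp [moeb]

lemma moeb_abs_lt {a z : ℂ} (ha : Complex.abs a < 1) (hz : Complex.abs z < 1) :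
    Complex.abs (moeb a z) < 1 := by
  have hd := bk_denom_ne ha hz
  have hdp : 0 < Complex.abs (1 - (starRingEnd ℂ) a * z) := Complex.abs.pos hd
  have hlt : Complex.abs (a - z) < Complex.abs (1 - (starRingEnd ℂ) a * z) := by
    by_contra hge
    push_neg at hge
    have h := bk_ident a z
    have hsq := pow_le_pow_left₀ hdp.le hge 2
    have ha2 : Complex.abs a ^ 2 < 1 := by nlinarith [Complex.abs.nonneg a]
    have hz2 : Complex.abs z ^ 2 < 1 := by nlinarith [Complex.abs.nonneg z]
    nlinarith [mul_pos (sub_pos.2 ha2) (sub_pos.2 hz2)]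
  rw [moeb, map_div₀, div_lt_one hdp]
  exact hlt

lemma moeb_invol {a z : ℂ} (ha : Complex.abs a < 1) (hz : Complex.abs z < 1) :
    moeb a (moeb a z) = z := by
  have h1 : 1 - (starRingEnd ℂ) a * z ≠ 0 := bk_denom_ne ha hz
  have h2 : 1 - (starRingEnd ℂ) a * a ≠ 0 := bk_denom_ne ha ha
  have hm := moeb_abs_lt ha hz
  have hD : 1 - (starRingEnd ℂ) a * ((a - z) / (1 - (starRingEnd ℂ) a * z)) ≠ 0 :=
    bk_denom_ne ha hm
  rw [moeb, moeb, div_eq_iff hD]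
  linear_combination -(div_mul_cancel₀ (a - z) h1)

lemma moeb_diffOn {a : ℂ} (ha : Complex.abs a < 1) :
    DifferentiableOn ℂ (moeb a) (ball (0:ℂ) 1) := by
  apply DifferentiableOn.div
  · exact (differentiableOn_const a).sub differentiableOn_id
  · exact (differentiableOn_const 1).sub (differentiableOn_id.const_mul _)
  · intro z hz
    exact bk_denom_ne ha (by simpa [Complex.dist_eq] using mem_ball_iff_norm.1 hz : ‖z‖ < 1)

section
variable {a z u v : ℂ}

lemma mem_ball01 {z : ℂ} : z ∈ ball (0:ℂ) 1 ↔ Complex.abs z < 1 := by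
  simp [Complex.dist_eq, mem_ball, Complex.norm_eq_abs]

/-- Schwarz–Pick inequality, in cleared-denominator squared form. -/
lemma schwarz_pick {f : ℂ → ℂ} (hd : DifferentiableOn ℂ f (ball (0:ℂ) 1))
    (hm : MapsTo f (ball (0:ℂ) 1) (ball (0:ℂ) 1)) {z w : ℂ}
    (hz : Complex.abs z < 1) (hw : Complex.abs w < 1) :
    Complex.abs (1 - (starRingEnd ℂ) (f w) * f z) ^ 2 * ((1 - Complex.abs w ^ 2) * (1 - Complex.abs z ^ 2))
      ≤ (1 - Complex.abs (f w) ^ 2) * ((1 - Complex.abs (f z) ^ 2) * Complex.abs (1 - (starRingEnd ℂ) w * z) ^ 2) := by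
  have hfz : Complex.abs (f z) < 1 := mem_ball01.1 (hm (mem_ball01.2 hz))
  have hfw : Complex.abs (f w) < 1 := mem_ball01.1 (hm (mem_ball01.2 hw))
  -- g = moeb (f w) ∘ f ∘ moeb w
  set g : ℂ → ℂ := fun u => moeb (f w) (f (moeb w u)) with hg
  have hmw : MapsTo (moeb w) (ball (0:ℂ) 1) (ball (0:ℂ) 1) := fun u hu =>
    mem_ball01.2 (moeb_abs_lt hw (mem_ball01.1 hu))
  have hmfw : MapsTo (moeb (f w)) (ball (0:ℂ) 1) (ball (0:ℂ) 1) := fun u hu =>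
    mem_ball01.2 (moeb_abs_lt hfw (mem_ball01.1 hu))
  have hgd : DifferentiableOn ℂ g (ball (0:ℂ) 1) :=
    ((moeb_diffOn hfw).comp (hd.comp (moeb_diffOn hw) hmw) (hm.comp hmw))
  have hgm : MapsTo g (ball (0:ℂ) 1) (ball (0:ℂ) 1) := hmfw.comp (hm.comp hmw)
  have hg0 : g 0 = 0 := by
    simp only [hg, moeb_zero, moeb_self]
  have hkey : Complex.abs (g (moeb w z)) ≤ Complex.abs (moeb w z) :=
    Complex.norm_le_norm_of_mapsTo_ball hgd (hgm.mono_right ball_subset_closedBall) hg0 (moeb_abs_lt hw hz)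
  rw [hg] at hkey
  simp only [moeb_invol hw hz] at hkey
  -- spell out
  rw [moeb, moeb, map_div₀, map_div₀] at hkey
  have hd1 : (0:ℝ) < Complex.abs (1 - (starRingEnd ℂ) (f w) * f z) :=
    Complex.abs.pos (bk_denom_ne hfw hfz)
  have hd2 : (0:ℝ) < Complex.abs (1 - (starRingEnd ℂ) w * z) :=
    Complex.abs.pos (bk_denom_ne hw hz)
  rw [div_le_div_iff₀ hd1 hd2] at hkey
  have hsq := mul_le_mul hkey hkey (by positivity) (by positivity)
  have h1 := bk_ident (f w) (f z)
  have h2 := bk_ident w z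
  nlinarith [hsq, h1, h2, sq_nonneg (Complex.abs (1 - (starRingEnd ℂ) (f w) * f z)),
    sq_nonneg (Complex.abs (1 - (starRingEnd ℂ) w * z))]
end
/-- Julia-type inequality obtained as radial limit of Schwarz–Pick. -/
lemma julia_limit {f : ℂ → ℂ} (hd : DifferentiableOn ℂ f (ball (0:ℂ) 1))
    (hm : MapsTo f (ball (0:ℂ) 1) (ball (0:ℂ) 1)) {w₀ : ℂ} {α : ℝ}
    (hf : Tendsto (fun r : ℝ => f (r:ℂ)) (nhdsWithin 1 (Iio 1)) (nhds w₀))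
    (hα : Tendsto (fun r : ℝ => (1 - Complex.abs (f (r:ℂ)) ^ 2) / (1 - r ^ 2))
      (nhdsWithin 1 (Iio 1)) (nhds α))
    {z : ℂ} (hz : Complex.abs z < 1) :
    Complex.abs (1 - (starRingEnd ℂ) w₀ * f z) ^ 2 * (1 - Complex.abs z ^ 2)
      ≤ α * ((1 - Complex.abs (f z) ^ 2) * Complex.abs (1 - z) ^ 2) := by
  have hev : ∀ᶠ r in nhdsWithin (1:ℝ) (Iio 1), r ∈ Ioo (0:ℝ) 1 :=
    Ioo_mem_nhdsLT_of_mem ⟨zero_lt_one, le_refl 1⟩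
  have hineq : ∀ᶠ (r : ℝ) in nhdsWithin (1:ℝ) (Iio 1),
      Complex.abs (1 - (starRingEnd ℂ) (f (r:ℂ)) * f z) ^ 2 * (1 - Complex.abs z ^ 2)
        ≤ ((1 - Complex.abs (f (r:ℂ)) ^ 2) / (1 - r ^ 2))
            * ((1 - Complex.abs (f z) ^ 2) * Complex.abs (1 - (r : ℂ) * z) ^ 2) := by
    filter_upwards [hev] with r hr
    have hra : Complex.abs (r : ℂ) < 1 := by
      rw [Complex.abs_ofReal, abs_of_pos hr.1]; exact hr.2
    have hsp := schwarz_pick hd hm hz hra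
    rw [Complex.conj_ofReal, Complex.abs_ofReal, _root_.sq_abs] at hsp
    have hr2 : (0:ℝ) < 1 - r ^ 2 := by nlinarith [hr.1, hr.2]
    rw [div_mul_eq_mul_div, le_div_iff₀ hr2]
    calc Complex.abs (1 - (starRingEnd ℂ) (f (r:ℂ)) * f z) ^ 2 * (1 - Complex.abs z ^ 2) * (1 - r ^ 2)
        = Complex.abs (1 - (starRingEnd ℂ) (f (r:ℂ)) * f z) ^ 2 * ((1 - r ^ 2) * (1 - Complex.abs z ^ 2)) := by ring
      _ ≤ (1 - Complex.abs (f (r:ℂ)) ^ 2) * ((1 - Complex.abs (f z) ^ 2) * Complex.abs (1 - (r:ℂ) * z) ^ 2) := hsp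
      _ = (1 - Complex.abs (f (r:ℂ)) ^ 2) * ((1 - Complex.abs (f z) ^ 2) * Complex.abs (1 - (r:ℂ) * z) ^ 2) := rfl
  have t5 : Tendsto (fun r : ℝ => (r : ℂ)) (nhdsWithin (1:ℝ) (Iio 1)) (nhds 1) := by
    have h := (Complex.continuous_ofReal.tendsto (1:ℝ)).mono_left
      (nhdsWithin_le_nhds (s := Iio (1:ℝ)))
    simpa using h
  have t1 : Tendsto (fun r : ℝ => (starRingEnd ℂ) (f (r:ℂ))) (nhdsWithin (1:ℝ) (Iio 1))
      (nhds ((starRingEnd ℂ) w₀)) := (RCLike.continuous_conj.tendsto w₀).comp hf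
  have hL : Tendsto
      (fun r : ℝ => Complex.abs (1 - (starRingEnd ℂ) (f (r:ℂ)) * f z) ^ 2 * (1 - Complex.abs z ^ 2))
      (nhdsWithin (1:ℝ) (Iio 1))
      (nhds (Complex.abs (1 - (starRingEnd ℂ) w₀ * f z) ^ 2 * (1 - Complex.abs z ^ 2))) := by
    exact ((((Complex.continuous_abs.tendsto _).comp
      (tendsto_const_nhds.sub (t1.mul tendsto_const_nhds))).pow 2).mul_const _)
  have hR : Tendsto
      (fun r : ℝ => ((1 - Complex.abs (f (r:ℂ)) ^ 2) / (1 - r ^ 2))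
        * ((1 - Complex.abs (f z) ^ 2) * Complex.abs (1 - (r : ℂ) * z) ^ 2))
      (nhdsWithin (1:ℝ) (Iio 1))
      (nhds (α * ((1 - Complex.abs (f z) ^ 2) * Complex.abs (1 - z) ^ 2))) := by
    have t7 : Tendsto (fun r : ℝ => 1 - (r : ℂ) * z) (nhdsWithin (1:ℝ) (Iio 1))
        (nhds (1 - 1 * z)) := tendsto_const_nhds.sub (t5.mul tendsto_const_nhds)
    rw [one_mul] at t7
    have t6 : Tendsto (fun r : ℝ => Complex.abs (1 - (r : ℂ) * z) ^ 2)
        (nhdsWithin (1:ℝ) (Iio 1)) (nhds (Complex.abs (1 - z) ^ 2)) :=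
      ((Complex.continuous_abs.tendsto (1 - z)).comp t7).pow 2
    exact hα.mul (tendsto_const_nhds.mul t6)
  exact le_of_tendsto_of_tendsto hL hR hineq
lemma re_cayley (w : ℂ) :
    ((1 + w) / (1 - w)).re = (1 - Complex.normSq w) / Complex.normSq (1 - w) := by
  rw [Complex.div_re]
  simp only [Complex.add_re, Complex.add_im, Complex.sub_re, Complex.sub_im, Complex.one_re,
    Complex.one_im, Complex.normSq_apply]
  ring

lemma normSq_pm (x : ℂ) :
    Complex.normSq (x + 1) - Complex.normSq (x - 1) = 4 * x.re := by
  simp only [Complex.normSq_apply, Complex.add_re, Complex.add_im, Complex.sub_re,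
    Complex.sub_im, Complex.one_re, Complex.one_im]
  ring



set_option maxHeartbeats 1600000 in
/-- Burns–Krantz rigidity theorem, nontangential version. -/
theorem burns_krantz (s : ℂ → ℂ) (hs : SchurFunction s)
    (hO : NTBigO (fun z => s z - z) 4) :
    ∀ z ∈ unitDisk, s z = z := by
  obtain ⟨hdiff, hbound⟩ := hs
  have hball : unitDisk = ball (0:ℂ) 1 := by
    ext z; simp [unitDisk, Complex.dist_eq, mem_ball]
  have h01 : ∀ᶠ (r : ℝ) in nhdsWithin 1 (Iio 1), r ∈ Ioo (0:ℝ) 1 :=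
    Ioo_mem_nhdsLT_of_mem ⟨zero_lt_one, le_refl 1⟩
  have t5 : Tendsto (fun r : ℝ => (r : ℂ)) (nhdsWithin (1:ℝ) (Iio 1)) (nhds 1) := by
    have h := (Complex.continuous_ofReal.tendsto (1:ℝ)).mono_left
      (nhdsWithin_le_nhds (s := Iio (1:ℝ)))
    simpa using h
  have hst : Tendsto (fun r : ℝ => (r : ℂ)) (nhdsWithin (1:ℝ) (Iio 1))
      (nhdsWithin 1 (stolzRegion 2)) := by
    rw [tendsto_nhdsWithin_iff]
    refine ⟨t5, ?_⟩
    filter_upwards [h01] with r hr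
    have h1 : Complex.abs (r : ℂ) = r := by
      rw [Complex.abs_ofReal, abs_of_pos hr.1]
    have h2 : Complex.abs ((r : ℂ) - 1) = 1 - r := by
      rw [show ((r:ℂ) - 1) = ((r - 1 : ℝ) : ℂ) by push_cast; ring, Complex.abs_ofReal,
        abs_of_neg (by linarith [hr.2]), neg_sub]
    refine ⟨by rw [Complex.norm_eq_abs, h1]; exact hr.2, ?_⟩
    rw [Complex.norm_eq_abs, Complex.norm_eq_abs, h1, h2]
    linarith [hr.2]
  obtain ⟨C, hC⟩ := Asymptotics.isBigO_iff.1 ((hO 2 one_lt_two).comp_tendsto hst)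
  have habs : ∀ᶠ (r : ℝ) in nhdsWithin 1 (Iio 1),
      Complex.abs (s r - r) ≤ C * (1 - r) ^ 4 := by
    filter_upwards [hC, h01] with r h hr
    have h2 : Complex.abs ((r : ℂ) - 1) = 1 - r := by
      rw [show ((r:ℂ) - 1) = ((r - 1 : ℝ) : ℂ) by push_cast; ring, Complex.abs_ofReal,
        abs_of_neg (by linarith [hr.2]), neg_sub]
    simpa [Complex.norm_eq_abs, norm_pow, h2] using h
  have htend1r : Tendsto (fun r : ℝ => 1 - r) (nhdsWithin (1:ℝ) (Iio 1)) (nhds 0) := by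
    have h : Tendsto (fun r : ℝ => 1 - r) (nhds (1:ℝ)) (nhds 0) := by
      simpa using (continuous_sub_left (1:ℝ)).tendsto (1:ℝ)
    exact h.mono_left (nhdsWithin_le_nhds (s := Iio (1:ℝ)))
  have hCpow : ∀ n : ℕ, n ≠ 0 → Tendsto (fun r : ℝ => C * (1 - r) ^ n)
      (nhdsWithin (1:ℝ) (Iio 1)) (nhds 0) := by
    intro n hn
    have h := (htend1r.pow n).const_mul C
    simpa [zero_pow hn] using h
  have hsub : Tendsto (fun r : ℝ => s r - r) (nhdsWithin (1:ℝ) (Iio 1)) (nhds 0) := by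
    apply squeeze_zero_norm' _ (hCpow 4 (by norm_num))
    filter_upwards [habs] with r h
    simpa [Complex.norm_eq_abs] using h
  have hs_tend : Tendsto (fun r : ℝ => s r) (nhdsWithin (1:ℝ) (Iio 1)) (nhds 1) := by
    have h := hsub.add t5
    simpa using h
  -- make the constant nonnegative
  set D : ℝ := |C| with hD
  have hD0 : 0 ≤ D := abs_nonneg C
  have habsD : ∀ᶠ (r : ℝ) in nhdsWithin 1 (Iio 1),
      Complex.abs (s r - r) ≤ D * (1 - r) ^ 4 := by
    filter_upwards [habs, h01] with r h hr
    have : C * (1 - r) ^ 4 ≤ D * (1 - r) ^ 4 := by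
      apply mul_le_mul_of_nonneg_right (le_abs_self C) (by positivity)
    linarith
  have hDpow : ∀ (E : ℝ) (n : ℕ), n ≠ 0 → Tendsto (fun r : ℝ => E * (1 - r) ^ n)
      (nhdsWithin (1:ℝ) (Iio 1)) (nhds 0) := by
    intro E n hn
    have h := (htend1r.pow n).const_mul E
    simpa [zero_pow hn] using h
  have hrdisk : ∀ r ∈ Ioo (0:ℝ) 1, ((r : ℂ) ∈ unitDisk) := by
    intro r hr
    show Complex.abs (r : ℂ) < 1
    rw [Complex.abs_ofReal, abs_of_pos hr.1]; exact hr.2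
  -- preconnectedness / openness of the disk
  have hpre : IsPreconnected unitDisk := by
    rw [hball]; exact (convex_ball _ _).isPreconnected
  have hopen : IsOpen unitDisk := by rw [hball]; exact isOpen_ball
  -- strict bound |s z| < 1 on the disk
  have hslt : ∀ z ∈ unitDisk, Complex.abs (s z) < 1 := by
    by_contra hcon
    push_neg at hcon
    obtain ⟨z₀, hz₀, hz₀'⟩ := hcon
    have heq : Complex.abs (s z₀) = 1 := le_antisymm (hbound z₀ hz₀) hz₀'
    have hmax : IsMaxOn (norm ∘ s) unitDisk z₀ := by
      intro z hz
      show ‖s z‖ ≤ ‖s z₀‖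
      rw [Complex.norm_eq_abs, Complex.norm_eq_abs, heq]
      exact hbound z hz
    have hEq := Complex.eqOn_of_isPreconnected_of_isMaxOn_norm hpre hopen hdiff hz₀ hmax
    have hconst : ∀ᶠ (r : ℝ) in nhdsWithin 1 (Iio 1), s r = s z₀ := by
      filter_upwards [h01] with r hr
      exact hEq (hrdisk r hr)
    have hlim : Tendsto (fun r : ℝ => s r) (nhdsWithin (1:ℝ) (Iio 1)) (nhds (s z₀)) :=
      Tendsto.congr' (hconst.mono fun r h => h.symm) tendsto_const_nhds
    have h1 : s z₀ = 1 := tendsto_nhds_unique hlim hs_tend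
    have hev2 : ∀ᶠ (r : ℝ) in nhdsWithin 1 (Iio 1), (1:ℝ) - r ≤ D * (1 - r) ^ 4 := by
      filter_upwards [habsD, hconst, h01] with r h hcr hr
      rw [hcr, h1] at h
      have : Complex.abs (1 - (r:ℂ)) = 1 - r := by
        rw [show (1 - (r:ℂ)) = ((1 - r : ℝ) : ℂ) by push_cast; ring, Complex.abs_ofReal,
          abs_of_pos (by linarith [hr.2])]
      rwa [this] at h
    have hev3 : ∀ᶠ (r : ℝ) in nhdsWithin 1 (Iio 1), D * (1 - r) ^ 3 < 1 :=
      (hDpow D 3 (by norm_num)).eventually_lt_const one_pos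
    obtain ⟨r, h2, h3, hr⟩ := (hev2.and (hev3.and h01)).exists
    nlinarith [hr.1, hr.2, h2, h3]
  -- the limit of the Julia quotient for s is 1
  have hα1 : Tendsto (fun r : ℝ => (1 - Complex.abs (s (r:ℂ)) ^ 2) / (1 - r ^ 2))
      (nhdsWithin (1:ℝ) (Iio 1)) (nhds 1) := by
    have hg : Tendsto (fun r : ℝ => (1 - Complex.abs (s (r:ℂ)) ^ 2) / (1 - r ^ 2) - 1)
        (nhdsWithin (1:ℝ) (Iio 1)) (nhds 0) := by
      apply squeeze_zero_norm' _ (hDpow (2*D) 3 (by norm_num))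
      filter_upwards [habsD, h01] with r h hr
      have h1r2 : (0:ℝ) < 1 - r ^ 2 := by nlinarith [hr.1, hr.2]
      set a : ℝ := Complex.abs (s (r:ℂ)) with ha
      have ha0 : 0 ≤ a := Complex.abs.nonneg _
      have ha1 : a ≤ 1 := hbound _ (hrdisk r hr)
      have hdiffabs : |r - a| ≤ D * (1 - r) ^ 4 := by
        have h5 : |‖(r:ℂ)‖ - ‖s (r:ℂ)‖| ≤ ‖(r:ℂ) - s (r:ℂ)‖ := abs_norm_sub_norm_le _ _
        rw [Complex.norm_eq_abs, Complex.norm_eq_abs, Complex.abs_ofReal,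
          abs_of_pos hr.1] at h5
        calc |r - a| ≤ Complex.abs ((r:ℂ) - s (r:ℂ)) := h5
          _ = Complex.abs (s (r:ℂ) - (r:ℂ)) := Complex.abs.map_sub _ _
          _ ≤ D * (1 - r) ^ 4 := h
      have heq : (1 - a ^ 2) / (1 - r ^ 2) - 1 = (r ^ 2 - a ^ 2) / (1 - r ^ 2) := by
        field_simp
        ring
      rw [Real.norm_eq_abs, heq, abs_div, abs_of_pos h1r2, div_le_iff₀ h1r2]
      have habs2 : |r ^ 2 - a ^ 2| ≤ 2 * (D * (1 - r) ^ 4) := by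
        have : r ^ 2 - a ^ 2 = (r + a) * (r - a) := by ring
        rw [this, abs_mul, _root_.abs_of_nonneg (by linarith [hr.1, ha0] : (0:ℝ) ≤ r + a)]
        have h6 := abs_nonneg (r - a)
        nlinarith [hr.1, hr.2]
      have hsplit : 2 * D * (1 - r) ^ 3 * (1 - r ^ 2)
          = 2 * (D * (1 - r) ^ 4) + 2 * D * r * (1 - r) ^ 4 := by ring
      have hpos : 0 ≤ 2 * D * r * (1 - r) ^ 4 :=
        mul_nonneg (mul_nonneg (mul_nonneg (by norm_num) hD0) hr.1.le)
          (pow_nonneg (by linarith [hr.2]) 4)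
      linarith [habs2]
    have h := hg.add_const 1
    simpa using h
  -- strict self-map of the ball
  have hdiff' : DifferentiableOn ℂ s (ball (0:ℂ) 1) := hball ▸ hdiff
  have hmapsTo : MapsTo s (ball (0:ℂ) 1) (ball (0:ℂ) 1) := by
    intro z hz
    have hzd : z ∈ unitDisk := by rw [hball]; exact hz
    exact mem_ball01.2 (hslt z hzd)
  -- Julia's lemma for s at the boundary point 1
  have hjul1 : ∀ z ∈ unitDisk,
      Complex.abs (1 - s z) ^ 2 * (1 - Complex.abs z ^ 2)
        ≤ (1 - Complex.abs (s z) ^ 2) * Complex.abs (1 - z) ^ 2 := by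
    intro z hz
    have hz' : Complex.abs z < 1 := hz
    have h := julia_limit hdiff' hmapsTo hs_tend hα1 hz'
    simpa using h
  -- the Cayley-type auxiliary function q
  set q : ℂ → ℂ := fun z => (1 + s z) / (1 - s z) - (1 + z) / (1 - z) with hqdef
  have hs1 : ∀ z ∈ unitDisk, (1:ℂ) - s z ≠ 0 := by
    intro z hz h
    have he : s z = 1 := by linear_combination -h
    have hlt := hslt z hz
    rw [he] at hlt
    simp at hlt
  have hz1 : ∀ z ∈ unitDisk, (1:ℂ) - z ≠ 0 := by
    intro z hz h
    have hz2 : z = 1 := by linear_combination -h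
    have : Complex.abs z < 1 := hz
    rw [hz2] at this
    simp at this
  have hqre : ∀ z ∈ unitDisk, 0 ≤ (q z).re := by
    intro z hz
    have hplt : Complex.normSq (1 - s z) * (1 - Complex.normSq z)
        ≤ (1 - Complex.normSq (s z)) * Complex.normSq (1 - z) := by
      have h := hjul1 z hz
      rw [Complex.sq_abs, Complex.sq_abs, Complex.sq_abs, Complex.sq_abs] at h
      linarith
    have hn1 : 0 < Complex.normSq (1 - s z) := Complex.normSq_pos.2 (hs1 z hz)
    have hn2 : 0 < Complex.normSq (1 - z) := Complex.normSq_pos.2 (hz1 z hz)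
    have : (1 - Complex.normSq z) / Complex.normSq (1 - z)
        ≤ (1 - Complex.normSq (s z)) / Complex.normSq (1 - s z) := by
      rw [div_le_div_iff₀ hn2 hn1]
      nlinarith [hplt]
    rw [hqdef]
    simp only [Complex.sub_re, re_cayley]
    linarith
  have hqdiff : DifferentiableOn ℂ q unitDisk := by
    apply DifferentiableOn.sub
    · exact ((differentiableOn_const 1).add hdiff).div ((differentiableOn_const 1).sub hdiff)
        (fun z hz => hs1 z hz)
    · exact ((differentiableOn_const 1).add differentiableOn_id).div
        ((differentiableOn_const 1).sub differentiableOn_id) (fun z hz => hz1 z hz)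
  -- σ is the Cayley transform of q
  set σ : ℂ → ℂ := fun z => (q z - 1) / (q z + 1) with hσdef
  have hq1 : ∀ z ∈ unitDisk, q z + 1 ≠ 0 := by
    intro z hz h
    have := congrArg Complex.re h
    simp only [Complex.add_re, Complex.one_re, Complex.zero_re] at this
    linarith [hqre z hz]
  have hσle : ∀ z ∈ unitDisk, Complex.abs (σ z) ≤ 1 := by
    intro z hz
    rw [hσdef]
    simp only
    rw [map_div₀, div_le_one (Complex.abs.pos (hq1 z hz))]
    rw [Complex.abs_apply, Complex.abs_apply]
    apply Real.sqrt_le_sqrt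
    have := normSq_pm (q z)
    linarith [hqre z hz]
  have hσdiff : DifferentiableOn ℂ σ unitDisk :=
    (hqdiff.sub (differentiableOn_const 1)).div (hqdiff.add (differentiableOn_const 1))
      (fun z hz => hq1 z hz)
  -- radial decay of q
  have hsmall : ∀ᶠ (r : ℝ) in nhdsWithin 1 (Iio 1), D * (1 - r) ^ 3 ≤ 1 / 2 :=
    (hDpow D 3 (by norm_num)).eventually_le_const (by norm_num)
  have hqrad : ∀ᶠ (r : ℝ) in nhdsWithin 1 (Iio 1),
      Complex.abs (q (r:ℂ)) ≤ 4 * D * (1 - r) ^ 2 := by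
    filter_upwards [habsD, h01, hsmall] with r h hr hsm
    have hrd := hrdisk r hr
    have h1r : (0:ℝ) < 1 - r := by linarith [hr.2]
    have habs1r : Complex.abs (1 - (r:ℂ)) = 1 - r := by
      rw [show (1 - (r:ℂ)) = ((1 - r : ℝ) : ℂ) by push_cast; ring, Complex.abs_ofReal,
        _root_.abs_of_pos h1r]
    have hqeq : q (r:ℂ) = 2 * (s (r:ℂ) - (r:ℂ)) / ((1 - s (r:ℂ)) * (1 - (r:ℂ))) := by
      rw [hqdef]
      field_simp [hs1 _ hrd, hz1 _ hrd]
      ring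
    have hlb : (1 - r) / 2 ≤ Complex.abs (1 - s (r:ℂ)) := by
      have htri : Complex.abs (1 - (r:ℂ)) - Complex.abs (s (r:ℂ) - (r:ℂ))
          ≤ Complex.abs (1 - s (r:ℂ)) := by
        have h7 := norm_sub_norm_le ((1:ℂ) - (r:ℂ)) (s (r:ℂ) - (r:ℂ))
        have h9 : ((1:ℂ) - (r:ℂ)) - (s (r:ℂ) - (r:ℂ)) = 1 - s (r:ℂ) := by ring
        rw [h9] at h7
        simpa [Complex.norm_eq_abs] using h7
      have h8 : D * (1 - r) ^ 4 ≤ (1 - r) / 2 := by nlinarith [h1r]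
      rw [habs1r] at htri
      linarith
    rw [hqeq, map_div₀, map_mul, map_mul, habs1r, Complex.abs_two]
    have hdpos : (0:ℝ) < Complex.abs (1 - s (r:ℂ)) * (1 - r) :=
      mul_pos (lt_of_lt_of_le (by linarith : (0:ℝ) < (1 - r) / 2) hlb) h1r
    rw [div_le_iff₀ hdpos]
    calc 2 * Complex.abs (s (r:ℂ) - (r:ℂ)) ≤ 2 * (D * (1 - r) ^ 4) := by linarith [h]
        _ ≤ 4 * D * (1 - r) ^ 2 * ((1 - r) / 2 * (1 - r)) := by nlinarith [h1r, hD0]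
        _ ≤ 4 * D * (1 - r) ^ 2 * (Complex.abs (1 - s (r:ℂ)) * (1 - r)) := by
            apply mul_le_mul_of_nonneg_left _ (by positivity)
            apply mul_le_mul_of_nonneg_right hlb h1r.le
  have hq0 : Tendsto (fun r : ℝ => q (r:ℂ)) (nhdsWithin (1:ℝ) (Iio 1)) (nhds 0) := by
    apply squeeze_zero_norm' _ (hDpow (4*D) 2 (by norm_num))
    filter_upwards [hqrad] with r h
    simpa [Complex.norm_eq_abs, mul_assoc] using h
  have hσ_tend : Tendsto (fun r : ℝ => σ (r:ℂ)) (nhdsWithin (1:ℝ) (Iio 1)) (nhds (-1)) := by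
    have h := (hq0.sub_const 1).div (hq0.add_const 1) (by norm_num : (0:ℂ) + 1 ≠ 0)
    rw [hσdef]
    convert h using 2
    all_goals norm_num
  have hα0 : Tendsto (fun r : ℝ => (1 - Complex.abs (σ (r:ℂ)) ^ 2) / (1 - r ^ 2))
      (nhdsWithin (1:ℝ) (Iio 1)) (nhds 0) := by
    apply tendsto_of_tendsto_of_tendsto_of_le_of_le' tendsto_const_nhds
      (hDpow (16*D) 1 (by norm_num))
    · filter_upwards [h01] with r hr
      have h1r2 : (0:ℝ) < 1 - r ^ 2 := by nlinarith [hr.1, hr.2]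
      have := hσle _ (hrdisk r hr)
      have h0 := Complex.abs.nonneg (σ (r:ℂ))
      apply div_nonneg _ h1r2.le
      nlinarith
    · filter_upwards [h01, hqrad] with r hr hq
      have h1r2 : (0:ℝ) < 1 - r ^ 2 := by nlinarith [hr.1, hr.2]
      have hrd := hrdisk r hr
      set aσ : ℝ := Complex.abs (σ (r:ℂ)) with haσ
      have haσ1 : aσ ≤ 1 := hσle _ hrd
      have haσ0 : 0 ≤ aσ := Complex.abs.nonneg _
      -- 1 - aσ ≤ |σ r + 1| ≤ 2 |q r|
      have hq1r : Complex.abs (q (r:ℂ) + 1) ≥ 1 := by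
        have h5 : (q (r:ℂ) + 1).re ≥ 1 := by
          simp only [Complex.add_re, Complex.one_re]
          linarith [hqre _ hrd]
        linarith [Complex.re_le_abs (q (r:ℂ) + 1)]
      have hσp1 : σ (r:ℂ) + 1 = 2 * q (r:ℂ) / (q (r:ℂ) + 1) := by
        rw [hσdef]
        field_simp [hq1 _ hrd]
        ring
      have hb1 : Complex.abs (σ (r:ℂ) + 1) ≤ 2 * Complex.abs (q (r:ℂ)) := by
        rw [hσp1, map_div₀, map_mul, Complex.abs_two]
        exact div_le_self (by positivity) hq1r
      have hb2 : 1 - aσ ≤ Complex.abs (σ (r:ℂ) + 1) := by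
        have h6 : ‖(σ (r:ℂ) + 1) - σ (r:ℂ)‖ ≤ ‖σ (r:ℂ) + 1‖ + ‖σ (r:ℂ)‖ := norm_sub_le _ _
        have h7 : (σ (r:ℂ) + 1) - σ (r:ℂ) = 1 := by ring
        rw [h7, norm_one, Complex.norm_eq_abs, Complex.norm_eq_abs] at h6
        linarith
      rw [div_le_iff₀ h1r2]
      have hq0' := Complex.abs.nonneg (q (r:ℂ))
      nlinarith [hq, hr.1, hr.2, hD0]
  -- main case split via the maximum principle
  by_cases hcase : ∃ z₀ ∈ unitDisk, Complex.abs (σ z₀) = 1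
  · obtain ⟨z₀, hz₀, hz₀'⟩ := hcase
    have hmax : IsMaxOn (norm ∘ σ) unitDisk z₀ := by
      intro z hz
      show ‖σ z‖ ≤ ‖σ z₀‖
      rw [Complex.norm_eq_abs, Complex.norm_eq_abs, hz₀']
      exact hσle z hz
    have hEq := Complex.eqOn_of_isPreconnected_of_isMaxOn_norm hpre hopen hσdiff hz₀ hmax
    have hconst : ∀ᶠ (r : ℝ) in nhdsWithin 1 (Iio 1), σ (r:ℂ) = σ z₀ := by
      filter_upwards [h01] with r hr
      exact hEq (hrdisk r hr)
    have hlim : Tendsto (fun r : ℝ => σ (r:ℂ)) (nhdsWithin (1:ℝ) (Iio 1)) (nhds (σ z₀)) :=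
      Tendsto.congr' (hconst.mono fun r h => h.symm) tendsto_const_nhds
    have hc : σ z₀ = -1 := tendsto_nhds_unique hlim hσ_tend
    intro z hz
    have hσz : σ z = -1 := (hEq hz).trans hc
    rw [hσdef] at hσz
    simp only at hσz
    rw [div_eq_iff (hq1 z hz)] at hσz
    have hqz : q z = 0 := by linear_combination hσz / 2
    rw [hqdef] at hqz
    simp only at hqz
    rw [sub_eq_zero] at hqz
    rw [div_eq_div_iff (hs1 z hz) (hz1 z hz)] at hqz
    linear_combination hqz / 2
  · push_neg at hcase
    exfalso
    have hσlt : ∀ z ∈ unitDisk, Complex.abs (σ z) < 1 :=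
      fun z hz => lt_of_le_of_ne (hσle z hz) (hcase z hz)
    have hσdiff' : DifferentiableOn ℂ σ (ball (0:ℂ) 1) := hball ▸ hσdiff
    have hσm : MapsTo σ (ball (0:ℂ) 1) (ball (0:ℂ) 1) := by
      intro z hz
      have hzd : z ∈ unitDisk := by rw [hball]; exact hz
      exact mem_ball01.2 (hσlt z hzd)
    have h0d : Complex.abs (0:ℂ) < 1 := by simp
    have hjul2 := julia_limit hσdiff' hσm hσ_tend hα0 h0d
    simp only [map_neg, map_one, neg_mul, one_mul, map_zero, zero_mul, sub_neg_eq_add,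
      zero_pow, sub_zero, mul_one] at hjul2
    have h8 : Complex.abs (1 + σ 0) = 0 := by nlinarith [Complex.abs.nonneg (1 + σ 0), hjul2]
    have h9 : σ 0 = -1 := by
      have := Complex.abs.eq_zero.1 h8
      linear_combination this
    have h10 : Complex.abs (σ 0) < 1 := hσlt 0 (by simp [unitDisk])
    rw [h9] at h10
    simp at h10
end
end

section
/- Let α ∈ (0,1). The fractional-linear transformation s(z) = ((2α - 1 - z(2α+1))·s₁(z) + 1 + z)/(2α + 1 - z(2α-1) - (1+z)·s₁(z)) gives a one-to-one correspondence between the Schur functions s satisfying s(z) = 1 + α(z-1) + O((z-1)^2) as z tends nontangentially to 1, and the Schur functions s₁ satisfying liminf_{z →̂ 1} |s₁(z) - 1| > 0. Moreover, the constant parameter s₁ ≡ 1 - 2α corresponds to the solution s(z) = αz + 1 - α. -/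
noncomputable section

open Complex Filter

/-- `liminf_{z →̂ 1} |f(z) - c| > 0`: within every Stolz region the limit inferior of
`|f(z) - c|` as `z → 1` is strictly positive. -/
def NTLiminfPos (f : ℂ → ℂ) (c : ℂ) : Prop :=
  ∀ K > (1 : ℝ),
    0 < Filter.liminf (fun z => ‖f z - c‖) (nhdsWithin 1 (stolzRegion K))

/-- The fractional-linear transformation parametrizing the solutions of the boundary
interpolation problem `s(z) = 1 + α(z-1) + O((z-1)²)`. -/
def lft (α : ℝ) (s₁ : ℂ → ℂ) : ℂ → ℂ :=
  fun z => ((2 * α - 1 - z * (2 * α + 1)) * s₁ z + 1 + z) /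
    (2 * α + 1 - z * (2 * α - 1) - (1 + z) * s₁ z)

open Metric Set Topology

namespace BIP

def Complex.abs : AbsoluteValue ℂ ℝ := NormedField.toAbsoluteValue ℂ

namespace Complex

lemma abs_def' (z : ℂ) : BIP.Complex.abs z = ‖z‖ := rfl

lemma abs_apply (z : ℂ) : BIP.Complex.abs z = Real.sqrt (normSq z) := _root_.Complex.norm_def z

lemma sq_abs (z : ℂ) : BIP.Complex.abs z ^ 2 = normSq z := _root_.Complex.sq_norm z

lemma abs_ofReal (r : ℝ) : BIP.Complex.abs (r : ℂ) = |r| := by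
  rw [abs_def', _root_.Complex.norm_real, Real.norm_eq_abs]

lemma abs_conj (z : ℂ) : BIP.Complex.abs ((starRingEnd ℂ) z) = BIP.Complex.abs z :=
  _root_.Complex.norm_conj z

lemma abs_two : BIP.Complex.abs 2 = 2 := _root_.Complex.norm_two

lemma norm_eq_abs (z : ℂ) : ‖z‖ = BIP.Complex.abs z := rfl

lemma abs_le_abs_of_mapsTo_ball_self {f : ℂ → ℂ} {R : ℝ} {z : ℂ}
    (hd : DifferentiableOn ℂ f (Metric.ball 0 R))
    (h_maps : Set.MapsTo f (Metric.ball 0 R) (Metric.ball 0 R)) (h₀ : f 0 = 0)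
    (hz : BIP.Complex.abs z < R) : BIP.Complex.abs (f z) ≤ BIP.Complex.abs z :=
  _root_.Complex.norm_le_norm_of_mapsTo_ball hd (h_maps.mono_right Metric.ball_subset_closedBall)
    h₀ hz

end Complex

def Aa (α : ℝ) (z : ℂ) : ℂ := 2*α - 1 - z*(2*α+1)
def Bb (z : ℂ) : ℂ := 1 + z
def Cc (α : ℝ) (z : ℂ) : ℂ := 2*α + 1 - z*(2*α-1)

lemma lft_eq (α : ℝ) (s₁ : ℂ → ℂ) (z : ℂ) :
    lft α s₁ z = (Aa α z * s₁ z + Bb z) / (Cc α z - Bb z * s₁ z) := by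
  unfold lft Aa Bb Cc; congr 1 <;> ring

lemma keyD (α : ℝ) (z w : ℂ) :
    normSq (Cc α z - Bb z * w) - normSq (Aa α z * w + Bb z)
    = 4*α^2*(1 - normSq w)*normSq (1-z) + 4*α*(1 - normSq z)*normSq (1-w) := by
  apply Complex.ofReal_injective
  unfold Aa Bb Cc
  push_cast [← Complex.mul_conj]
  simp only [map_sub, map_add, map_mul, map_one, map_ofNat, conj_ofReal]
  ring

lemma keyE (α : ℝ) (z s : ℂ) :
    normSq (Aa α z + Bb z * s) - normSq (Cc α z * s - Bb z)
    = 4*α^2*(1 - normSq s)*normSq (1-z) - 4*α*(1 - normSq z)*normSq (1-s) := by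
  apply Complex.ofReal_injective
  unfold Aa Bb Cc
  push_cast [← Complex.mul_conj]
  simp only [map_sub, map_add, map_mul, map_one, map_ofNat, conj_ofReal]
  ring

lemma keyMobius (a b : ℂ) :
    normSq (1 - (starRingEnd ℂ) a * b) - normSq (a - b) = (1 - normSq a) * (1 - normSq b) := by
  apply Complex.ofReal_injective
  push_cast [← Complex.mul_conj]
  simp only [map_sub, map_add, map_mul, map_one, Complex.conj_conj]
  ring

lemma keyDet (α : ℝ) (z : ℂ) : Aa α z * Cc α z + Bb z ^ 2 = (2*α)^2 * (1-z)^2 := by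
  unfold Aa Bb Cc; ring

lemma normSq_le_one {w : ℂ} (h : Complex.abs w ≤ 1) : normSq w ≤ 1 := by
  rw [← Complex.sq_abs]; nlinarith [Complex.abs.nonneg w]

lemma normSq_lt_one {w : ℂ} (h : Complex.abs w < 1) : normSq w < 1 := by
  rw [← Complex.sq_abs]; nlinarith [Complex.abs.nonneg w]

lemma abs_le_abs_of_normSq {x y : ℂ} (h : normSq x ≤ normSq y) :
    Complex.abs x ≤ Complex.abs y := by
  rw [Complex.abs_apply, Complex.abs_apply]; exact Real.sqrt_le_sqrt h

lemma one_sub_ne_zero {z : ℂ} (hz : Complex.abs z < 1) : (1:ℂ) - z ≠ 0 := by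
  intro h
  have : z = 1 := by linear_combination -h
  simp [this] at hz

/-- Denominator of `lft` does not vanish on the disk. -/
lemma den_ne (α : ℝ) (hα : α ∈ Set.Ioo (0:ℝ) 1) {z w : ℂ}
    (hz : Complex.abs z < 1) (hw : Complex.abs w ≤ 1) : Cc α z - Bb z * w ≠ 0 := by
  rcases eq_or_ne w 1 with rfl | hw1
  · have : Cc α z - Bb z * 1 = 2*α*(1-z) := by unfold Bb Cc; ring
    rw [this]
    exact mul_ne_zero (by norm_num; exact_mod_cast hα.1.ne') (one_sub_ne_zero hz)
  · intro h
    have hD := keyD α z w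
    rw [h, map_zero] at hD
    have h1 : 0 ≤ normSq (Aa α z * w + Bb z) := normSq_nonneg _
    have h2 : 0 ≤ 4*α^2*(1 - normSq w)*normSq (1-z) := by
      have h4 := normSq_le_one hw
      have h5 := normSq_nonneg (1-z)
      have h6 : (0:ℝ) ≤ 4*α^2 := by positivity
      exact mul_nonneg (mul_nonneg h6 (by linarith)) h5
    have h3 : 0 < 4*α*(1 - normSq z)*normSq (1-w) := by
      have hz' := normSq_lt_one hz
      have : (1:ℂ) - w ≠ 0 := fun hc => hw1 (by linear_combination -hc)
      have h7 := normSq_pos.2 this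
      have h8 := hα.1
      have h9 := normSq_lt_one hz
      exact mul_pos (mul_pos (by linarith) (by linarith)) h7
    linarith

lemma stolz_subset (K : ℝ) : stolzRegion K ⊆ unitDisk := fun _ h => h.1

lemma real_mem_stolz {K : ℝ} (hK : 1 < K) {t : ℝ} (ht : t ∈ Set.Ioo (0:ℝ) 1) :
    (t : ℂ) ∈ stolzRegion K := by
  have h1 : Complex.abs (t:ℂ) = t := by
    rw [Complex.abs_ofReal, abs_of_pos ht.1]
  have h2 : ((t:ℂ) - 1) = ((t - 1 : ℝ) : ℂ) := by push_cast; ring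
  have h3 : Complex.abs ((t:ℂ) - 1) = 1 - t := by
    rw [h2, Complex.abs_ofReal, abs_of_neg (by linarith [ht.2] : t - 1 < 0)]; ring
  exact ⟨by rw [← Complex.abs_def', h1]; exact ht.2, by rw [← Complex.abs_def', ← Complex.abs_def', h1, h3]; nlinarith [ht.1, ht.2]⟩

lemma Ioo_neBot : (nhdsWithin (1:ℝ) (Set.Ioo (0:ℝ) 1)).NeBot := by
  apply mem_closure_iff_nhdsWithin_neBot.mp
  rw [closure_Ioo (by norm_num : (0:ℝ) ≠ 1)]
  exact ⟨by norm_num, le_refl 1⟩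

lemma radial_tendsto {K : ℝ} (hK : 1 < K) :
    Tendsto (fun t : ℝ => (t : ℂ)) (nhdsWithin (1:ℝ) (Set.Ioo (0:ℝ) 1))
      (nhdsWithin 1 (stolzRegion K)) := by
  apply tendsto_nhdsWithin_of_tendsto_nhds_of_eventually_within
  · have : Tendsto (fun t : ℝ => (t : ℂ)) (nhds 1) (nhds ((1:ℝ):ℂ)) :=
      Complex.continuous_ofReal.tendsto 1
    simpa using this.mono_left nhdsWithin_le_nhds
  · exact eventually_mem_nhdsWithin.mono fun t ht => real_mem_stolz hK ht

lemma stolz_neBot {K : ℝ} (hK : 1 < K) : (nhdsWithin (1:ℂ) (stolzRegion K)).NeBot := by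
  have := Ioo_neBot
  exact (radial_tendsto hK).neBot

lemma eventually_abs_lt {K : ℝ} (ε : ℝ) (hε : 0 < ε) :
    ∀ᶠ z in nhdsWithin (1:ℂ) (stolzRegion K), Complex.abs (z - 1) < ε := by
  have h : ∀ᶠ z in nhds (1:ℂ), Complex.abs (z - 1) < ε := by
    have : ∀ᶠ z in nhds (1:ℂ), z ∈ Metric.ball (1:ℂ) ε := ball_mem_nhds 1 hε
    exact this.mono fun z hz => by rwa [Metric.mem_ball, Complex.dist_eq] at hz
  exact h.filter_mono nhdsWithin_le_nhds

lemma liminf_pos_of_eventually {K : ℝ} (hK : 1 < K) {f : ℂ → ℝ} {δ : ℝ} (hδ : 0 < δ)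
    (hb : ∀ᶠ z in nhdsWithin (1:ℂ) (stolzRegion K), f z ≤ 2)
    (h : ∀ᶠ z in nhdsWithin (1:ℂ) (stolzRegion K), δ ≤ f z) :
    0 < liminf f (nhdsWithin (1:ℂ) (stolzRegion K)) := by
  have := stolz_neBot hK
  have hcb : IsCoboundedUnder (· ≥ ·) (nhdsWithin (1:ℂ) (stolzRegion K)) f :=
    IsBoundedUnder.isCoboundedUnder_ge ⟨2, by simpa using hb⟩
  exact lt_of_lt_of_le hδ (le_liminf_of_le hcb h)

lemma eventually_of_liminf_pos {K : ℝ} {f : ℂ → ℝ}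
    (hf : ∀ z, 0 ≤ f z)
    (h : 0 < liminf f (nhdsWithin (1:ℂ) (stolzRegion K))) :
    ∀ᶠ z in nhdsWithin (1:ℂ) (stolzRegion K),
      liminf f (nhdsWithin (1:ℂ) (stolzRegion K)) / 2 < f z := by
  exact eventually_lt_of_lt_liminf (by linarith)
    ⟨0, eventually_map.2 (Eventually.of_forall fun z => hf z)⟩

lemma abs_lt_abs_of_normSq {x y : ℂ} (h : normSq x < normSq y) :
    Complex.abs x < Complex.abs y := by
  rw [Complex.abs_apply, Complex.abs_apply]
  exact Real.sqrt_lt_sqrt (normSq_nonneg x) h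

lemma mobius_normSq_lt {a b : ℂ} (ha : normSq a < 1) (hb : normSq b < 1) :
    normSq (a - b) < normSq (1 - (starRingEnd ℂ) a * b) := by
  have := keyMobius a b
  nlinarith [normSq_nonneg (a-b)]

lemma mobius_den_ne {a b : ℂ} (ha : normSq a < 1) (hb : normSq b < 1) :
    1 - (starRingEnd ℂ) a * b ≠ 0 := by
  intro h
  have h2 := mobius_normSq_lt ha hb
  rw [h, map_zero] at h2
  exact absurd h2 (not_lt.2 (normSq_nonneg _))

lemma mobius_abs_lt_one {a b : ℂ} (ha : normSq a < 1) (hb : normSq b < 1) :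
    Complex.abs ((a - b) / (1 - (starRingEnd ℂ) a * b)) < 1 := by
  rw [map_div₀]
  have hpos : 0 < Complex.abs (1 - (starRingEnd ℂ) a * b) :=
    Complex.abs.pos (mobius_den_ne ha hb)
  rw [div_lt_one hpos]
  exact abs_lt_abs_of_normSq (mobius_normSq_lt ha hb)

lemma unitDisk_eq : unitDisk = Metric.ball (0:ℂ) 1 := by
  ext z; simp [unitDisk, Metric.mem_ball, Complex.dist_eq]

lemma mem_disk_iff {z : ℂ} : z ∈ Metric.ball (0:ℂ) 1 ↔ Complex.abs z < 1 := by
  simp [Metric.mem_ball, Complex.dist_eq, Complex.abs_def']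

/-- Strict Schwarz–Pick inequality (multiplicative form). -/
lemma sp_strict {f : ℂ → ℂ} (hd : DifferentiableOn ℂ f (Metric.ball 0 1))
    (hb : ∀ ζ ∈ Metric.ball (0:ℂ) 1, Complex.abs (f ζ) < 1)
    {z w : ℂ} (hz : z ∈ Metric.ball (0:ℂ) 1) (hw : w ∈ Metric.ball (0:ℂ) 1) :
    Complex.abs (f w - f z) * Complex.abs (1 - (starRingEnd ℂ) w * z)
      ≤ Complex.abs (w - z) * Complex.abs (1 - (starRingEnd ℂ) (f w) * f z) := by
  have hz' : normSq z < 1 := normSq_lt_one (mem_disk_iff.1 hz)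
  have hw' : normSq w < 1 := normSq_lt_one (mem_disk_iff.1 hw)
  set mB : ℂ → ℂ := fun ζ => (w - ζ) / (1 - (starRingEnd ℂ) w * ζ) with hmB
  have hmapsB : Set.MapsTo mB (Metric.ball 0 1) (Metric.ball 0 1) := by
    intro ζ hζ
    exact mem_disk_iff.2 (mobius_abs_lt_one hw' (normSq_lt_one (mem_disk_iff.1 hζ)))
  have hdB : DifferentiableOn ℂ mB (Metric.ball 0 1) := by
    apply DifferentiableOn.div
    · exact (differentiable_const w).differentiableOn.sub differentiable_id.differentiableOn
    · exact (differentiable_const _).differentiableOn.sub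
        ((differentiable_const _).mul differentiable_id).differentiableOn
    · intro ζ hζ
      exact mobius_den_ne hw' (normSq_lt_one (mem_disk_iff.1 hζ))
  have hfB : DifferentiableOn ℂ (f ∘ mB) (Metric.ball 0 1) := hd.comp hdB hmapsB
  have hfBlt : ∀ ζ ∈ Metric.ball (0:ℂ) 1, normSq (f (mB ζ)) < 1 := fun ζ hζ =>
    normSq_lt_one (hb _ (hmapsB hζ))
  have hfw' : normSq (f w) < 1 := normSq_lt_one (hb w hw)
  set g : ℂ → ℂ := fun ζ => (f w - f (mB ζ)) / (1 - (starRingEnd ℂ) (f w) * f (mB ζ)) with hg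
  have hdg : DifferentiableOn ℂ g (Metric.ball 0 1) := by
    apply DifferentiableOn.div
    · exact (differentiable_const _).differentiableOn.sub hfB
    · exact (differentiable_const _).differentiableOn.sub
        (DifferentiableOn.const_mul hfB _)
    · intro ζ hζ
      exact mobius_den_ne hfw' (hfBlt ζ hζ)
  have hmapsg : Set.MapsTo g (Metric.ball 0 1) (Metric.ball 0 1) := fun ζ hζ =>
    mem_disk_iff.2 (mobius_abs_lt_one hfw' (hfBlt ζ hζ))
  have hg0 : g 0 = 0 := by
    have : mB 0 = w := by simp [hmB]
    simp [hg, this]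
  -- the point ζ₀ := mB z
  have hζ₀ : mB z ∈ Metric.ball (0:ℂ) 1 := hmapsB hz
  have hschwarz := Complex.abs_le_abs_of_mapsTo_ball_self hdg hmapsg hg0
    (mem_disk_iff.1 hζ₀)
  -- involution: mB (mB z) = z
  have hd1 : (1 : ℂ) - (starRingEnd ℂ) w * z ≠ 0 := mobius_den_ne hw' hz'
  have hcw : (1 : ℂ) - (starRingEnd ℂ) w * w ≠ 0 := by
    have h1 : (starRingEnd ℂ) w * w = (normSq w : ℂ) := by rw [mul_comm, Complex.mul_conj]
    rw [h1]
    intro hc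
    have : (normSq w : ℂ) = 1 := by linear_combination -hc
    have := Complex.ofReal_injective (by exact_mod_cast this : ((normSq w : ℝ) : ℂ) = ((1:ℝ) : ℂ))
    linarith [hw', this]
  have hinv : mB (mB z) = z := by
    have e1 : (1 : ℂ) - (starRingEnd ℂ) w * mB z
        = (1 - (starRingEnd ℂ) w * w) / (1 - (starRingEnd ℂ) w * z) := by
      rw [hmB]; field_simp; ring
    have e2 : w - mB z = z * ((1 - (starRingEnd ℂ) w * w) / (1 - (starRingEnd ℂ) w * z)) := by
      rw [hmB]; dsimp only; rw [sub_div' hd1, mul_div_assoc']; congr 1; ring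
    show (w - mB z) / (1 - (starRingEnd ℂ) w * mB z) = z
    rw [e1, e2, mul_div_assoc, div_self (div_ne_zero hcw hd1), mul_one]
  have hgval : g (mB z) = (f w - f z) / (1 - (starRingEnd ℂ) (f w) * f z) := by
    rw [hg]; simp only [hinv]
  rw [hgval] at hschwarz
  rw [map_div₀] at hschwarz
  have hmBz : Complex.abs (mB z) = Complex.abs (w - z) / Complex.abs (1 - (starRingEnd ℂ) w * z) := by
    rw [hmB]; exact map_div₀ Complex.abs _ _
  rw [hmBz] at hschwarz
  have p1 : 0 < Complex.abs (1 - (starRingEnd ℂ) (f w) * f z) :=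
    Complex.abs.pos (mobius_den_ne hfw' (normSq_lt_one (hb z hz)))
  have p2 : 0 < Complex.abs (1 - (starRingEnd ℂ) w * z) := Complex.abs.pos hd1
  rw [div_le_div_iff₀ p1 p2] at hschwarz
  linarith [hschwarz]

/-- Schwarz–Pick inequality for Schur functions (multiplicative form). -/
lemma sp {f : ℂ → ℂ} (hf : SchurFunction f) {z w : ℂ} (hz : z ∈ unitDisk) (hw : w ∈ unitDisk) :
    Complex.abs (f w - f z) * Complex.abs (1 - (starRingEnd ℂ) w * z)
      ≤ Complex.abs (w - z) * Complex.abs (1 - (starRingEnd ℂ) (f w) * f z) := by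
  set A0 := Complex.abs (f w - f z) * Complex.abs (1 - (starRingEnd ℂ) w * z) with hA0
  set C0 := Complex.abs (w - z) with hC0
  set B0 := Complex.abs (1 - (starRingEnd ℂ) (f w) * f z) with hB0
  have hA0nn : 0 ≤ A0 := mul_nonneg (Complex.abs.nonneg _) (Complex.abs.nonneg _)
  have hC0nn : 0 ≤ C0 := Complex.abs.nonneg _
  have key : ∀ t : ℝ, 0 < t → t < 1 → t * A0 ≤ C0 * B0 + (1 - t^2) * C0 := by
    intro t ht0 ht1
    have hd : DifferentiableOn ℂ (fun ζ => (t:ℂ) * f ζ) (Metric.ball 0 1) := by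
      rw [← unitDisk_eq] at *
      exact hf.1.const_mul _
    have hb : ∀ ζ ∈ Metric.ball (0:ℂ) 1, Complex.abs ((t:ℂ) * f ζ) < 1 := by
      intro ζ hζ
      rw [map_mul, Complex.abs_ofReal, abs_of_pos ht0]
      have := hf.2 ζ (by rwa [unitDisk_eq])
      nlinarith [Complex.abs.nonneg (f ζ), Complex.abs_def' (f ζ)]
    have h := sp_strict hd hb (by rwa [← unitDisk_eq]) (by rwa [← unitDisk_eq])
      (z := z) (w := w)
    have e1 : Complex.abs ((t:ℂ) * f w - (t:ℂ) * f z) = t * Complex.abs (f w - f z) := by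
      rw [show (t:ℂ) * f w - (t:ℂ) * f z = (t:ℂ) * (f w - f z) by ring, map_mul,
        Complex.abs_ofReal, abs_of_pos ht0]
    have e2 : (1 : ℂ) - (starRingEnd ℂ) ((t:ℂ) * f w) * ((t:ℂ) * f z)
        = (1 - (starRingEnd ℂ) (f w) * f z) + ((1:ℂ) - (t:ℂ)^2) * ((starRingEnd ℂ) (f w) * f z) := by
      simp only [map_mul, Complex.conj_ofReal]; ring
    rw [e1, e2] at h
    have e3 : Complex.abs ((1 - (starRingEnd ℂ) (f w) * f z)
          + ((1:ℂ) - (t:ℂ)^2) * ((starRingEnd ℂ) (f w) * f z)) ≤ B0 + (1 - t^2) * 1 := by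
      refine (Complex.abs.add_le _ _).trans ?_
      gcongr
      rw [map_mul, map_mul]
      have e4 : Complex.abs ((1:ℂ) - (t:ℂ)^2) = 1 - t^2 := by
        rw [show (1:ℂ) - (t:ℂ)^2 = (((1 - t^2 : ℝ)):ℂ) by push_cast; ring,
          Complex.abs_ofReal, abs_of_pos (by nlinarith)]
      rw [e4, Complex.abs_conj]
      have b1 := hf.2 w hw
      have b2 := hf.2 z hz
      have h12 : Complex.abs (f w) * Complex.abs (f z) ≤ 1 :=
        mul_le_one₀ b1 (Complex.abs.nonneg _) b2
      have hq : (0:ℝ) ≤ 1 - t^2 := by nlinarith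
      nlinarith [mul_le_mul_of_nonneg_left h12 hq]
    calc t * A0 = (t * Complex.abs (f w - f z)) * Complex.abs (1 - (starRingEnd ℂ) w * z) := by
            rw [hA0]; ring
      _ ≤ C0 * Complex.abs ((1 - (starRingEnd ℂ) (f w) * f z)
            + ((1:ℂ) - (t:ℂ)^2) * ((starRingEnd ℂ) (f w) * f z)) := h
      _ ≤ C0 * (B0 + (1 - t^2) * 1) := by
            exact mul_le_mul_of_nonneg_left e3 hC0nn
      _ = C0 * B0 + (1 - t^2) * C0 := by ring
  -- take t → 1
  refine le_of_forall_pos_le_add ?_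
  intro ε hε
  set M := 1 + 2 * C0 + A0 with hM
  have hM0 : 0 < M := by positivity
  set t := max (1/2 : ℝ) (1 - ε / M) with ht
  have ht0 : 0 < t := lt_of_lt_of_le (by norm_num) (le_max_left _ _)
  have ht1 : t < 1 := by
    apply max_lt (by norm_num)
    have : 0 < ε / M := div_pos hε hM0
    linarith
  have h1t : (1 - t) * M ≤ ε := by
    have : 1 - ε / M ≤ t := le_max_right _ _
    have h2 : 1 - t ≤ ε / M := by linarith
    calc (1 - t) * M ≤ (ε / M) * M := by
          apply mul_le_mul_of_nonneg_right h2 (le_of_lt hM0)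
      _ = ε := by field_simp
  have hk := key t ht0 ht1
  have htle : (0:ℝ) ≤ 1 - t := by linarith
  have e5 : (1 - t^2) * C0 ≤ (1-t) * (2*C0) := by
    nlinarith [mul_nonneg (mul_nonneg htle htle) hC0nn]
  have e7 : (1-t) * (2*C0) + (1-t) * A0 ≤ ε := by nlinarith [h1t, htle, hM]
  have e8 : t * A0 = A0 - (1-t)*A0 := by ring
  linarith [hk, e5, e7, e8]

lemma sp_normSq {f : ℂ → ℂ} (hf : SchurFunction f) {z w : ℂ}
    (hz : z ∈ unitDisk) (hw : w ∈ unitDisk) :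
    (1 - normSq w) * ((1 - normSq z) * normSq (1 - (starRingEnd ℂ) (f w) * f z))
      ≤ (1 - normSq (f w)) * ((1 - normSq (f z)) * normSq (1 - (starRingEnd ℂ) w * z)) := by
  have h := sp hf hz hw
  have h2 : (Complex.abs (f w - f z) * Complex.abs (1 - (starRingEnd ℂ) w * z))^2
      ≤ (Complex.abs (w - z) * Complex.abs (1 - (starRingEnd ℂ) (f w) * f z))^2 := by
    apply pow_le_pow_left₀ (by positivity) h
  rw [mul_pow, mul_pow, Complex.sq_abs, Complex.sq_abs, Complex.sq_abs, Complex.sq_abs] at h2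
  have k1 := keyMobius (f w) (f z)
  have k2 := keyMobius w z
  have e1 : normSq (f w - f z)
      = normSq (1 - (starRingEnd ℂ) (f w) * f z) - (1 - normSq (f w)) * (1 - normSq (f z)) := by
    linarith [k1]
  have e2 : normSq (w - z)
      = normSq (1 - (starRingEnd ℂ) w * z) - (1 - normSq w) * (1 - normSq z) := by
    linarith [k2]
  rw [e1, e2] at h2
  nlinarith [h2]

/-- Julia's inequality for a Schur function with the given radial asymptotics at 1. -/
lemma julia (α C : ℝ) (hα : α ∈ Set.Ioo (0:ℝ) 1) {s : ℂ → ℂ} (hs : SchurFunction s)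
    (hC : 0 ≤ C)
    (hEv : ∀ᶠ t : ℝ in nhdsWithin (1:ℝ) (Set.Ioo (0:ℝ) 1),
      Complex.abs (s ↑t - (1 + α*((t:ℂ)-1))) ≤ C * Complex.abs ((t:ℂ)-1)^2)
    {z : ℂ} (hz : z ∈ unitDisk) :
    (1 - normSq z) * normSq (1 - s z) ≤ α * ((1 - normSq (s z)) * normSq (1 - z)) := by
  haveI := Ioo_neBot
  set F := nhdsWithin (1:ℝ) (Set.Ioo (0:ℝ) 1) with hF
  have habs : ∀ t : ℝ, t ∈ Set.Ioo (0:ℝ) 1 → Complex.abs ((t:ℂ) - 1) = 1 - t := by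
    intro t ht
    rw [show ((t:ℂ) - 1) = ((t - 1 : ℝ) : ℂ) by push_cast; ring, Complex.abs_ofReal,
      abs_of_neg (by linarith [ht.2] : t - 1 < 0)]
    ring
  have hst : ∀ᶠ t : ℝ in F, Complex.abs (s ↑t - 1) ≤ (1 - t) * (α + C * (1-t)) := by
    filter_upwards [hEv, eventually_mem_nhdsWithin] with t h1 h2
    have h3 : Complex.abs (s ↑t - 1)
        ≤ Complex.abs (s ↑t - (1 + α*((t:ℂ)-1))) + Complex.abs ((α:ℂ)*((t:ℂ)-1)) := by
      rw [show s ↑t - 1 = (s ↑t - (1 + α*((t:ℂ)-1))) + (α:ℂ)*((t:ℂ)-1) by ring]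
      exact Complex.abs.add_le _ _
    have h4 : Complex.abs ((α:ℂ)*((t:ℂ)-1)) = α * (1 - t) := by
      rw [map_mul, Complex.abs_ofReal, abs_of_pos hα.1, habs t h2]
    have h5 : Complex.abs ((t:ℂ)-1)^2 = (1-t)^2 := by rw [habs t h2]
    rw [h5] at h1
    rw [h4] at h3
    nlinarith [h1, h3]
  have hs1 : Tendsto (fun t : ℝ => s ↑t) F (𝓝 1) := by
    rw [tendsto_iff_dist_tendsto_zero]
    have hcont : Continuous (fun t : ℝ => (1 - t) * (α + C * (1-t))) := by fun_prop
    have h6 := (hcont.tendsto 1).mono_left (nhdsWithin_le_nhds (s := Set.Ioo (0:ℝ) 1))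
    have h7 : ((1:ℝ)-1) * (α + C * (1-1)) = 0 := by norm_num
    rw [h7] at h6
    exact squeeze_zero' (Eventually.of_forall fun t => dist_nonneg)
      (hst.mono fun t ht => by rw [Complex.dist_eq]; exact ht) h6
  set L : ℝ → ℝ := fun t => (1+t) * ((1 - normSq z) * normSq (1 - (starRingEnd ℂ) (s ↑t) * s z))
    with hL
  set R : ℝ → ℝ := fun t =>
    2*(α + C*(1-t)) * ((1 - normSq (s z)) * normSq (1 - (t:ℂ) * z)) with hR
  have hzsq : normSq (s z) ≤ 1 := normSq_le_one (hs.2 z hz)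
  have hmain : ∀ᶠ t : ℝ in F, L t ≤ R t := by
    filter_upwards [hst, eventually_mem_nhdsWithin] with t h1 h2
    have hw : ((t:ℂ)) ∈ unitDisk := by
      have : Complex.abs (t:ℂ) = t := by rw [Complex.abs_ofReal, abs_of_pos h2.1]
      show Complex.abs (t:ℂ) < 1
      rw [this]; exact h2.2
    have hsp := sp_normSq hs hz hw
    rw [Complex.normSq_ofReal, Complex.conj_ofReal] at hsp
    have hx1 : Complex.abs (s ↑t) ≤ 1 := hs.2 _ hw
    have hb2 : 1 - normSq (s ↑t) ≤ 2*((1-t)*(α + C*(1-t))) := by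
      have hx0 : 0 ≤ Complex.abs (s ↑t) := Complex.abs.nonneg _
      have hns : normSq (s ↑t) = Complex.abs (s ↑t)^2 := (Complex.sq_abs _).symm
      have h1x : 1 - Complex.abs (s ↑t) ≤ Complex.abs (s ↑t - 1) := by
        have h8 := norm_sub_norm_le (1:ℂ) (s ↑t)
        rw [norm_one, Complex.norm_eq_abs, Complex.norm_eq_abs,
          Complex.abs.map_sub 1 (s ↑t)] at h8
        exact h8
      nlinarith [h1, h1x, hx1, hx0, hns]
    have hnn : 0 ≤ (1 - normSq (s z)) * normSq (1 - (t:ℂ)*z) :=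
      mul_nonneg (by linarith) (normSq_nonneg _)
    have hstep := mul_le_mul_of_nonneg_right hb2 hnn
    have ht1 : 0 < 1 - t := by linarith [h2.2]
    have e0 : (1-t) * L t ≤ (1-t) * R t := by
      calc (1-t) * L t
          = (1 - t*t) * ((1 - normSq z) * normSq (1 - (starRingEnd ℂ) (s ↑t) * s z)) := by
            rw [hL]; ring
        _ ≤ (1 - normSq (s ↑t)) * ((1 - normSq (s z)) * normSq (1 - (t:ℂ) * z)) := hsp
        _ ≤ 2*((1-t)*(α + C*(1-t))) * ((1 - normSq (s z)) * normSq (1 - (t:ℂ)*z)) := hstep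
        _ = (1-t) * R t := by rw [hR]; ring
    exact le_of_mul_le_mul_left e0 ht1
  have hconjcont : Continuous (fun u : ℂ => normSq (1 - (starRingEnd ℂ) u * s z)) :=
    Complex.continuous_normSq.comp
      (continuous_const.sub (Complex.continuous_conj.mul continuous_const))
  have hTL : Tendsto L F (𝓝 ((1+1) * ((1 - normSq z) * normSq (1 - (starRingEnd ℂ) 1 * s z)))) := by
    apply Tendsto.mul
    · have : Continuous (fun t : ℝ => 1 + t) := by fun_prop
      exact (this.tendsto 1).mono_left nhdsWithin_le_nhds
    · exact (tendsto_const_nhds).mul ((hconjcont.tendsto 1).comp hs1)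
  have hRcont : Continuous R := by
    apply Continuous.mul
    · fun_prop
    · apply Continuous.mul continuous_const
      exact Complex.continuous_normSq.comp
        (continuous_const.sub (Complex.continuous_ofReal.mul continuous_const))
  have hTR : Tendsto R F (𝓝 (R 1)) := (hRcont.tendsto 1).mono_left nhdsWithin_le_nhds
  have hfin := le_of_tendsto_of_tendsto hTL hTR hmain
  have hR1 : R 1 = 2*α * ((1 - normSq (s z)) * normSq (1 - z)) := by
    rw [hR]; norm_num
  rw [hR1, map_one, one_mul] at hfin
  linarith [hfin]

lemma abs_sub_le_add (a b : ℂ) : Complex.abs (a - b) ≤ Complex.abs a + Complex.abs b := by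
  simpa [sub_eq_add_neg] using Complex.abs.add_le a (-b)

lemma poly_diff (α : ℝ) : Differentiable ℂ (fun z : ℂ => Aa α z)
    ∧ Differentiable ℂ (fun z : ℂ => Bb z) ∧ Differentiable ℂ (fun z : ℂ => Cc α z) := by
  refine ⟨?_, ?_, ?_⟩ <;> (first | (unfold Aa; fun_prop) | (unfold Bb; fun_prop) | (unfold Cc; fun_prop))

lemma lft_schur (α : ℝ) (hα : α ∈ Set.Ioo (0:ℝ) 1) {s₁ : ℂ → ℂ} (hs₁ : SchurFunction s₁) :
    SchurFunction (lft α s₁) := by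
  have hfe : lft α s₁ = fun z => (Aa α z * s₁ z + Bb z) / (Cc α z - Bb z * s₁ z) :=
    funext (lft_eq α s₁)
  obtain ⟨hA, hB, hC⟩ := poly_diff α
  rw [hfe]
  constructor
  · apply DifferentiableOn.div
    · exact (hA.differentiableOn.mul hs₁.1).add hB.differentiableOn
    · exact hC.differentiableOn.sub (hB.differentiableOn.mul hs₁.1)
    · intro z hz
      exact den_ne α hα hz (hs₁.2 z hz)
  · intro z hz
    have hne := den_ne α hα hz (hs₁.2 z hz)
    rw [← Complex.abs_def', map_div₀, div_le_one (Complex.abs.pos hne)]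
    apply abs_le_abs_of_normSq
    have hD := keyD α z (s₁ z)
    have h1 : 0 ≤ 4*α^2*(1 - normSq (s₁ z))*normSq (1-z) := by
      have := normSq_le_one (hs₁.2 z hz)
      have h5 : (0:ℝ) ≤ 4*α^2 := by positivity
      exact mul_nonneg (mul_nonneg h5 (by linarith)) (normSq_nonneg _)
    have h2 : 0 ≤ 4*α*(1 - normSq z)*normSq (1-(s₁ z)) := by
      have := normSq_lt_one hz
      exact mul_nonneg (mul_nonneg (by linarith [hα.1]) (by linarith)) (normSq_nonneg _)
    linarith

lemma lft_bigO (α : ℝ) (hα : α ∈ Set.Ioo (0:ℝ) 1) {s₁ : ℂ → ℂ} (hs₁ : SchurFunction s₁)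
    (hnt : NTLiminfPos s₁ 1) :
    NTBigO (fun z => lft α s₁ z - (1 + α * (z - 1))) 2 := by
  intro K hK
  haveI := stolz_neBot hK
  set l := liminf (fun z => Complex.abs (s₁ z - 1)) (nhdsWithin 1 (stolzRegion K)) with hldef
  have hl : 0 < l := hnt K hK
  have hev1 := eventually_of_liminf_pos (f := fun z => Complex.abs (s₁ z - 1))
    (fun z => Complex.abs.nonneg _) hl
  have hev2 := eventually_abs_lt (K := K) (l/8) (by linarith)
  rw [Asymptotics.isBigO_iff]
  refine ⟨8*α/l, ?_⟩
  filter_upwards [hev1, hev2, eventually_mem_nhdsWithin] with z h1 h2 h3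
  have hz : Complex.abs z < 1 := h3.1
  set w := s₁ z with hwdef
  have hw : Complex.abs w ≤ 1 := hs₁.2 z h3.1
  have hden := den_ne α hα hz hw
  have hiden : lft α s₁ z - (1 + α*(z-1))
      = (α*(z-1)^2*(w + 2*α - 1)) / (Cc α z - Bb z * w) := by
    rw [lft_eq, div_sub' hden]
    congr 1
    unfold Aa Bb Cc; ring
  -- lower bound for the denominator
  have e : Cc α z - Bb z * w = 2*(1-w) + ((2*α-1)*(1-z) + (1-z)*w) := by unfold Bb Cc; ring
  have habs1w : l/2 < Complex.abs (1 - w) := by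
    rwa [Complex.abs.map_sub 1 w]
  have habsz : Complex.abs (1 - z) < l/8 := by
    rwa [Complex.abs.map_sub 1 z]
  have h2a1 : Complex.abs ((2*α-1 : ℂ)) ≤ 1 := by
    rw [show ((2*α-1 : ℂ)) = ((2*α-1 : ℝ) : ℂ) by push_cast; ring, Complex.abs_ofReal]
    rw [abs_le]; exact ⟨by linarith [hα.1], by linarith [hα.2]⟩
  have hrest : Complex.abs ((2*α-1)*(1-z) + (1-z)*w) ≤ 2 * Complex.abs (1-z) := by
    refine (Complex.abs.add_le _ _).trans ?_
    rw [map_mul, map_mul]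
    have := Complex.abs.nonneg (1-z)
    nlinarith [Complex.abs.nonneg (1-z), h2a1, hw, Complex.abs.nonneg w]
  have hlow : l/4 ≤ Complex.abs (Cc α z - Bb z * w) := by
    have e2 : 2*((1:ℂ)-w) = (Cc α z - Bb z * w) - ((2*α-1)*(1-z) + (1-z)*w) := by
      rw [e]; ring
    have h5 : Complex.abs (2*((1:ℂ)-w))
        ≤ Complex.abs (Cc α z - Bb z * w) + Complex.abs ((2*α-1)*(1-z) + (1-z)*w) := by
      rw [e2]; exact abs_sub_le_add _ _
    have h6 : Complex.abs (2*((1:ℂ)-w)) = 2 * Complex.abs (1-w) := by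
      rw [map_mul, Complex.abs_two]
    nlinarith [h5, h6, hrest, habs1w, habsz]
  -- numerator bound
  have hnumb : Complex.abs (w + 2*α - 1) ≤ 2 := by
    have : w + 2*α - 1 = w + ((2*α-1 : ℂ)) := by ring
    rw [this]
    refine (Complex.abs.add_le _ _).trans ?_
    linarith [hw, h2a1]
  rw [hiden]
  rw [Complex.norm_eq_abs, map_div₀, map_mul, map_mul, Complex.norm_eq_abs, map_pow,
    Complex.abs_ofReal, abs_of_pos hα.1]
  rw [div_le_iff₀ (Complex.abs.pos hden)]
  have hzz := Complex.abs.nonneg (z-1)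
  have hpow : (0:ℝ) ≤ Complex.abs (z-1)^2 := by positivity
  have hα0 : (0:ℝ) ≤ α := le_of_lt hα.1
  calc α * Complex.abs (z-1)^2 * Complex.abs (w + 2*α - 1)
      ≤ α * Complex.abs (z-1)^2 * 2 := by
        apply mul_le_mul_of_nonneg_left hnumb (mul_nonneg hα0 hpow)
    _ = 8*α/l * Complex.abs (z-1)^2 * (l/4) := by
        field_simp
        ring
    _ ≤ 8*α/l * Complex.abs (z-1)^2 * Complex.abs (Cc α z - Bb z * w) := by
        apply mul_le_mul_of_nonneg_left hlow
        exact mul_nonneg (div_nonneg (by linarith) hl.le) hpow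

lemma bigO_const {f : ℂ → ℂ} {K : ℝ} (h : f =O[nhdsWithin 1 (stolzRegion K)] fun z => (z-1)^2) :
    ∃ C : ℝ, 0 ≤ C ∧ ∀ᶠ z in nhdsWithin (1:ℂ) (stolzRegion K),
      Complex.abs (f z) ≤ C * Complex.abs (z-1)^2 := by
  rw [Asymptotics.isBigO_iff] at h
  obtain ⟨c, hc⟩ := h
  refine ⟨max c 0, le_max_right _ _, hc.mono fun z hz => ?_⟩
  rw [Complex.norm_eq_abs, Complex.norm_eq_abs] at hz
  calc Complex.abs (f z) ≤ c * Complex.abs ((z-1)^2) := hz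
    _ ≤ max c 0 * Complex.abs ((z-1)^2) :=
        mul_le_mul_of_nonneg_right (le_max_left _ _) (Complex.abs.nonneg _)
    _ = max c 0 * Complex.abs (z-1)^2 := by rw [map_pow]

/-- The inverse parameter function. -/
def invpar (α : ℝ) (s : ℂ → ℂ) : ℂ → ℂ :=
  fun z => (Cc α z * s z - Bb z) / (Aa α z + Bb z * s z)

lemma part2 (α : ℝ) (hα : α ∈ Set.Ioo (0:ℝ) 1) {s : ℂ → ℂ} (hs : SchurFunction s)
    (hbig : NTBigO (fun z => s z - (1 + α * (z - 1))) 2) :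
    SchurFunction (invpar α s) ∧ NTLiminfPos (invpar α s) 1 ∧
      ∀ z ∈ unitDisk, s z = lft α (invpar α s) z := by
  obtain ⟨C, hC, hCev⟩ := bigO_const (hbig 2 (by norm_num))
  have hEv : ∀ᶠ t : ℝ in nhdsWithin (1:ℝ) (Set.Ioo (0:ℝ) 1),
      Complex.abs (s ↑t - (1 + α*((t:ℂ)-1))) ≤ C * Complex.abs ((t:ℂ)-1)^2 :=
    (radial_tendsto (by norm_num : (1:ℝ) < 2)).eventually hCev
  have hJ : ∀ z ∈ unitDisk, (1 - normSq z) * normSq (1 - s z)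
      ≤ α * ((1 - normSq (s z)) * normSq (1 - z)) := fun z hz => julia α C hα hs hC hEv hz
  -- E ≥ 0 on the disk
  have hEge : ∀ z ∈ unitDisk,
      normSq (Cc α z * s z - Bb z) ≤ normSq (Aa α z + Bb z * s z) := by
    intro z hz
    have hE := keyE α z (s z)
    have hJz := hJ z hz
    have h4 := mul_le_mul_of_nonneg_left hJz (by linarith [hα.1] : (0:ℝ) ≤ 4*α)
    nlinarith [hE, h4]
  -- denominator never vanishes
  have hden : ∀ z ∈ unitDisk, Aa α z + Bb z * s z ≠ 0 := by
    intro z hz h0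
    have h1 : Cc α z * s z - Bb z = 0 := by
      have := hEge z hz
      rw [h0, map_zero] at this
      exact normSq_eq_zero.mp (le_antisymm this (normSq_nonneg _))
    have h3 : Aa α z * Cc α z + Bb z ^ 2 = 0 := by
      linear_combination Cc α z * h0 - Bb z * h1
    have h4 : (2*(α:ℂ))^2 * (1-z)^2 = 0 := by rw [← keyDet α z]; exact h3
    have h5 : (2*(α:ℂ)) ≠ 0 := by
      intro hc
      have : (α:ℂ) = 0 := by linear_combination hc/2
      exact hα.1.ne' (by exact_mod_cast this)
    exact (mul_ne_zero (pow_ne_zero 2 h5) (pow_ne_zero 2 (one_sub_ne_zero hz))) h4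
  obtain ⟨hA, hB, hCd⟩ := poly_diff α
  have hschur : SchurFunction (invpar α s) := by
    constructor
    · apply DifferentiableOn.div
      · exact (hCd.differentiableOn.mul hs.1).sub hB.differentiableOn
      · exact hA.differentiableOn.add (hB.differentiableOn.mul hs.1)
      · exact fun z hz => hden z hz
    · intro z hz
      rw [invpar, ← Complex.abs_def', map_div₀, div_le_one (Complex.abs.pos (hden z hz))]
      exact abs_le_abs_of_normSq (hEge z hz)
  refine ⟨hschur, ?_, ?_⟩
  · -- NTLiminfPos
    intro K hK
    haveI := stolz_neBot hK
    obtain ⟨C', hC', hC'ev⟩ := bigO_const (hbig K hK)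
    set M := α + 2*C' with hM
    set δ := α^2/(M+1) with hδ
    have hMpos : 0 < M + 1 := by simp [hM]; linarith [hα.1]
    have hδpos : 0 < δ := div_pos (by nlinarith [hα.1]) hMpos
    apply liminf_pos_of_eventually hK hδpos
    · filter_upwards [eventually_mem_nhdsWithin] with z h3
      have hz : z ∈ unitDisk := h3.1
      calc Complex.abs (invpar α s z - 1)
          ≤ Complex.abs (invpar α s z) + Complex.abs (1:ℂ) := abs_sub_le_add _ _
        _ ≤ 2 := by
            have := hschur.2 z hz
            simp only [map_one]
            linarith [Complex.abs_def' (invpar α s z)]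
    · filter_upwards [hC'ev, eventually_mem_nhdsWithin,
        eventually_abs_lt (K := K) (min (α/(2*(C'+1))) 1) (lt_min (div_pos hα.1 (by positivity)) one_pos)] with z h1 h3 h4
      have hz : z ∈ unitDisk := h3.1
      have hz1 : z ≠ 1 := by
        intro hc
        rw [hc] at hz
        simp [unitDisk] at hz
      have hzabs : 0 < Complex.abs (z-1) := by
        rw [Complex.abs.pos_iff]
        intro hc
        exact hz1 (by linear_combination hc)
      -- identity for invpar - 1
      have hiden : (invpar α s z - 1) * (Aa α z + Bb z * s z)
          = 2*α*(1-z)*(s z - 1) := by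
        rw [invpar, sub_mul, div_mul_cancel₀ _ (hden z hz)]
        unfold Aa Bb Cc; ring
      -- upper bound on the denominator
      have hdenup : Complex.abs (Aa α z + Bb z * s z) ≤ M * Complex.abs (z-1)^2 := by
        have e : Aa α z + Bb z * s z
            = α*(z-1)^2 + (1+z)*(s z - (1 + α*(z-1))) := by unfold Aa Bb; ring
        rw [e]
        refine (Complex.abs.add_le _ _).trans ?_
        rw [map_mul, map_mul, map_pow, Complex.abs_ofReal, abs_of_pos hα.1]
        have h1z : Complex.abs (1+z) ≤ 2 := by
          refine (Complex.abs.add_le _ _).trans ?_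
          simp only [map_one]
          have : Complex.abs z < 1 := hz
          linarith
        have hnn : (0:ℝ) ≤ Complex.abs (s z - (1 + α*(z-1))) := Complex.abs.nonneg _
        have hnn2 : (0:ℝ) ≤ Complex.abs (z-1)^2 := by positivity
        have h2' : Complex.abs (1+z) * Complex.abs (s z - (1 + α*(z-1)))
            ≤ 2 * (C' * Complex.abs (z-1)^2) := by
          apply mul_le_mul h1z h1 hnn (by norm_num)
        rw [hM]
        nlinarith [h2']
      -- lower bound on |s z - 1|
      have hslow : α/2 * Complex.abs (z-1) ≤ Complex.abs (s z - 1) := by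
        have e : s z - 1 = α*(z-1) + (s z - (1 + α*(z-1))) := by ring
        have h5 : Complex.abs ((α:ℂ)*(z-1)) ≤ Complex.abs (s z - 1)
            + Complex.abs (s z - (1 + α*(z-1))) := by
          have e2 : (α:ℂ)*(z-1) = (s z - 1) - (s z - (1 + α*(z-1))) := by ring
          conv_lhs => rw [e2]
          exact abs_sub_le_add _ _
        rw [map_mul, Complex.abs_ofReal, abs_of_pos hα.1] at h5
        have h6 : Complex.abs (z-1) ≤ α/(2*(C'+1)) := le_of_lt (lt_of_lt_of_le h4 (min_le_left _ _))
        have h7 : C' * Complex.abs (z-1)^2 ≤ α/2 * Complex.abs (z-1) := by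
          have : C' * Complex.abs (z-1) ≤ α/2 := by
            calc C' * Complex.abs (z-1) ≤ C' * (α/(2*(C'+1))) :=
                  mul_le_mul_of_nonneg_left h6 hC'
              _ ≤ α/2 := by
                  rw [show C' * (α/(2*(C'+1))) = (C' * α)/(2*(C'+1)) by ring,
                    div_le_div_iff₀ (by positivity) (by norm_num)]
                  nlinarith [hα.1, hC']
          nlinarith [Complex.abs.nonneg (z-1)]
        nlinarith [h1, h5, h7]
      -- conclude
      have habsiden : Complex.abs (invpar α s z - 1) * Complex.abs (Aa α z + Bb z * s z)
          = 2*α*Complex.abs (1-z)*Complex.abs (s z - 1) := by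
        rw [← map_mul, hiden, map_mul, map_mul, map_mul, Complex.abs_two,
          Complex.abs_ofReal, abs_of_pos hα.1]
      have h1z : Complex.abs (1-z) = Complex.abs (z-1) := Complex.abs.map_sub 1 z
      rw [h1z] at habsiden
      have hnum_low : α^2 * Complex.abs (z-1)^2
          ≤ Complex.abs (invpar α s z - 1) * (M * Complex.abs (z-1)^2) := by
        calc α^2 * Complex.abs (z-1)^2 = 2*α*Complex.abs (z-1)*(α/2*Complex.abs (z-1)) := by ring
          _ ≤ 2*α*Complex.abs (z-1)*Complex.abs (s z - 1) := by
              apply mul_le_mul_of_nonneg_left hslow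
              have := Complex.abs.nonneg (z-1)
              nlinarith [hα.1]
          _ = Complex.abs (invpar α s z - 1) * Complex.abs (Aa α z + Bb z * s z) :=
              habsiden.symm
          _ ≤ Complex.abs (invpar α s z - 1) * (M * Complex.abs (z-1)^2) :=
              mul_le_mul_of_nonneg_left hdenup (Complex.abs.nonneg _)
      have hMnn : 0 ≤ M := by rw [hM]; linarith [hα.1]
      have hzsq : 0 < Complex.abs (z-1)^2 := by positivity
      rw [hδ, div_le_iff₀ hMpos]
      have h8 : α^2 ≤ Complex.abs (invpar α s z - 1) * M := by
        have := hnum_low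
        rw [show Complex.abs (invpar α s z - 1) * (M * Complex.abs (z-1)^2)
          = (Complex.abs (invpar α s z - 1) * M) * Complex.abs (z-1)^2 by ring] at this
        exact le_of_mul_le_mul_right (by linarith [this]) hzsq
      nlinarith [h8, Complex.abs.nonneg (invpar α s z - 1), Complex.abs_def' (invpar α s z - 1)]
  · -- s = lft α (invpar α s)
    intro z hz
    have hu := hden z hz
    have h5 : (2*(α:ℂ)) ≠ 0 := by
      intro hc
      have : (α:ℂ) = 0 := by linear_combination hc/2
      exact hα.1.ne' (by exact_mod_cast this)
    have hCden : Cc α z - Bb z * invpar α s z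
        = ((2*(α:ℂ))^2*(1-z)^2) / (Aa α z + Bb z * s z) := by
      rw [invpar]
      field_simp
      linear_combination keyDet α z
    have hne2 : Cc α z - Bb z * invpar α s z ≠ 0 := by
      rw [hCden]
      exact div_ne_zero (mul_ne_zero (pow_ne_zero 2 h5)
        (pow_ne_zero 2 (one_sub_ne_zero hz))) hu
    rw [lft_eq, eq_div_iff hne2]
    have hv : invpar α s z * (Aa α z + Bb z * s z) = Cc α z * s z - Bb z := by
      rw [invpar, div_mul_cancel₀ _ hu]
    linear_combination -hv

lemma lft_inj (α : ℝ) (hα : α ∈ Set.Ioo (0:ℝ) 1) {s₁ t₁ : ℂ → ℂ}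
    (hs₁ : SchurFunction s₁) (ht₁ : SchurFunction t₁)
    (heq : ∀ z ∈ unitDisk, lft α s₁ z = lft α t₁ z) :
    ∀ z ∈ unitDisk, s₁ z = t₁ z := by
  intro z hz
  have h1 := heq z hz
  rw [lft_eq, lft_eq] at h1
  have hd1 : Cc α z - Bb z * s₁ z ≠ 0 := den_ne α hα hz (hs₁.2 z hz)
  have hd2 : Cc α z - Bb z * t₁ z ≠ 0 := den_ne α hα hz (ht₁.2 z hz)
  rw [div_eq_div_iff hd1 hd2] at h1
  have h2 : (Aa α z * Cc α z + Bb z ^ 2) * (s₁ z - t₁ z) = 0 := by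
    linear_combination h1
  have h3 : (2*(α:ℂ))^2 * (1-z)^2 ≠ 0 := by
    have h5 : (2*(α:ℂ)) ≠ 0 := by
      intro hc
      have : (α:ℂ) = 0 := by linear_combination hc/2
      exact hα.1.ne' (by exact_mod_cast this)
    exact mul_ne_zero (pow_ne_zero 2 h5) (pow_ne_zero 2 (one_sub_ne_zero hz))
  rw [keyDet α z] at h2
  rcases mul_eq_zero.mp h2 with h4 | h4
  · exact absurd h4 h3
  · linear_combination h4

lemma lft_const (α : ℝ) (hα : α ∈ Set.Ioo (0:ℝ) 1) :
    ∀ z ∈ unitDisk, lft α (fun _ => 1 - 2 * α) z = α * z + 1 - α := by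
  intro z _
  unfold lft
  have hden : (2*(α:ℝ):ℂ) + 1 - z * (2*α - 1) - (1 + z) * (1 - 2*α) = 4*α := by
    push_cast; ring
  have h4 : ((4:ℂ)*α) ≠ 0 := by
    intro hc
    have : (α:ℂ) = 0 := by linear_combination hc/4
    exact hα.1.ne' (by exact_mod_cast this)
  rw [show (2*(α:ℝ):ℂ) + 1 - z * (2*↑α - 1) - (1 + z) * ((fun _ : ℂ => 1 - 2*(α:ℂ)) z)
      = 4*α by push_cast; ring]
  rw [div_eq_iff h4]
  push_cast
  ring

end BIP

theorem interpolation_correspondence_alpha (α : ℝ) (hα : α ∈ Set.Ioo (0 : ℝ) 1) :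
    ((∀ s₁ : ℂ → ℂ, SchurFunction s₁ → NTLiminfPos s₁ 1 →
      SchurFunction (lft α s₁) ∧
        NTBigO (fun z => lft α s₁ z - (1 + α * (z - 1))) 2) ∧
    (∀ s : ℂ → ℂ, SchurFunction s → NTBigO (fun z => s z - (1 + α * (z - 1))) 2 →
      ∃ s₁ : ℂ → ℂ, SchurFunction s₁ ∧ NTLiminfPos s₁ 1 ∧
        ∀ z ∈ unitDisk, s z = lft α s₁ z) ∧
    (∀ s₁ t₁ : ℂ → ℂ, SchurFunction s₁ → NTLiminfPos s₁ 1 →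
      SchurFunction t₁ → NTLiminfPos t₁ 1 →
      (∀ z ∈ unitDisk, lft α s₁ z = lft α t₁ z) →
      ∀ z ∈ unitDisk, s₁ z = t₁ z)) ∧
    (∀ z ∈ unitDisk, lft α (fun _ => 1 - 2 * α) z = α * z + 1 - α) := by
  refine ⟨⟨fun s₁ hs₁ hnt => ⟨BIP.lft_schur α hα hs₁, BIP.lft_bigO α hα hs₁ hnt⟩,
    fun s hs hbig => ?_,
    fun s₁ t₁ hs₁ _ ht₁ _ heq => BIP.lft_inj α hα hs₁ ht₁ heq⟩,
    BIP.lft_const α hα⟩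
  obtain ⟨h1, h2, h3⟩ := BIP.part2 α hα hs hbig
  exact ⟨BIP.invpar α s, h1, h2, h3⟩
end
end

section
/- Let α ∈ (0,1), let s be a Schur function admitting the representation s(z) = αz + 1 - α + O((1-z)^4) as z tends nontangentially to 1, and let s₁ be a Schur function with liminf_{z →̂ 1} |s₁(z) - 1| > 0 such that s(z) = ((2α - 1 - z(2α+1))·s₁(z) + 1 + z)/(2α + 1 - z(2α-1) - (1+z)·s₁(z)). Then the following assertions are equivalent: (i) s(z) = αz + 1 - α for all z ∈ 𝔻; (ii) s₁(z) = 1 - 2α for all z ∈ 𝔻; (iii) |s₁(z)| ≤ |1 - 2α| for every z ∈ 𝔻; (iv) |(2α + 1 - z(2α-1))·s(z) - 1 - z| ≤ |1 - 2α| · |(2α - 1 - z(2α+1)) + (1+z)·s(z)| for every z ∈ 𝔻; (v) |1 - s(z)|² < (α/(1-α))·(1 - |s(z)|²) for every z ∈ 𝔻. -/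
set_option maxHeartbeats 1000000

noncomputable section

open Complex Filter

lemma unitDisk_eq_ball : unitDisk = Metric.ball (0:ℂ) 1 := by
  ext z; simp [unitDisk, Complex.dist_eq]

lemma mem_unitDisk {z : ℂ} : z ∈ unitDisk ↔ Norm.norm z < 1 := Iff.rfl

lemma normSq_lt_one' {z : ℂ} (hz : Norm.norm z < 1) : normSq z < 1 := by
  have := Complex.sq_norm z
  nlinarith [norm_nonneg z]

lemma normSq_le_one' {z : ℂ} (hz : Norm.norm z ≤ 1) : normSq z ≤ 1 := by
  have := Complex.sq_norm z
  nlinarith [norm_nonneg z]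

/-- Key Möbius identity. -/
lemma mobius_identity (a w : ℂ) :
    normSq (1 - (starRingEnd ℂ) a * w) - normSq (w - a) = (1 - normSq a) * (1 - normSq w) := by
  simp only [Complex.normSq_apply, Complex.sub_re, Complex.sub_im, Complex.one_re, Complex.one_im,
    Complex.mul_re, Complex.mul_im, Complex.conj_re, Complex.conj_im]
  ring

lemma mobius_ne (a w : ℂ) (ha : normSq a < 1) (hw : normSq w ≤ 1) :
    1 - (starRingEnd ℂ) a * w ≠ 0 := by
  intro h
  have h1 : (starRingEnd ℂ) a * w = 1 := by linear_combination -h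
  have h2 : normSq a * normSq w = 1 := by
    have := congrArg normSq h1
    rwa [Complex.normSq_mul, Complex.normSq_conj, Complex.normSq_one] at this
  nlinarith [Complex.normSq_nonneg w, Complex.normSq_nonneg a]

lemma mobius_lt (a w : ℂ) (ha : Norm.norm a < 1) (hw : Norm.norm w < 1) :
    Norm.norm ((w - a) / (1 - (starRingEnd ℂ) a * w)) < 1 := by
  have ha' : normSq a < 1 := normSq_lt_one' ha
  have hw' : normSq w < 1 := normSq_lt_one' hw
  have hne := mobius_ne a w ha' hw'.le
  have h2 := mobius_identity a w
  rw [norm_div, div_lt_one (norm_pos_iff.mpr hne)]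
  have : normSq (w - a) < normSq (1 - (starRingEnd ℂ) a * w) := by nlinarith
  have h3 : Norm.norm (w-a) ^ 2 < Norm.norm (1 - (starRingEnd ℂ) a * w) ^ 2 := by
    rwa [Complex.sq_norm, Complex.sq_norm]
  nlinarith [norm_nonneg (w - a), norm_nonneg (1 - (starRingEnd ℂ) a * w)]

lemma denom_ne (α : ℝ) (hα : α ∈ Set.Ioo (0:ℝ) 1) (z w : ℂ)
    (hz : Norm.norm z < 1) (hw : Norm.norm w ≤ 1) :
    2*(α:ℂ) + 1 - z*(2*(α:ℂ) - 1) - (1 + z)*w ≠ 0 := by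
  obtain ⟨hα0, hα1⟩ := hα
  intro h
  have hB : 2*(α:ℂ) + 1 - z*(2*(α:ℂ) - 1) = (1 + z)*w := by linear_combination h
  have key : normSq (2*(α:ℂ) + 1 - z*(2*(α:ℂ) - 1)) - normSq (1 + z)
      = 4*α^2*normSq (1 - z) + 4*α*(1 - normSq z) := by
    simp only [Complex.normSq_apply, Complex.sub_re, Complex.sub_im, Complex.add_re,
      Complex.add_im, Complex.mul_re, Complex.mul_im, Complex.one_re, Complex.one_im,
      Complex.ofReal_re, Complex.ofReal_im, Complex.re_ofNat, Complex.im_ofNat]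
    ring
  have h1 : normSq (2*(α:ℂ) + 1 - z*(2*(α:ℂ) - 1)) = normSq (1 + z) * normSq w := by
    rw [hB, Complex.normSq_mul]
  have h2 : normSq w ≤ 1 := normSq_le_one' hw
  have h3 : normSq z < 1 := normSq_lt_one' hz
  nlinarith [Complex.normSq_nonneg (1 - z), Complex.normSq_nonneg (1 + z),
    Complex.normSq_nonneg w]

lemma schwarz_pick_s6 (t : ℂ → ℂ) (htd : DifferentiableOn ℂ t unitDisk)
    (htm : ∀ z ∈ unitDisk, Norm.norm (t z) < 1)
    (z : ℂ) (hz : z ∈ unitDisk) (r : ℝ) (hr0 : 0 ≤ r) (hr1 : r < 1) :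
    normSq (t z - t r) * normSq (1 - (r:ℂ) * z)
      ≤ normSq (z - r) * normSq (1 - (starRingEnd ℂ) (t r) * t z) := by
  have hrC : Norm.norm ((r:ℂ)) < 1 := by
    rw [Complex.norm_real, Real.norm_eq_abs, _root_.abs_of_nonneg hr0]; exact hr1
  have hrmem : (r:ℂ) ∈ unitDisk := hrC
  have ha : Norm.norm (t r) < 1 := htm _ hrmem
  have hnegr : Norm.norm (-(r:ℂ)) < 1 := by rwa [norm_neg]
  -- the Blaschke factor at -r
  have hψden : ∀ w ∈ unitDisk, (1:ℂ) + r*w ≠ 0 := by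
    intro w hw h0
    apply mobius_ne (-(r:ℂ)) w (normSq_lt_one' hnegr) (normSq_lt_one' hw).le
    rw [map_neg, Complex.conj_ofReal]
    linear_combination h0
  set ψ : ℂ → ℂ := fun w => (w + r)/(1 + r*w) with hψ
  have hψmaps : ∀ w ∈ unitDisk, ψ w ∈ unitDisk := by
    intro w hw
    have h := mobius_lt (-(r:ℂ)) w hnegr hw
    have e : (w - -(r:ℂ))/(1 - (starRingEnd ℂ) (-(r:ℂ)) * w) = (w + r)/(1 + r*w) := by
      rw [map_neg, Complex.conj_ofReal]
      norm_num
    rw [e] at h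
    exact h
  have hψdiff : DifferentiableOn ℂ ψ unitDisk := by
    apply DifferentiableOn.div
    · exact (differentiable_id.add_const _).differentiableOn
    · exact ((differentiable_const _).add ((differentiable_const _).mul differentiable_id)).differentiableOn
    · exact hψden
  set F : ℂ → ℂ := fun w => (t (ψ w) - t r)/(1 - (starRingEnd ℂ) (t r) * t (ψ w)) with hF
  have hFden : ∀ w ∈ unitDisk, 1 - (starRingEnd ℂ) (t r) * t (ψ w) ≠ 0 := by
    intro w hw
    exact mobius_ne (t r) (t (ψ w)) (normSq_lt_one' ha) (normSq_lt_one' (htm _ (hψmaps w hw))).le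
  have htψ : DifferentiableOn ℂ (fun w => t (ψ w)) unitDisk := htd.comp hψdiff hψmaps
  have hFdiff : DifferentiableOn ℂ F unitDisk := by
    apply DifferentiableOn.div
    · exact htψ.sub (differentiableOn_const _)
    · exact (differentiableOn_const _).sub ((differentiableOn_const _).mul htψ)
    · exact hFden
  have hFmaps : ∀ w ∈ unitDisk, Norm.norm (F w) < 1 := by
    intro w hw
    exact mobius_lt (t r) (t (ψ w)) ha (htm _ (hψmaps w hw))
  have hψ0 : ψ 0 = (r:ℂ) := by
    rw [hψ]; simp
  have hF0 : F 0 = 0 := by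
    rw [hF]; simp only [hψ0, sub_self, zero_div]
  -- the point w₀
  have hrzne : (1:ℂ) - r*z ≠ 0 := by
    intro h0
    apply mobius_ne (r:ℂ) z (normSq_lt_one' hrC) (normSq_lt_one' hz).le
    rw [Complex.conj_ofReal]
    exact h0
  set w₀ : ℂ := (z - r)/(1 - r*z) with hw₀def
  have hw₀ : w₀ ∈ unitDisk := by
    have h := mobius_lt (r:ℂ) z hrC hz
    rw [Complex.conj_ofReal] at h
    exact h
  have hψw₀ : ψ w₀ = z := by
    have hden2 : (1:ℂ) + r*w₀ ≠ 0 := hψden w₀ hw₀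
    rw [hψ]
    simp only
    rw [div_eq_iff hden2, hw₀def]
    have hinv := mul_inv_cancel₀ hrzne
    simp only [div_eq_mul_inv]
    linear_combination (z - ↑r) * hinv
  -- Schwarz lemma
  have hs : Norm.norm (F w₀) ≤ Norm.norm w₀ := by
    apply Complex.norm_le_norm_of_mapsTo_ball
      (unitDisk_eq_ball ▸ hFdiff)
      (fun w hw => by
        rw [← unitDisk_eq_ball] at hw
        rw [Metric.mem_closedBall, Complex.dist_eq, sub_zero]
        exact (hFmaps w hw).le)
      hF0
    exact hw₀
  rw [hF] at hs
  simp only [hψw₀] at hs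
  rw [hw₀def] at hs
  rw [norm_div, norm_div] at hs
  have hFdz : 1 - (starRingEnd ℂ) (t r) * t z ≠ 0 :=
    mobius_ne (t r) (t z) (normSq_lt_one' ha) (normSq_lt_one' (htm z hz)).le
  rw [div_le_div_iff₀ (norm_pos_iff.mpr hFdz) (norm_pos_iff.mpr hrzne)] at hs
  have hsq := pow_le_pow_left₀ (mul_nonneg (norm_nonneg _) (norm_nonneg _)) hs 2
  rw [mul_pow, mul_pow, Complex.sq_norm, Complex.sq_norm, Complex.sq_norm, Complex.sq_norm] at hsq
  exact hsq

lemma herglotz_rigidity (h : ℂ → ℂ) (hd : DifferentiableOn ℂ h (Metric.ball (0:ℂ) 1))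
    (hre : ∀ z ∈ Metric.ball (0:ℂ) 1, 0 ≤ (h z).re)
    (C δ : ℝ) (hC : 0 < C) (hδ : 0 < δ) (hδ2 : δ ≤ 1/2)
    (hb : ∀ r : ℝ, 1 - δ < r → r < 1 → Norm.norm (h r) ≤ C * (1 - r)^2) :
    ∀ z ∈ Metric.ball (0:ℂ) 1, h z = 0 := by
  have han : AnalyticOnNhd ℂ h (Metric.ball (0:ℂ) 1) := hd.analyticOnNhd Metric.isOpen_ball
  have memball : ∀ r : ℝ, 1 - δ < r → r < 1 → (r:ℂ) ∈ Metric.ball (0:ℂ) 1 := by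
    intro r h1 h2
    rw [mem_ball_zero_iff, Complex.norm_real, Real.norm_eq_abs,
      _root_.abs_of_nonneg (by linarith)]
    exact h2
  rcases han.is_constant_or_isOpen (convex_ball (0:ℂ) 1).isPreconnected with ⟨w, hw⟩ | hopen
  · -- constant case
    have hw0 : w = 0 := by
      by_contra hne
      have hpos : 0 < Norm.norm w := norm_pos_iff.mpr hne
      set ε : ℝ := min (δ/2) (Norm.norm w/(2*C)) with hε
      have hε0 : 0 < ε := lt_min (by linarith) (by positivity)
      have hε1 : ε ≤ δ/2 := min_le_left _ _
      have hε2 : ε * (2*C) ≤ Norm.norm w := by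
        have := min_le_right (δ/2) (Norm.norm w/(2*C))
        rw [← hε] at this
        exact (le_div_iff₀ (by positivity)).1 this
      set r : ℝ := 1 - ε with hr
      have hr1 : r < 1 := by simp only [hr]; linarith
      have hrδ : 1 - δ < r := by simp only [hr]; linarith
      have hb1 := hb r hrδ hr1
      rw [hw _ (memball r hrδ hr1)] at hb1
      have h1r : (1:ℝ) - r = ε := by simp [hr]
      rw [h1r] at hb1
      have hεq : ε ≤ 1/4 := by linarith
      nlinarith [mul_le_mul_of_nonneg_right hε2 hε0.le, mul_pos hC hε0, sq_nonneg ε]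
    intro z hz; rw [hw z hz, hw0]
  · exfalso
    have hrepos : ∀ z ∈ Metric.ball (0:ℂ) 1, 0 < (h z).re := by
      intro z hz
      rcases (hre z hz).lt_or_eq with hlt | heq
      · exact hlt
      exfalso
      have hio : IsOpen (h '' Metric.ball (0:ℂ) 1) := hopen _ subset_rfl Metric.isOpen_ball
      obtain ⟨ε, hε, hball⟩ := Metric.isOpen_iff.1 hio (h z) ⟨z, hz, rfl⟩
      have hmem : h z - (ε/2 : ℝ) ∈ Metric.ball (h z) ε := by
        rw [Metric.mem_ball, Complex.dist_eq]
        have heq2 : h z - (ε/2 : ℝ) - h z = -(ε/2 : ℝ) := by ring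
        rw [heq2, norm_neg, Complex.norm_real, Real.norm_eq_abs, _root_.abs_of_pos (by linarith)]
        linarith
      obtain ⟨z', hz', hz'eq⟩ := hball hmem
      have h1 := hre z' hz'
      rw [hz'eq] at h1
      simp only [Complex.sub_re, Complex.ofReal_re] at h1
      rw [← heq] at h1
      linarith
    set c := h 0 with hc
    have hc0 : 0 < c.re := hrepos 0 (by simp)
    have hcabs : 0 < Norm.norm c := by
      apply norm_pos_iff.mpr
      intro hcc; rw [hcc] at hc0; simp at hc0
    set φ : ℂ → ℂ := fun z => (h z - c) / (h z + (starRingEnd ℂ) c) with hφ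
    have hden : ∀ z ∈ Metric.ball (0:ℂ) 1, h z + (starRingEnd ℂ) c ≠ 0 := by
      intro z hz heq
      have h1 : (h z + (starRingEnd ℂ) c).re = (h z).re + c.re := by
        simp [Complex.add_re, Complex.conj_re]
      rw [heq] at h1
      simp only [Complex.zero_re] at h1
      nlinarith [hrepos z hz]
    have hφd : DifferentiableOn ℂ φ (Metric.ball (0:ℂ) 1) :=
      DifferentiableOn.div (hd.sub (differentiableOn_const _))
        (hd.add (differentiableOn_const _)) hden
    have hφ0 : φ 0 = 0 := by
      simp only [hφ]
      rw [sub_self, zero_div]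
    have hφmaps : Set.MapsTo φ (Metric.ball (0:ℂ) 1) (Metric.ball (0:ℂ) 1) := by
      intro z hz
      rw [mem_ball_zero_iff]
      have hdz := hden z hz
      rw [hφ]
      simp only
      rw [norm_div, div_lt_one (norm_pos_iff.mpr hdz)]
      have key : normSq (h z + (starRingEnd ℂ) c) - normSq (h z - c) = 4 * (h z).re * c.re := by
        simp only [Complex.normSq_apply, Complex.add_re, Complex.add_im, Complex.sub_re,
          Complex.sub_im, Complex.conj_re, Complex.conj_im]
        ring
      have hgt : normSq (h z - c) < normSq (h z + (starRingEnd ℂ) c) := by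
        nlinarith [hrepos z hz]
      have e1 := Complex.sq_norm (h z - c)
      have e2 := Complex.sq_norm (h z + (starRingEnd ℂ) c)
      nlinarith [norm_nonneg (h z - c), norm_nonneg (h z + (starRingEnd ℂ) c)]
    have schwarz : ∀ r : ℝ, 0 ≤ r → r < 1 → Norm.norm (φ r) ≤ r := by
      intro r h0 h1
      have habs : Norm.norm (r:ℂ) < 1 := by
        rw [Complex.norm_real, Real.norm_eq_abs, _root_.abs_of_nonneg h0]; exact h1
      have := Complex.norm_le_norm_of_mapsTo_ball hφd (hφmaps.mono_right Metric.ball_subset_closedBall) hφ0 habs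
      rwa [Complex.norm_real, Real.norm_eq_abs, _root_.abs_of_nonneg h0] at this
    -- quantitative contradiction
    set ε : ℝ := min (δ/2) (Norm.norm c/(8*C)) with hε
    have hε0 : 0 < ε := lt_min (by linarith) (by positivity)
    have hε1 : ε ≤ δ/2 := min_le_left _ _
    have hε2 : ε * (8*C) ≤ Norm.norm c := by
      have := min_le_right (δ/2) (Norm.norm c/(8*C))
      rw [← hε] at this
      exact (le_div_iff₀ (by positivity)).1 this
    set r : ℝ := 1 - ε with hr
    have hr1 : r < 1 := by simp only [hr]; linarith
    have hrδ : 1 - δ < r := by simp only [hr]; linarith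
    have hr0 : (0:ℝ) ≤ r := by simp only [hr]; linarith
    have hs := schwarz r hr0 hr1
    have hbr := hb r hrδ hr1
    have hdr := hden _ (memball r hrδ hr1)
    rw [hφ] at hs
    simp only at hs
    rw [norm_div, div_le_iff₀ (norm_pos_iff.mpr hdr)] at hs
    have t1 : Norm.norm c ≤ Norm.norm (h (r:ℂ) - c) + Norm.norm (h (r:ℂ)) := by
      calc Norm.norm c = Norm.norm (-(h (r:ℂ) - c) + h (r:ℂ)) := by ring_nf
        _ ≤ Norm.norm (-(h (r:ℂ) - c)) + Norm.norm (h (r:ℂ)) := norm_add_le _ _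
        _ = Norm.norm (h (r:ℂ) - c) + Norm.norm (h (r:ℂ)) := by rw [norm_neg]
    have t2 : Norm.norm (h (r:ℂ) + (starRingEnd ℂ) c) ≤ Norm.norm (h (r:ℂ)) + Norm.norm c := by
      calc Norm.norm (h (r:ℂ) + (starRingEnd ℂ) c)
          ≤ Norm.norm (h (r:ℂ)) + Norm.norm ((starRingEnd ℂ) c) := norm_add_le _ _
        _ = Norm.norm (h (r:ℂ)) + Norm.norm c := by rw [Complex.norm_conj]
    have h1r : (1:ℝ) - r = ε := by simp [hr]
    rw [h1r] at hbr
    nlinarith [mul_le_mul_of_nonneg_left t2 hr0, norm_nonneg (h (r:ℂ)),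
      mul_le_mul_of_nonneg_right hε2 hε0.le, mul_pos hC hε0]

theorem rigidity_tfae (α : ℝ) (hα : α ∈ Set.Ioo (0 : ℝ) 1)
    (s s₁ : ℂ → ℂ) (hs : SchurFunction s)
    (hO : NTBigO (fun z => s z - (α * z + 1 - α)) 4)
    (hs₁ : SchurFunction s₁) (hlim : NTLiminfPos s₁ 1)
    (hrel : ∀ z ∈ unitDisk,
      s z = ((2 * α - 1 - z * (2 * α + 1)) * s₁ z + 1 + z) /
        (2 * α + 1 - z * (2 * α - 1) - (1 + z) * s₁ z)) :
    [(∀ z ∈ unitDisk, s z = α * z + 1 - α),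
     (∀ z ∈ unitDisk, s₁ z = 1 - 2 * α),
     (∀ z ∈ unitDisk, ‖s₁ z‖ ≤ |1 - 2 * α|),
     (∀ z ∈ unitDisk,
        ‖(2 * α + 1 - z * (2 * α - 1)) * s z - 1 - z‖ ≤
          |1 - 2 * α| * ‖(2 * α - 1 - z * (2 * α + 1)) + (1 + z) * s z‖),
     (∀ z ∈ unitDisk,
        ‖1 - s z‖ ^ 2 < (α / (1 - α)) * (1 - ‖s z‖ ^ 2))].TFAE := by
  obtain ⟨hα0, hα1⟩ := hα
  have hαC : (α:ℂ) ≠ 0 := by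
    simp only [ne_eq, Complex.ofReal_eq_zero]; exact ne_of_gt hα0
  have hz1 : ∀ z ∈ unitDisk, (1:ℂ) - z ≠ 0 := by
    intro z hz h
    have : z = 1 := by linear_combination -h
    rw [mem_unitDisk, this] at hz
    simp at hz
  -- cross-multiplied relation
  have hEne : ∀ z ∈ unitDisk,
      2*(α:ℂ) + 1 - z*(2*(α:ℂ) - 1) - (1 + z) * s₁ z ≠ 0 := by
    intro z hz
    exact denom_ne α ⟨hα0, hα1⟩ z (s₁ z) hz (hs₁.2 z hz)
  have hcross : ∀ z ∈ unitDisk,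
      s z * (2*(α:ℂ) + 1 - z*(2*(α:ℂ) - 1) - (1 + z) * s₁ z)
        = (2*(α:ℂ) - 1 - z*(2*(α:ℂ) + 1)) * s₁ z + 1 + z := by
    intro z hz
    rw [hrel z hz]
    exact div_mul_cancel₀ _ (hEne z hz)
  have hkey3 : ∀ z ∈ unitDisk,
      (s z - ((α:ℂ)*z + 1 - α)) * (2*(α:ℂ) + 1 - z*(2*(α:ℂ) - 1) - (1 + z) * s₁ z)
        = (α:ℂ)*(1 - z)^2*(s₁ z - (1 - 2*(α:ℂ))) := by
    intro z hz
    linear_combination hcross z hz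
  have hident : ∀ z ∈ unitDisk,
      s₁ z * ((2*(α:ℂ) - 1 - z*(2*(α:ℂ) + 1)) + (1 + z) * s z)
        = (2*(α:ℂ) + 1 - z*(2*(α:ℂ) - 1)) * s z - 1 - z := by
    intro z hz
    linear_combination -hcross z hz
  have hXne : ∀ z ∈ unitDisk,
      (2*(α:ℂ) - 1 - z*(2*(α:ℂ) + 1)) + (1 + z) * s z ≠ 0 := by
    intro z hz
    have hXE : ((2*(α:ℂ) - 1 - z*(2*(α:ℂ) + 1)) + (1 + z) * s z)
        * (2*(α:ℂ) + 1 - z*(2*(α:ℂ) - 1) - (1 + z) * s₁ z) = 4*(α:ℂ)^2*(1 - z)^2 := by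
      linear_combination (1 + z) * hcross z hz
    intro h0
    rw [h0, zero_mul] at hXE
    have : (4:ℂ)*(α:ℂ)^2*(1 - z)^2 ≠ 0 := by
      apply mul_ne_zero (mul_ne_zero (by norm_num) (pow_ne_zero _ hαC))
        (pow_ne_zero _ (hz1 z hz))
    exact this hXE.symm
  -- radial bound from hO
  obtain ⟨C₀, hC₀pos, δ₀, hδ₀pos, hδ₀half, hrad⟩ :
      ∃ C₀ > (0:ℝ), ∃ δ₀ > (0:ℝ), δ₀ ≤ 1/2 ∧ ∀ r : ℝ, 1 - δ₀ < r → r < 1 →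
        Norm.norm (s r - ((α:ℂ)*r + 1 - α)) ≤ C₀ * (1 - r)^4 := by
    have h2 := hO 2 one_lt_two
    rw [Asymptotics.isBigO_iff] at h2
    obtain ⟨C, hC⟩ := h2
    rw [Filter.Eventually] at hC
    rw [Metric.mem_nhdsWithin_iff] at hC
    obtain ⟨ε, hε, hsub⟩ := hC
    refine ⟨max C 1, by positivity, min (ε/2) (1/2), by positivity, min_le_right _ _, ?_⟩
    intro r h1 h2'
    have hr0 : (0:ℝ) < r := by
      have := min_le_right (ε/2) (1/2); nlinarith
    have hmem : (r:ℂ) ∈ Metric.ball (1:ℂ) ε ∩ stolzRegion 2 := by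
      constructor
      · rw [Metric.mem_ball, Complex.dist_eq]
        have : (r:ℂ) - 1 = ((r - 1 : ℝ) : ℂ) := by push_cast; ring
        rw [this, Complex.norm_real, Real.norm_eq_abs, abs_of_neg (by linarith)]
        have := min_le_left (ε/2) (1/2); linarith
      · constructor
        · rw [Complex.norm_real, Real.norm_eq_abs, _root_.abs_of_pos hr0]; exact h2'
        · have e1 : (r:ℂ) - 1 = ((r - 1 : ℝ) : ℂ) := by push_cast; ring
          rw [e1, Complex.norm_real, Real.norm_eq_abs, abs_of_neg (by linarith), Complex.norm_real, Real.norm_eq_abs,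
            _root_.abs_of_pos hr0]
          linarith
    have := hsub hmem
    simp only [Set.mem_setOf_eq] at this
    have e2 : ‖((r:ℂ) - 1)^4‖ = (1 - r)^4 := by
      rw [norm_pow]
      have e1 : (r:ℂ) - 1 = ((r - 1 : ℝ) : ℂ) := by push_cast; ring
      rw [e1, Complex.norm_real, Real.norm_eq_abs, abs_of_neg (by linarith)]
      ring
    rw [e2] at this
    calc Norm.norm (s r - ((α:ℂ)*r + 1 - α)) = ‖s r - ((α:ℂ)*r + 1 - α)‖ := rfl
      _ ≤ C * (1 - r)^4 := this
      _ ≤ max C 1 * (1 - r)^4 := by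
          have : (0:ℝ) ≤ (1 - r)^4 := by positivity
          nlinarith [le_max_left C 1]
  -- radial bound for s₁
  set C₁ : ℝ := 6 * C₀ / α with hC₁def
  have hC₁pos : 0 < C₁ := by positivity
  have hs₁rad : ∀ r : ℝ, 1 - δ₀ < r → r < 1 →
      Norm.norm (s₁ r - (1 - 2*(α:ℂ))) ≤ C₁ * (1 - r)^2 := by
    intro r h1 h2
    have hr0 : (0:ℝ) < r := by linarith
    have hmem : (r:ℂ) ∈ unitDisk := by
      rw [mem_unitDisk, Complex.norm_real, Real.norm_eq_abs, _root_.abs_of_pos hr0]; exact h2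
    have hk := hkey3 (r:ℂ) hmem
    have habs := congrArg Norm.norm hk
    rw [norm_mul, norm_mul, norm_mul, norm_pow] at habs
    have e1 : Norm.norm ((α:ℂ)) = α := by
      rw [Complex.norm_real, Real.norm_eq_abs, _root_.abs_of_pos hα0]
    have e2 : Norm.norm (1 - (r:ℂ)) = 1 - r := by
      have : (1:ℂ) - r = ((1 - r : ℝ) : ℂ) := by push_cast; ring
      rw [this, Complex.norm_real, Real.norm_eq_abs, _root_.abs_of_pos (by linarith)]
    rw [e1, e2] at habs
    -- |E| ≤ 6
    have hE6 : Norm.norm (2*(α:ℂ) + 1 - (r:ℂ)*(2*(α:ℂ) - 1) - (1 + (r:ℂ)) * s₁ r) ≤ 6 := by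
      have t1 : Norm.norm (2*(α:ℂ) + 1) ≤ 3 := by
        have : 2*(α:ℂ) + 1 = ((2*α + 1 : ℝ) : ℂ) := by push_cast; ring
        rw [this, Complex.norm_real, Real.norm_eq_abs, _root_.abs_of_pos (by linarith)]; linarith
      have t2 : Norm.norm ((r:ℂ)*(2*(α:ℂ) - 1)) ≤ 1 := by
        rw [norm_mul]
        have e3 : Norm.norm ((r:ℂ)) = r := by
          rw [Complex.norm_real, Real.norm_eq_abs, _root_.abs_of_pos hr0]
        have e4 : Norm.norm (2*(α:ℂ) - 1) ≤ 1 := by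
          have : 2*(α:ℂ) - 1 = ((2*α - 1 : ℝ) : ℂ) := by push_cast; ring
          rw [this, Complex.norm_real, Real.norm_eq_abs]
          rw [abs_le]; constructor <;> linarith
        rw [e3]
        nlinarith [norm_nonneg (2*(α:ℂ) - 1)]
      have t3 : Norm.norm ((1 + (r:ℂ)) * s₁ r) ≤ 2 := by
        rw [norm_mul]
        have e5 : Norm.norm (1 + (r:ℂ)) ≤ 2 := by
          have : (1:ℂ) + r = ((1 + r : ℝ) : ℂ) := by push_cast; ring
          rw [this, Complex.norm_real, Real.norm_eq_abs, _root_.abs_of_pos (by linarith)]; linarith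
        have e6 := hs₁.2 _ hmem
        nlinarith [norm_nonneg (1 + (r:ℂ)), norm_nonneg (s₁ r)]
      calc Norm.norm (2*(α:ℂ) + 1 - (r:ℂ)*(2*(α:ℂ) - 1) - (1 + (r:ℂ)) * s₁ r)
          ≤ Norm.norm (2*(α:ℂ) + 1 - (r:ℂ)*(2*(α:ℂ) - 1)) + Norm.norm ((1 + (r:ℂ)) * s₁ r) :=
            norm_sub_le _ _
        _ ≤ (Norm.norm (2*(α:ℂ) + 1) + Norm.norm ((r:ℂ)*(2*(α:ℂ) - 1)))
            + Norm.norm ((1 + (r:ℂ)) * s₁ r) := by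
            have := norm_sub_le (2*(α:ℂ) + 1) ((r:ℂ)*(2*(α:ℂ) - 1))
            linarith
        _ ≤ 6 := by linarith
    have hb := hrad r h1 h2
    -- combine
    have hmain : α * ((1 - r)^2 * Norm.norm (s₁ r - (1 - 2*(α:ℂ))))
        ≤ 6 * C₀ * (1 - r)^4 := by
      have := mul_le_mul hb hE6 (norm_nonneg _) (by positivity)
      calc α * ((1 - r)^2 * Norm.norm (s₁ r - (1 - 2*(α:ℂ))))
          = Norm.norm (s r - ((α:ℂ)*r + 1 - α))
            * Norm.norm (2*(α:ℂ) + 1 - (r:ℂ)*(2*(α:ℂ) - 1) - (1 + (r:ℂ)) * s₁ r) := by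
            rw [habs]; ring
        _ ≤ C₀ * (1 - r)^4 * 6 := this
        _ = 6 * C₀ * (1 - r)^4 := by ring
    rw [hC₁def]
    rw [div_mul_eq_mul_div, le_div_iff₀ hα0]
    have hpos2 : (0:ℝ) < (1 - r)^2 := pow_pos (by linarith) 2
    apply le_of_mul_le_mul_right _ hpos2
    calc Norm.norm (s₁ r - (1 - 2*(α:ℂ))) * α * (1 - r)^2
        = α * ((1 - r)^2 * Norm.norm (s₁ r - (1 - 2*(α:ℂ)))) := by ring
      _ ≤ 6 * C₀ * (1 - r)^4 := hmain
      _ = 6 * C₀ * (1 - r)^2 * (1 - r)^2 := by ring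
  tfae_have 1 → 2 := by
    intro h1 z hz
    have hk := hkey3 z hz
    rw [h1 z hz, sub_self, zero_mul] at hk
    rcases mul_eq_zero.mp hk.symm with h | h
    · exfalso
      rcases mul_eq_zero.mp h with h' | h'
      · exact hαC h'
      · exact pow_ne_zero _ (hz1 z hz) h'
    · linear_combination h
  tfae_have 2 → 1 := by
    intro h2 z hz
    rw [hrel z hz, h2 z hz]
    have hden : 2*(α:ℂ) + 1 - z*(2*(α:ℂ) - 1) - (1 + z)*(1 - 2*(α:ℂ)) = 4*(α:ℂ) := by ring
    have h4 : (4:ℂ)*(α:ℂ) ≠ 0 := mul_ne_zero (by norm_num) hαC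
    rw [show (2*(α:ℂ) - 1 - z*(2*(α:ℂ) + 1)) * (1 - 2*(α:ℂ)) + 1 + z
        = ((α:ℂ)*z + 1 - α) * (2*(α:ℂ) + 1 - z*(2*(α:ℂ) - 1) - (1 + z)*(1 - 2*(α:ℂ)))
        from by ring]
    rw [mul_div_assoc, div_self (hden ▸ h4), mul_one]
  tfae_have 2 → 3 := by
    intro h2 z hz
    rw [h2 z hz]
    have : (1:ℂ) - 2*(α:ℂ) = ((1 - 2*α : ℝ) : ℂ) := by push_cast; ring
    rw [this, Complex.norm_real, Real.norm_eq_abs]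
  tfae_have 3 → 4 := by
    intro h3 z hz
    rw [← hident z hz, norm_mul]
    exact mul_le_mul_of_nonneg_right (h3 z hz) (norm_nonneg _)
  tfae_have 4 → 3 := by
    intro h4 z hz
    have h := h4 z hz
    rw [← hident z hz, norm_mul] at h
    have hpos : 0 < Norm.norm ((2*(α:ℂ) - 1 - z*(2*(α:ℂ) + 1)) + (1 + z) * s z) :=
      norm_pos_iff.mpr (hXne z hz)
    exact le_of_mul_le_mul_right h hpos
  tfae_have 3 → 2 := by
    intro h3
    by_cases hhalf : (1:ℝ) - 2*α = 0
    · intro z hz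
      have h := h3 z hz
      rw [hhalf] at h
      simp only [abs_zero] at h
      have h0 : s₁ z = 0 := by
        have hnn := norm_nonneg (s₁ z)
        have : Norm.norm (s₁ z) = 0 := le_antisymm h hnn
        exact norm_eq_zero.1 this
      rw [h0]
      have e : (1:ℂ) - 2*(α:ℂ) = ((1 - 2*α : ℝ):ℂ) := by push_cast; ring
      rw [e, hhalf]
      simp
    · set β : ℝ := 1 - 2*α with hβ
      have hβC : (1:ℂ) - 2*(α:ℂ) = ((β : ℝ):ℂ) := by rw [hβ]; push_cast; ring
      have hβne : β ≠ 0 := hhalf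
      have hβabs : 0 < |β| := abs_pos.2 hβne
      by_cases hhit : ∃ z₀ ∈ unitDisk, s₁ z₀ = -(β:ℂ)
      · exfalso
        obtain ⟨z₀, hz₀, hz₀eq⟩ := hhit
        have hmax : IsMaxOn (norm ∘ s₁) unitDisk z₀ := by
          intro z hz
          simp only [Function.comp_apply, hz₀eq, norm_neg,
            Complex.norm_real, Real.norm_eq_abs]
          have := h3 z hz
          rw [hβ] at this ⊢
          exact this
        have hconst := Complex.eqOn_of_isPreconnected_of_isMaxOn_norm
          (unitDisk_eq_ball ▸ (convex_ball (0:ℂ) 1).isPreconnected)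
          (unitDisk_eq_ball ▸ Metric.isOpen_ball) hs₁.1 hz₀ hmax
        -- s₁ is constant -β; contradict the radial bound
        set ε : ℝ := min (δ₀/2) (|β|/(C₁+1)) with hε
        have hε0 : 0 < ε := lt_min (by linarith) (by positivity)
        set r : ℝ := 1 - ε with hr
        have hr1 : r < 1 := by simp only [hr]; linarith
        have hrδ : 1 - δ₀ < r := by
          have := min_le_left (δ₀/2) (|β|/(C₁+1)); simp only [hr]; linarith
        have hr0 : (0:ℝ) < r := by
          have h1 := min_le_left (δ₀/2) (|β|/(C₁+1))
          simp only [hr]; linarith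
        have hmem : (r:ℂ) ∈ unitDisk := by
          rw [mem_unitDisk, Complex.norm_real, Real.norm_eq_abs, _root_.abs_of_pos hr0]; exact hr1
        have hb := hs₁rad r hrδ hr1
        rw [hconst hmem] at hb
        simp only [Function.const_apply, hz₀eq] at hb
        have e1 : -(β:ℂ) - (1 - 2*(α:ℂ)) = ((-2*β : ℝ):ℂ) := by
          rw [hβC]; push_cast; ring
        rw [e1, Complex.norm_real, Real.norm_eq_abs] at hb
        have e2 : |(-2*β : ℝ)| = 2*|β| := by rw [abs_mul]; simp [abs_of_nonneg]
        rw [e2] at hb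
        have hεsmall : ε ≤ |β|/(C₁+1) := min_le_right _ _
        have hε1 : ε ≤ 1 := by
          have := min_le_left (δ₀/2) (|β|/(C₁+1)); linarith
        have h1r : (1:ℝ) - r = ε := by simp [hr]
        rw [h1r] at hb
        have : C₁ * ε^2 ≤ C₁ * ε := by nlinarith
        have h2 : C₁ * ε ≤ C₁ * (|β|/(C₁+1)) := by nlinarith
        have h3' : C₁ * (|β|/(C₁+1)) < 2 * |β| := by
          rw [mul_div_assoc']
          rw [div_lt_iff₀ (by positivity)]
          nlinarith
        linarith
      · push_neg at hhit
        have hdenH : ∀ z ∈ unitDisk, (β:ℂ) + s₁ z ≠ 0 := by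
          intro z hz h0
          exact hhit z hz (by linear_combination h0)
        set H : ℂ → ℂ := fun z => ((β:ℂ) - s₁ z)/((β:ℂ) + s₁ z) with hH
        have hHdiff : DifferentiableOn ℂ H (Metric.ball (0:ℂ) 1) := by
          rw [← unitDisk_eq_ball]
          exact DifferentiableOn.div ((differentiableOn_const _).sub hs₁.1)
            ((differentiableOn_const _).add hs₁.1) hdenH
        have hHre : ∀ z ∈ Metric.ball (0:ℂ) 1, 0 ≤ (H z).re := by
          intro z hz
          rw [← unitDisk_eq_ball] at hz
          have hnum : ((β:ℂ) - s₁ z).re * ((β:ℂ) + s₁ z).re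
              + ((β:ℂ) - s₁ z).im * ((β:ℂ) + s₁ z).im = β^2 - normSq (s₁ z) := by
            simp only [Complex.sub_re, Complex.add_re, Complex.sub_im, Complex.add_im,
              Complex.ofReal_re, Complex.ofReal_im, Complex.normSq_apply]
            ring
          have hre : (H z).re = (β^2 - normSq (s₁ z)) / normSq ((β:ℂ) + s₁ z) := by
            rw [hH]
            simp only
            rw [Complex.div_re, ← add_div, hnum]
          rw [hre]
          apply div_nonneg _ (Complex.normSq_nonneg _)
          have h := h3 z hz
          have hsq := Complex.sq_norm (s₁ z)
          nlinarith [norm_nonneg (s₁ z), _root_.sq_abs β]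
        set δ₁ : ℝ := min δ₀ (|β|/(C₁+1)) with hδ₁
        have hδ₁0 : 0 < δ₁ := lt_min hδ₀pos (by positivity)
        have hδ₁half : δ₁ ≤ 1/2 := le_trans (min_le_left _ _) hδ₀half
        have hHrad : ∀ r : ℝ, 1 - δ₁ < r → r < 1 →
            Norm.norm (H r) ≤ (C₁/|β| + 1) * (1-r)^2 := by
          intro r h1 h2
          have hc1 : 1 - δ₀ < r := by
            have := min_le_left δ₀ (|β|/(C₁+1)); linarith
          have hr0 : (0:ℝ) < r := by
            have := hδ₁half; linarith
          have hmem : (r:ℂ) ∈ unitDisk := by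
            rw [mem_unitDisk, Complex.norm_real, Real.norm_eq_abs, _root_.abs_of_pos hr0]; exact h2
          have hb := hs₁rad r hc1 h2
          rw [hβC] at hb
          have hnum : Norm.norm ((β:ℂ) - s₁ r) ≤ C₁ * (1-r)^2 := by
            have e : (β:ℂ) - s₁ r = -(s₁ r - (β:ℂ)) := by ring
            rw [e, norm_neg]
            exact hb
          -- numerator small
          have hsmall : C₁ * (1-r)^2 ≤ |β| := by
            have hεle : 1 - r < |β|/(C₁+1) := by
              have := min_le_right δ₀ (|β|/(C₁+1)); linarith
            have h1r1 : (1:ℝ) - r ≤ 1 := by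
              have := hδ₁half; linarith
            have h1r0 : (0:ℝ) ≤ 1 - r := by linarith
            have hsq : (1-r)^2 ≤ 1 - r := by
              have := mul_le_mul_of_nonneg_left h1r1 h1r0
              calc (1-r)^2 = (1-r)*(1-r) := by ring
                _ ≤ (1-r)*1 := this
                _ = 1-r := by ring
            have hC1 : C₁ * (1 - r) ≤ C₁ * (|β|/(C₁+1)) :=
              mul_le_mul_of_nonneg_left (le_of_lt hεle) hC₁pos.le
            have hlast : C₁ * (|β|/(C₁+1)) ≤ |β| := by
              rw [mul_div_assoc', div_le_iff₀ (by positivity)]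
              have := mul_le_mul_of_nonneg_left (show C₁ ≤ C₁ + 1 by linarith) (abs_nonneg β)
              calc C₁ * |β| = |β| * C₁ := by ring
                _ ≤ |β| * (C₁ + 1) := this
            have hmono : C₁ * (1-r)^2 ≤ C₁ * (1-r) :=
              mul_le_mul_of_nonneg_left hsq hC₁pos.le
            linarith
          have hden : |β| ≤ Norm.norm ((β:ℂ) + s₁ r) := by
            have e : (β:ℂ) + s₁ r = 2*(β:ℂ) - ((β:ℂ) - s₁ r) := by ring
            rw [e]
            have t1 : Norm.norm (2*(β:ℂ)) - Norm.norm ((β:ℂ) - s₁ r)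
                ≤ Norm.norm (2*(β:ℂ) - ((β:ℂ) - s₁ r)) := by
              have := norm_sub_le (2*(β:ℂ)) ((β:ℂ) - s₁ r)
              have t := norm_add_le (2*(β:ℂ) - ((β:ℂ) - s₁ r)) ((β:ℂ) - s₁ r)
              have e2 : 2*(β:ℂ) - ((β:ℂ) - s₁ r) + ((β:ℂ) - s₁ r) = 2*(β:ℂ) := by ring
              rw [e2] at t
              linarith
            have e3 : Norm.norm (2*(β:ℂ)) = 2*|β| := by
              have : 2*(β:ℂ) = ((2*β : ℝ):ℂ) := by push_cast; ring
              rw [this, Complex.norm_real, Real.norm_eq_abs, abs_mul]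
              simp
            rw [e3] at t1
            linarith
          rw [hH]
          simp only
          rw [norm_div]
          rw [div_le_iff₀ (lt_of_lt_of_le hβabs hden)]
          calc Norm.norm ((β:ℂ) - s₁ r) ≤ C₁ * (1-r)^2 := hnum
            _ = (C₁/|β|) * (1-r)^2 * |β| := by field_simp
            _ ≤ (C₁/|β|) * (1-r)^2 * Norm.norm ((β:ℂ) + s₁ r) := by
                have hnn : (0:ℝ) ≤ C₁/|β| * (1-r)^2 := by positivity
                have := mul_le_mul_of_nonneg_left hden hnn
                calc (C₁/|β|) * (1-r)^2 * |β| = C₁/|β| * (1-r)^2 * |β| := by ring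
                  _ ≤ C₁/|β| * (1-r)^2 * Norm.norm ((β:ℂ) + s₁ r) := this
            _ ≤ (C₁/|β| + 1) * (1-r)^2 * Norm.norm ((β:ℂ) + s₁ r) := by
                have hnn : (0:ℝ) ≤ (1-r)^2 * Norm.norm ((β:ℂ) + s₁ r) := by positivity
                have h5 : C₁/|β| ≤ C₁/|β| + 1 := by linarith
                have := mul_le_mul_of_nonneg_right h5 hnn
                calc C₁/|β| * (1-r)^2 * Norm.norm ((β:ℂ) + s₁ r)
                    = C₁/|β| * ((1-r)^2 * Norm.norm ((β:ℂ) + s₁ r)) := by ring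
                  _ ≤ (C₁/|β| + 1) * ((1-r)^2 * Norm.norm ((β:ℂ) + s₁ r)) := this
                  _ = (C₁/|β| + 1) * (1-r)^2 * Norm.norm ((β:ℂ) + s₁ r) := by ring
        have hH0 := herglotz_rigidity H hHdiff hHre (C₁/|β| + 1) δ₁ (by positivity)
          hδ₁0 hδ₁half hHrad
        intro z hz
        have := hH0 z (unitDisk_eq_ball ▸ hz)
        rw [hH] at this
        simp only at this
        rw [div_eq_zero_iff] at this
        rcases this with h0 | h0
        · rw [hβC]; linear_combination -h0
        · exact absurd h0 (hdenH z hz)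
  tfae_have 1 → 5 := by
    intro h1 z hz
    rw [h1 z hz]
    have e1 : 1 - ((α:ℂ)*z + 1 - α) = (α:ℂ)*(1 - z) := by ring
    rw [e1, norm_mul]
    have e2 : Norm.norm ((α:ℂ)) = α := by
      rw [Complex.norm_real, Real.norm_eq_abs, _root_.abs_of_pos hα0]
    rw [e2, mul_pow, Complex.sq_norm, Complex.sq_norm]
    have hden : (0:ℝ) < 1 - α := by linarith
    rw [show (α / (1 - α)) * (1 - normSq ((α:ℂ)*z + 1 - α))
        = α * (1 - normSq ((α:ℂ)*z + 1 - α)) / (1 - α) from by ring]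
    rw [lt_div_iff₀ hden]
    have hNz : normSq z < 1 := normSq_lt_one' hz
    have key : α*(1 - normSq ((α:ℂ)*z + 1 - α)) - α^2*(1-α)*normSq (1 - z)
        = α^2*(1 - normSq z) := by
      simp only [Complex.normSq_apply, Complex.sub_re, Complex.sub_im, Complex.add_re,
        Complex.add_im, Complex.mul_re, Complex.mul_im, Complex.one_re, Complex.one_im,
        Complex.ofReal_re, Complex.ofReal_im]
      ring
    nlinarith [sq_nonneg α, mul_pos hα0 hα0]
  tfae_have 5 → 1 := by
    intro h5
    set t : ℂ → ℂ := fun z => (s z - (1 - (α:ℂ)))/(α:ℂ) with ht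
    have habsα : Norm.norm ((α:ℂ)) = α := by
      rw [Complex.norm_real, Real.norm_eq_abs, _root_.abs_of_pos hα0]
    have htmap : ∀ z ∈ unitDisk, Norm.norm (t z) < 1 := by
      intro z hz
      have h := h5 z hz
      rw [Complex.sq_norm, Complex.sq_norm] at h
      have hden : (0:ℝ) < 1 - α := by linarith
      rw [show (α / (1 - α)) * (1 - normSq (s z)) = α * (1 - normSq (s z)) / (1 - α) from by
        ring, lt_div_iff₀ hden] at h
      have key : α^2 - normSq (s z - (1 - (α:ℂ)))
          = α * (1 - normSq (s z)) - normSq (1 - s z) * (1 - α) := by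
        simp only [Complex.normSq_apply, Complex.sub_re, Complex.sub_im, Complex.one_re,
          Complex.one_im, Complex.ofReal_re, Complex.ofReal_im]
        ring
      have hlt : normSq (s z - (1 - (α:ℂ))) < α^2 := by linarith
      rw [ht]
      simp only
      rw [norm_div, habsα, div_lt_one hα0]
      nlinarith [norm_nonneg (s z - (1 - (α:ℂ))), Complex.sq_norm (s z - (1 - (α:ℂ)))]
    have htdiff : DifferentiableOn ℂ t unitDisk :=
      (hs.1.sub (differentiableOn_const _)).div_const _
    set C₂ : ℝ := C₀ / α + 1 with hC₂
    have hC₂pos : 0 < C₂ := by rw [hC₂]; positivity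
    clear_value C₂
    have htrad : ∀ r : ℝ, 1 - δ₀ < r → r < 1 →
        Norm.norm (t r - r) ≤ C₂ * (1-r)^4 := by
      intro r h1 h2
      have e : t r - r = (s r - ((α:ℂ)*r + 1 - α))/(α:ℂ) := by
        rw [ht]
        field_simp
        ring
      rw [e, norm_div, habsα, div_le_iff₀ hα0]
      have hb := hrad r h1 h2
      have hnn : (0:ℝ) ≤ (1-r)^4 := by positivity
      have : C₀ ≤ C₂ * α := by
        rw [hC₂]
        field_simp
        nlinarith
      nlinarith
    set δ₂ : ℝ := min δ₀ (1/(2*C₂)) with hδ₂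
    have hδ₂0 : 0 < δ₂ := by rw [hδ₂]; exact lt_min hδ₀pos (by positivity)
    have hδ₂half : δ₂ ≤ 1/2 := by rw [hδ₂]; exact le_trans (min_le_left _ _) hδ₀half
    have hδ₂le : δ₂ ≤ δ₀ := by rw [hδ₂]; exact min_le_left _ _
    have hδ₂le2 : δ₂ ≤ 1/(2*C₂) := by rw [hδ₂]; exact min_le_right _ _
    clear_value δ₂
    have hrange : ∀ r : ℝ, 1 - δ₂ < r → r < 1 →
        (1 - δ₀ < r ∧ (1/2:ℝ) ≤ r ∧ C₂*(1-r) ≤ 1/2) := by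
      intro r h1 h2
      have e1 : δ₂ ≤ δ₀ := hδ₂le
      have e2 : δ₂ ≤ 1/(2*C₂) := hδ₂le2
      refine ⟨by linarith, by linarith, ?_⟩
      have h3 : 1 - r < 1/(2*C₂) := by linarith
      rw [lt_div_iff₀ (by positivity)] at h3
      nlinarith
    -- Julia's inequality
    have julia : ∀ z ∈ unitDisk, (1 - normSq z) * normSq (1 - t z)
        ≤ (1 - normSq (t z)) * normSq (1 - z) := by
      intro z hz
      set u : ℕ → ℝ := fun n => 1 - δ₂/(n+2) with hu
      clear_value u
      have hun2 : ∀ n : ℕ, (1:ℝ) < (n:ℝ) + 2 := by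
        intro n; have : (0:ℝ) ≤ (n:ℝ) := Nat.cast_nonneg n; linarith
      have hu1 : ∀ n, u n < 1 := by
        intro n
        simp only [hu]
        have : 0 < δ₂/((n:ℝ)+2) := by positivity
        linarith
      have huδ : ∀ n, 1 - δ₂ < u n := by
        intro n
        simp only [hu]
        have : δ₂/((n:ℝ)+2) < δ₂ := div_lt_self hδ₂0 (hun2 n)
        linarith
      have hu0 : ∀ n, (0:ℝ) ≤ u n := by
        intro n
        have h := (hrange (u n) (huδ n) (hu1 n)).2.1
        exact le_trans (by norm_num) h
      have hulim : Tendsto u atTop (nhds 1) := by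
        rw [hu]
        have h1 : Tendsto (fun n : ℕ => ((n:ℝ)+2)) atTop atTop :=
          tendsto_atTop_add_const_right _ 2 tendsto_natCast_atTop_atTop
        have h2 : Tendsto (fun n : ℕ => δ₂/((n:ℝ)+2)) atTop (nhds 0) :=
          Tendsto.div_atTop tendsto_const_nhds h1
        have h3 := Tendsto.sub
          (tendsto_const_nhds : Tendsto (fun _ : ℕ => (1:ℝ)) atTop (nhds 1)) h2
        simp only [sub_zero] at h3
        exact h3
      have hta : Tendsto (fun n => t (u n)) atTop (nhds 1) := by
        rw [tendsto_iff_dist_tendsto_zero]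
        apply squeeze_zero (fun n => dist_nonneg)
          (g := fun n => C₂*(1 - u n)^4 + (1 - u n))
        · intro n
          rw [Complex.dist_eq]
          have htr := htrad (u n) (hrange (u n) (huδ n) (hu1 n)).1 (hu1 n)
          have e : t (u n) - 1 = (t (u n) - (u n : ℂ)) + ((u n : ℂ) - 1) := by ring
          rw [e]
          have e2 : Norm.norm ((u n : ℂ) - 1) = 1 - u n := by
            have e3 : (u n : ℂ) - 1 = ((u n - 1 : ℝ):ℂ) := by push_cast; ring
            rw [e3, Complex.norm_real, Real.norm_eq_abs, abs_of_neg (by linarith [hu1 n])]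
            ring
          calc Norm.norm ((t (u n) - (u n : ℂ)) + ((u n : ℂ) - 1))
              ≤ Norm.norm (t (u n) - (u n : ℂ)) + Norm.norm ((u n : ℂ) - 1) :=
                norm_add_le _ _
            _ ≤ C₂*(1 - u n)^4 + (1 - u n) := by rw [e2]; linarith
        · have hcont : Continuous (fun x : ℝ => C₂*(1-x)^4 + (1-x)) :=
            (continuous_const.mul ((continuous_const.sub continuous_id).pow 4)).add
              (continuous_const.sub continuous_id)
          have := (hcont.tendsto 1).comp hulim
          simp only [Function.comp_def] at this
          norm_num at this
          exact this
      -- pointwise inequality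
      have hineq : ∀ n, (1 - normSq z) * normSq (1 - (starRingEnd ℂ) (t (u n)) * t z)
          ≤ (1 - normSq (t z)) * ((1 + 2*C₂*(1 - u n)^2) * normSq (1 - (u n : ℂ) * z)) := by
        intro n
        have hrδ' := huδ n
        have hr1 : u n < 1 := hu1 n
        have hr0 : (0:ℝ) ≤ u n := hu0 n
        set r : ℝ := u n with hrdef
        clear_value r
        obtain ⟨hrδ₀, hrhalf, hrC₂⟩ := hrange r hrδ' hr1
        have hrmem : (r:ℂ) ∈ unitDisk := by
          rw [mem_unitDisk, Complex.norm_real, Real.norm_eq_abs, _root_.abs_of_nonneg hr0]; exact hr1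
        have hsp := schwarz_pick_s6 t htdiff htmap z hz r hr0 hr1
        have ha : Norm.norm (t r) < 1 := htmap _ hrmem
        have key1 := mobius_identity ((r:ℂ)) z
        rw [Complex.conj_ofReal, Complex.normSq_ofReal] at key1
        have key2 := mobius_identity (t r) (t z)
        have htr := htrad r hrδ₀ hr1
        -- lower bound for normSq (t r)
        have habs_a : r - C₂*(1-r)^4 ≤ Norm.norm (t r) := by
          have e : (r:ℂ) = t r - (t r - r) := by ring
          have := norm_sub_le (t r) (t r - (r:ℂ))
          have e4 : t ↑r - (t ↑r - (r:ℂ)) = (r:ℂ) := by ring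
          rw [e4] at this
          rw [Complex.norm_real, Real.norm_eq_abs, _root_.abs_of_nonneg hr0] at this
          have e5 : Norm.norm (t ↑r - (r:ℂ)) ≤ C₂*(1-r)^4 := htr
          linarith
        have hq4 : C₂*(1-r)^4 ≤ (1-r)/2 := by
          have h1r : (0:ℝ) ≤ 1 - r := by linarith
          have h1r1 : 1 - r ≤ 1 := by linarith
          calc C₂*(1-r)^4 = (C₂*(1-r))*(1-r)^3 := by ring
            _ ≤ (1/2)*(1-r)^3 := by nlinarith [pow_nonneg h1r 3]
            _ ≤ (1/2)*(1-r) := by nlinarith [pow_nonneg h1r 2]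
            _ = (1-r)/2 := by ring
        have harpos : (0:ℝ) ≤ r - C₂*(1-r)^4 := by linarith
        have hnsa : (r - C₂*(1-r)^4)^2 ≤ normSq (t r) := by
          have := pow_le_pow_left₀ harpos habs_a 2
          rwa [Complex.sq_norm] at this
        have hb1 : 1 - normSq (t r) ≤ (1 - r^2) * (1 + 2*C₂*(1-r)^2) := by
          have h1r : (0:ℝ) ≤ 1 - r := by linarith
          have hq0 : (0:ℝ) ≤ C₂*(1-r)^4 := mul_nonneg hC₂pos.le (pow_nonneg h1r 4)
          have h3nn : (0:ℝ) ≤ C₂*(1-r)^3 := mul_nonneg hC₂pos.le (pow_nonneg h1r 3)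
          have haux : C₂*(1-r)^4 ≤ C₂*(1-r)^3*(1+r) := by
            calc C₂*(1-r)^4 = (C₂*(1-r)^3)*(1-r) := by ring
              _ ≤ (C₂*(1-r)^3)*(1+r) := mul_le_mul_of_nonneg_left (by linarith) h3nn
              _ = C₂*(1-r)^3*(1+r) := by ring
          have hrq : r*(C₂*(1-r)^4) ≤ C₂*(1-r)^4 := by
            calc r*(C₂*(1-r)^4) ≤ 1*(C₂*(1-r)^4) := mul_le_mul_of_nonneg_right (by linarith) hq0
              _ = C₂*(1-r)^4 := by ring
          nlinarith [hnsa, haux, hrq, sq_nonneg (C₂*(1-r)^4)]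
        have hr2pos : (0:ℝ) < 1 - r^2 := by nlinarith
        have htznn : (0:ℝ) ≤ 1 - normSq (t z) := by
          have := normSq_lt_one' (htmap z hz); linarith
        have step1 : (1 - normSq z) * (1-r^2) * normSq (1 - (starRingEnd ℂ) (t r) * t z)
            ≤ normSq (1 - (r:ℂ)*z) * ((1 - normSq (t r)) * (1 - normSq (t z))) := by
          calc (1 - normSq z) * (1-r^2) * normSq (1 - (starRingEnd ℂ) (t r) * t z)
              = (normSq (1 - (r:ℂ)*z) - normSq (z - r)) * normSq (1 - (starRingEnd ℂ) (t r) * t z) := by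
                rw [show (1 - normSq z) * (1-r^2) = (1 - r*r)*(1 - normSq z) from by ring, ← key1]
            _ = normSq (1 - (r:ℂ)*z) * normSq (1 - (starRingEnd ℂ) (t r) * t z)
                - normSq (z - r) * normSq (1 - (starRingEnd ℂ) (t r) * t z) := by ring
            _ ≤ normSq (1 - (r:ℂ)*z) * normSq (1 - (starRingEnd ℂ) (t r) * t z)
                - normSq (t z - t r) * normSq (1 - (r:ℂ)*z) := by linarith [hsp]
            _ = normSq (1 - (r:ℂ)*z)
                * (normSq (1 - (starRingEnd ℂ) (t r) * t z) - normSq (t z - t r)) := by ring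
            _ = normSq (1 - (r:ℂ)*z) * ((1 - normSq (t r)) * (1 - normSq (t z))) := by
                rw [key2]
        have step2 : normSq (1 - (r:ℂ)*z) * ((1 - normSq (t r)) * (1 - normSq (t z)))
            ≤ normSq (1 - (r:ℂ)*z) * (((1 - r^2) * (1 + 2*C₂*(1-r)^2)) * (1 - normSq (t z))) := by
          apply mul_le_mul_of_nonneg_left _ (Complex.normSq_nonneg _)
          exact mul_le_mul_of_nonneg_right hb1 htznn
        have main : ((1 - normSq z) * normSq (1 - (starRingEnd ℂ) (t r) * t z)) * (1-r^2)
            ≤ ((1 - normSq (t z)) * ((1 + 2*C₂*(1-r)^2) * normSq (1 - (r:ℂ)*z))) * (1-r^2) := by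
          calc ((1 - normSq z) * normSq (1 - (starRingEnd ℂ) (t r) * t z)) * (1-r^2)
              = (1 - normSq z) * (1-r^2) * normSq (1 - (starRingEnd ℂ) (t r) * t z) := by ring
            _ ≤ normSq (1 - (r:ℂ)*z) * ((1 - normSq (t r)) * (1 - normSq (t z))) := step1
            _ ≤ normSq (1 - (r:ℂ)*z) * (((1 - r^2) * (1 + 2*C₂*(1-r)^2)) * (1 - normSq (t z))) :=
                step2
            _ = ((1 - normSq (t z)) * ((1 + 2*C₂*(1-r)^2) * normSq (1 - (r:ℂ)*z))) * (1-r^2) := by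
                ring
        exact le_of_mul_le_mul_right main hr2pos
      -- pass to the limit
      have hL : Tendsto (fun n => (1 - normSq z) * normSq (1 - (starRingEnd ℂ) (t (u n)) * t z))
          atTop (nhds ((1 - normSq z) * normSq (1 - t z))) := by
        have hcont : Continuous (fun w : ℂ => (1 - normSq z) * normSq (1 - (starRingEnd ℂ) w * t z)) := by
          apply continuous_const.mul
          exact Complex.continuous_normSq.comp
            (continuous_const.sub (Complex.continuous_conj.mul continuous_const))
        have := (hcont.tendsto 1).comp hta
        simp only [Function.comp, map_one, one_mul] at this
        exact this
      have hR : Tendsto (fun n => (1 - normSq (t z))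
            * ((1 + 2*C₂*(1 - u n)^2) * normSq (1 - (u n : ℂ) * z)))
          atTop (nhds ((1 - normSq (t z)) * normSq (1 - z))) := by
        have hcont : Continuous (fun x : ℝ => (1 - normSq (t z))
            * ((1 + 2*C₂*(1 - x)^2) * normSq (1 - (x : ℂ) * z))) := by
          apply continuous_const.mul
          apply Continuous.mul
          · exact continuous_const.add
              (continuous_const.mul ((continuous_const.sub continuous_id).pow 2))
          · exact Complex.continuous_normSq.comp
              (continuous_const.sub (Complex.continuous_ofReal.mul continuous_const))
        have := (hcont.tendsto 1).comp hulim
        simp only [Function.comp_def] at this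
        have e : (1 - normSq (t z)) * ((1 + 2*C₂*(1 - (1:ℝ))^2) * normSq (1 - ((1:ℝ) : ℂ) * z))
            = (1 - normSq (t z)) * normSq (1 - z) := by norm_num
        rw [e] at this
        exact this
      exact le_of_tendsto_of_tendsto' hL hR hineq
    -- the Herglotz function
    have h1tz : ∀ z ∈ unitDisk, (1:ℂ) - t z ≠ 0 := by
      intro z hz h0
      have he : t z = 1 := by linear_combination -h0
      have := htmap z hz
      rw [he] at this
      simp at this
    set hfun : ℂ → ℂ := fun z => (1 + t z)/(1 - t z) - (1 + z)/(1 - z) with hhfun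
    have hhdiff : DifferentiableOn ℂ hfun (Metric.ball (0:ℂ) 1) := by
      rw [← unitDisk_eq_ball]
      apply DifferentiableOn.sub
      · exact DifferentiableOn.div ((differentiableOn_const _).add htdiff)
          ((differentiableOn_const _).sub htdiff) h1tz
      · exact DifferentiableOn.div ((differentiableOn_const _).add differentiable_id.differentiableOn)
          ((differentiableOn_const _).sub differentiable_id.differentiableOn) hz1
    have hre_formula : ∀ w : ℂ, ((1 + w)/(1 - w)).re = (1 - normSq w)/normSq (1 - w) := by
      intro w
      rw [Complex.div_re, ← add_div]
      congr 1
      simp only [Complex.add_re, Complex.add_im, Complex.sub_re, Complex.sub_im, Complex.one_re,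
        Complex.one_im, Complex.normSq_apply]
      ring
    have hhre : ∀ z ∈ Metric.ball (0:ℂ) 1, 0 ≤ (hfun z).re := by
      intro z hz
      rw [← unitDisk_eq_ball] at hz
      rw [hhfun]
      simp only [Complex.sub_re]
      rw [hre_formula, hre_formula, sub_nonneg]
      have hp1 : 0 < normSq (1 - t z) := Complex.normSq_pos.2 (h1tz z hz)
      have hp2 : 0 < normSq (1 - z) := Complex.normSq_pos.2 (hz1 z hz)
      rw [div_le_div_iff₀ hp2 hp1]
      exact julia z hz
    have hhrad : ∀ r : ℝ, 1 - δ₂ < r → r < 1 →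
        Norm.norm (hfun r) ≤ (4*C₂+1) * (1-r)^2 := by
      intro r h1 h2
      obtain ⟨hrδ₀, hrhalf, hrC₂⟩ := hrange r h1 h2
      have hr0 : (0:ℝ) ≤ r := by linarith
      have hrmem : (r:ℂ) ∈ unitDisk := by
        rw [mem_unitDisk, Complex.norm_real, Real.norm_eq_abs, _root_.abs_of_nonneg hr0]; exact h2
      have htr := htrad r hrδ₀ h2
      have h1r : (0:ℝ) < 1 - r := by linarith
      have e2 : Norm.norm (1 - (r:ℂ)) = 1 - r := by
        have e3 : (1:ℂ) - r = ((1 - r : ℝ):ℂ) := by push_cast; ring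
        rw [e3, Complex.norm_real, Real.norm_eq_abs, _root_.abs_of_pos h1r]
      have hq4 : C₂*(1-r)^4 ≤ (1-r)/2 := by
        have h1r1 : 1 - r ≤ 1 := by linarith
        calc C₂*(1-r)^4 = (C₂*(1-r))*(1-r)^3 := by ring
          _ ≤ (1/2)*(1-r)^3 := by nlinarith [pow_nonneg h1r.le 3]
          _ ≤ (1/2)*(1-r) := by nlinarith [pow_nonneg h1r.le 2]
          _ = (1-r)/2 := by ring
      have hdenlow : (1-r)/2 ≤ Norm.norm (1 - t r) := by
        have e : (1:ℂ) - t r = (1 - (r:ℂ)) - (t r - r) := by ring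
        rw [e]
        have := norm_sub_le (1 - (r:ℂ)) (t ↑r - (r:ℂ))
        have t3 := norm_add_le ((1 - (r:ℂ)) - (t ↑r - (r:ℂ))) (t ↑r - (r:ℂ))
        have e4 : (1 - (r:ℂ)) - (t ↑r - (r:ℂ)) + (t ↑r - (r:ℂ)) = 1 - (r:ℂ) := by ring
        rw [e4, e2] at t3
        linarith
      have he : hfun r = 2*(t r - r)/((1 - t r)*(1 - (r:ℂ))) := by
        rw [hhfun]
        simp only
        rw [div_sub_div _ _ (h1tz _ hrmem) (hz1 _ hrmem)]
        congr 1
        ring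
      rw [he, norm_div, norm_mul, norm_mul, e2, Complex.norm_two]
      have hdenpos : 0 < Norm.norm (1 - t ↑r) * (1-r) := by
        apply mul_pos _ h1r
        linarith
      rw [div_le_iff₀ hdenpos]
      calc 2 * Norm.norm (t ↑r - (r:ℂ)) ≤ 2 * (C₂*(1-r)^4) := by linarith
        _ ≤ (4*C₂+1) * (1-r)^2 * ((1-r)/2 * (1-r)) := by
            nlinarith [pow_nonneg h1r.le 2, pow_nonneg h1r.le 4, sq_nonneg (1-r)]
        _ ≤ (4*C₂+1) * (1-r)^2 * (Norm.norm (1 - t ↑r) * (1-r)) := by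
            apply mul_le_mul_of_nonneg_left _ (by positivity)
            exact mul_le_mul_of_nonneg_right hdenlow h1r.le
    have hh0 := herglotz_rigidity hfun hhdiff hhre (4*C₂+1) δ₂ (by positivity) hδ₂0 hδ₂half hhrad
    intro z hz
    have h0 := hh0 z (unitDisk_eq_ball ▸ hz)
    rw [hhfun] at h0
    simp only at h0
    rw [sub_eq_zero] at h0
    have hcross2 := (div_eq_div_iff (h1tz z hz) (hz1 z hz)).1 h0
    have htz : t z = z := by linear_combination hcross2/2
    rw [ht] at htz
    simp only at htz
    rw [div_eq_iff hαC] at htz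
    linear_combination htz
  tfae_finish
end
end

section
/- Let α ∈ (0,1) and let s be a Schur function admitting the representation s(z) = αz + 1 - α + O((1-z)^4) as z tends nontangentially to 1. Then s(z) = αz + 1 - α for all z ∈ 𝔻 if and only if |1 - s(z)|² < (α/(1-α))·(1 - |s(z)|²) for every z ∈ 𝔻 (i.e., the image s(𝔻) lies inside the horocycle of size α/(1-α) internally tangent to the unit circle at 1). -/
noncomputable section

open Complex Filter

namespace RigidityAux

lemma normSq_moebius (a u : ℂ) :
    Complex.normSq (1 - (starRingEnd ℂ) a * u) =
      Complex.normSq (a - u) + (1 - Complex.normSq a) * (1 - Complex.normSq u) := by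
  simp [Complex.normSq_apply, Complex.mul_re, Complex.mul_im, Complex.sub_re, Complex.sub_im]
  ring

lemma abs_lt_one_iff (z : ℂ) : ‖z‖ < 1 ↔ Complex.normSq z < 1 := by
  rw [← Complex.sq_norm]
  constructor
  · intro h; nlinarith [norm_nonneg z]
  · intro h; nlinarith [norm_nonneg z]

lemma mem_ball_iff_normSq (u : ℂ) :
    u ∈ Metric.ball (0:ℂ) 1 ↔ Complex.normSq u < 1 := by
  rw [Metric.mem_ball, Complex.dist_eq, sub_zero, abs_lt_one_iff]

/-- Möbius factor -/
def moeb (a u : ℂ) : ℂ := (a - u) / (1 - (starRingEnd ℂ) a * u)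

lemma moeb_den_ne (a u : ℂ) (ha : Complex.normSq a < 1) (hu : Complex.normSq u < 1) :
    (1 : ℂ) - (starRingEnd ℂ) a * u ≠ 0 := by
  rw [← Complex.normSq_pos, normSq_moebius]
  nlinarith [Complex.normSq_nonneg (a - u)]

lemma normSq_moeb_lt (a u : ℂ) (ha : Complex.normSq a < 1) (hu : Complex.normSq u < 1) :
    Complex.normSq (moeb a u) < 1 := by
  have hd := moeb_den_ne a u ha hu
  have hd' : 0 < Complex.normSq (1 - (starRingEnd ℂ) a * u) := Complex.normSq_pos.2 hd
  rw [moeb, Complex.normSq_div, div_lt_one hd', normSq_moebius]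
  nlinarith

lemma moeb_moeb (a u : ℂ) (ha : Complex.normSq a < 1) (hu : Complex.normSq u < 1) :
    moeb a (moeb a u) = u := by
  have hd := moeb_den_ne a u ha hu
  have h2 : (1 : ℂ) - (starRingEnd ℂ) a * a ≠ 0 := by
    rw [← Complex.normSq_pos]
    have e1 : (starRingEnd ℂ) a * a = (Complex.normSq a : ℂ) := by
      rw [mul_comm, Complex.mul_conj]
    have e2 : ((1 : ℂ) - (Complex.normSq a : ℂ)) = ((1 - Complex.normSq a : ℝ) : ℂ) := by
      push_cast; ring
    rw [e1, e2, Complex.normSq_ofReal]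
    nlinarith
  have key : 1 - (starRingEnd ℂ) a * ((a - u)/(1 - (starRingEnd ℂ) a * u))
      = (1 - (starRingEnd ℂ) a * a)/(1 - (starRingEnd ℂ) a * u) := by
    field_simp; ring
  rw [moeb, moeb, key, div_eq_iff (div_ne_zero h2 hd)]
  rw [mul_div_assoc', eq_div_iff hd, sub_mul, div_mul_cancel₀ _ hd]
  ring

lemma moeb_diffOn (a : ℂ) (ha : Complex.normSq a < 1) :
    DifferentiableOn ℂ (moeb a) (Metric.ball (0:ℂ) 1) := by
  apply DifferentiableOn.div
  · exact (differentiable_const a).differentiableOn.sub differentiable_id.differentiableOn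
  · exact (differentiable_const (1:ℂ)).differentiableOn.sub
      ((differentiable_const _).mul differentiable_id).differentiableOn
  · intro u hu
    exact moeb_den_ne a u ha ((mem_ball_iff_normSq u).1 hu)

lemma schwarz_pick {f : ℂ → ℂ} (hd : DifferentiableOn ℂ f (Metric.ball 0 1))
    (hm : ∀ u ∈ Metric.ball (0:ℂ) 1, ‖f u‖ < 1)
    {z w : ℂ} (hz : ‖z‖ < 1) (hw : ‖w‖ < 1) :
    ‖f z - f w‖ * ‖1 - (starRingEnd ℂ) w * z‖ ≤
      ‖z - w‖ * ‖1 - (starRingEnd ℂ) (f w) * f z‖ := by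
  have nz : Complex.normSq z < 1 := (abs_lt_one_iff z).1 hz
  have nw : Complex.normSq w < 1 := (abs_lt_one_iff w).1 hw
  have hwmem : w ∈ Metric.ball (0:ℂ) 1 := (mem_ball_iff_normSq w).2 nw
  have hzmem : z ∈ Metric.ball (0:ℂ) 1 := (mem_ball_iff_normSq z).2 nz
  have nfw : Complex.normSq (f w) < 1 := (abs_lt_one_iff _).1 (hm w hwmem)
  have nfz : Complex.normSq (f z) < 1 := (abs_lt_one_iff _).1 (hm z hzmem)
  have hmapsw : Set.MapsTo (moeb w) (Metric.ball (0:ℂ) 1) (Metric.ball (0:ℂ) 1) := by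
    intro u hu
    exact (mem_ball_iff_normSq _).2 (normSq_moeb_lt w u nw ((mem_ball_iff_normSq u).1 hu))
  have hinner : DifferentiableOn ℂ (fun u => f (moeb w u)) (Metric.ball (0:ℂ) 1) :=
    hd.comp (moeb_diffOn w nw) hmapsw
  have hinner_lt : ∀ u ∈ Metric.ball (0:ℂ) 1, Complex.normSq (f (moeb w u)) < 1 := by
    intro u hu
    exact (abs_lt_one_iff _).1 (hm _ (hmapsw hu))
  set g : ℂ → ℂ := fun u => moeb (f w) (f (moeb w u)) with hg
  have hgdiff : DifferentiableOn ℂ g (Metric.ball (0:ℂ) 1) :=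
    (moeb_diffOn (f w) nfw).comp hinner (fun u hu => (mem_ball_iff_normSq _).2 (hinner_lt u hu))
  have hgmaps : Set.MapsTo g (Metric.ball (0:ℂ) 1) (Metric.ball (0:ℂ) 1) := by
    intro u hu
    exact (mem_ball_iff_normSq _).2 (normSq_moeb_lt (f w) _ nfw (hinner_lt u hu))
  have hg0 : g 0 = 0 := by
    have h1 : moeb w 0 = w := by simp [moeb]
    show moeb (f w) (f (moeb w 0)) = 0
    rw [h1, moeb, sub_self, zero_div]
  have hu : ‖moeb w z‖ < 1 := (abs_lt_one_iff _).2 (normSq_moeb_lt w z nw nz)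
  have hs := norm_le_norm_of_mapsTo_ball hgdiff (hgmaps.mono_right Metric.ball_subset_closedBall) hg0 hu
  have hgval : g (moeb w z) = moeb (f w) (f z) := by
    simp only [hg, moeb_moeb w z nw nz]
  rw [hgval] at hs
  have d1 : ‖1 - (starRingEnd ℂ) (f w) * f z‖ ≠ 0 :=
    norm_ne_zero_iff.mpr (moeb_den_ne _ _ nfw nfz)
  have d2 : ‖1 - (starRingEnd ℂ) w * z‖ ≠ 0 :=
    norm_ne_zero_iff.mpr (moeb_den_ne _ _ nw nz)
  rw [moeb, moeb, norm_div, norm_div, div_le_div_iff₀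
    (lt_of_le_of_ne (norm_nonneg _) (Ne.symm d1))
    (lt_of_le_of_ne (norm_nonneg _) (Ne.symm d2))] at hs
  calc ‖f z - f w‖ * ‖1 - (starRingEnd ℂ) w * z‖
      = ‖f w - f z‖ * ‖1 - (starRingEnd ℂ) w * z‖ := by
        rw [norm_sub_rev]
    _ ≤ ‖w - z‖ * ‖1 - (starRingEnd ℂ) (f w) * f z‖ := hs
    _ = ‖z - w‖ * ‖1 - (starRingEnd ℂ) (f w) * f z‖ := by
        rw [norm_sub_rev]

/-- The radial approach filter. -/
abbrev lfil : Filter ℝ := nhdsWithin 1 (Set.Ioo (0:ℝ) 1)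

instance : lfil.NeBot := right_nhdsWithin_Ioo_neBot (by norm_num)

lemma tendsto_id_l : Tendsto (fun r : ℝ => r) lfil (nhds 1) :=
  tendsto_id.mono_left nhdsWithin_le_nhds

lemma tendsto_coe_l : Tendsto (fun r : ℝ => (r:ℂ)) lfil (nhds 1) := by
  have := (Complex.continuous_ofReal.tendsto 1).comp tendsto_id_l
  simpa [Function.comp_def] using this

lemma coe_mem_ball {r : ℝ} (hr : r ∈ Set.Ioo (0:ℝ) 1) : (r:ℂ) ∈ Metric.ball (0:ℂ) 1 := by
  rw [mem_ball_iff_normSq, Complex.normSq_ofReal]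
  nlinarith [hr.1, hr.2]

lemma key_ineq {f : ℂ → ℂ} (hd : DifferentiableOn ℂ f (Metric.ball 0 1))
    (hm : ∀ u ∈ Metric.ball (0:ℂ) 1, ‖f u‖ < 1)
    {z : ℂ} (hz : ‖z‖ < 1) {r : ℝ} (hr : r ∈ Set.Ioo (0:ℝ) 1) :
    Complex.normSq (1 - (starRingEnd ℂ) (f r) * f z) * ((1 - r^2) * (1 - Complex.normSq z)) ≤
      (1 - Complex.normSq (f r)) * (1 - Complex.normSq (f z)) * Complex.normSq (1 - (r:ℂ) * z) := by
  have hrabs : ‖(r:ℂ)‖ < 1 := by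
    rw [Complex.norm_real, Real.norm_eq_abs, abs_of_pos hr.1]; exact hr.2
  have hsp := schwarz_pick hd hm hz hrabs
  rw [Complex.conj_ofReal] at hsp
  have hsq : (‖f z - f ↑r‖ * ‖1 - (r:ℂ) * z‖)^2 ≤
      (‖z - ↑r‖ * ‖1 - (starRingEnd ℂ) (f ↑r) * f z‖)^2 := by
    have h0 : 0 ≤ ‖f z - f ↑r‖ * ‖1 - (r:ℂ) * z‖ :=
      mul_nonneg (norm_nonneg _) (norm_nonneg _)
    nlinarith
  rw [mul_pow, mul_pow] at hsq
  simp only [Complex.sq_norm] at hsq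
  have e1 : Complex.normSq (1 - (starRingEnd ℂ) (f ↑r) * f z)
      = Complex.normSq (f ↑r - f z) + (1 - Complex.normSq (f ↑r)) * (1 - Complex.normSq (f z)) :=
    normSq_moebius _ _
  have e2 : Complex.normSq (1 - (r:ℂ) * z)
      = Complex.normSq ((r:ℂ) - z) + (1 - r^2) * (1 - Complex.normSq z) := by
    have := normSq_moebius (r:ℂ) z
    rw [Complex.conj_ofReal] at this
    rw [this, Complex.normSq_ofReal]; ring_nf
  have e3 : Complex.normSq (f z - f ↑r) = Complex.normSq (f ↑r - f z) := by
    rw [← Complex.normSq_neg]; ring_nf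
  have e4 : Complex.normSq (z - ↑r) = Complex.normSq ((r:ℂ) - z) := by
    rw [← Complex.normSq_neg]; ring_nf
  rw [e3, e4] at hsq
  rw [e1, e2] at hsq ⊢
  nlinarith [hsq]

/-- Julia's lemma on the unit disk. -/
lemma julia {f : ℂ → ℂ} (hd : DifferentiableOn ℂ f (Metric.ball 0 1))
    (hm : ∀ u ∈ Metric.ball (0:ℂ) 1, ‖f u‖ < 1) {A : ℝ}
    (h1 : Tendsto (fun r : ℝ => f r) lfil (nhds 1))
    (h2 : Tendsto (fun r : ℝ => (1 - Complex.normSq (f r))/(1 - r^2)) lfil (nhds A))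
    {z : ℂ} (hz : ‖z‖ < 1) :
    Complex.normSq (1 - f z) * (1 - Complex.normSq z) ≤
      A * (Complex.normSq (1 - z) * (1 - Complex.normSq (f z))) := by
  set F : ℝ → ℝ := fun r =>
    Complex.normSq (1 - (starRingEnd ℂ) (f r) * f z) * (1 - Complex.normSq z) with hF
  set G : ℝ → ℝ := fun r => ((1 - Complex.normSq (f r))/(1 - r^2)) *
    ((1 - Complex.normSq (f z)) * Complex.normSq (1 - (r:ℂ) * z)) with hG
  have hev : ∀ᶠ r : ℝ in lfil, F r ≤ G r := by
    filter_upwards [eventually_mem_nhdsWithin] with r hr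
    have hkey := key_ineq hd hm hz hr
    have hc : (0:ℝ) < 1 - r^2 := by nlinarith [hr.1, hr.2]
    simp only [hF, hG]
    rw [div_mul_eq_mul_div, le_div_iff₀ hc]
    nlinarith [hkey]
  have hFlim : Tendsto F lfil (nhds (Complex.normSq (1 - f z) * (1 - Complex.normSq z))) := by
    apply Tendsto.mul _ tendsto_const_nhds
    have hconj : Tendsto (fun r : ℝ => (starRingEnd ℂ) (f r)) lfil (nhds 1) := by
      have := (Complex.continuous_conj.tendsto 1).comp h1
      simpa [Function.comp_def] using this
    have h3 : Tendsto (fun r : ℝ => 1 - (starRingEnd ℂ) (f r) * f z) lfil (nhds (1 - 1 * f z)) :=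
      tendsto_const_nhds.sub (hconj.mul tendsto_const_nhds)
    rw [one_mul] at h3
    exact (Complex.continuous_normSq.tendsto _).comp h3
  have hGlim : Tendsto G lfil
      (nhds (A * ((1 - Complex.normSq (f z)) * Complex.normSq (1 - z)))) := by
    apply Tendsto.mul h2
    apply Tendsto.mul tendsto_const_nhds
    have h3 : Tendsto (fun r : ℝ => 1 - (r:ℂ) * z) lfil (nhds (1 - 1 * z)) :=
      tendsto_const_nhds.sub (tendsto_coe_l.mul tendsto_const_nhds)
    rw [one_mul] at h3
    exact (Complex.continuous_normSq.tendsto _).comp h3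
  have := le_of_tendsto_of_tendsto hFlim hGlim hev
  linarith [this]

lemma normSq_halfplane (u a : ℂ) :
    Complex.normSq (u + (starRingEnd ℂ) a) = Complex.normSq (u - a) + 4 * u.re * a.re := by
  simp [Complex.normSq_apply, Complex.add_re, Complex.add_im, Complex.sub_re, Complex.sub_im]
  ring

/-- A holomorphic function with nonnegative real part on the disk that decays
faster than `1 - r` along the radius vanishes identically. -/
lemma herglotz_vanish {v : ℂ → ℂ} (hd : DifferentiableOn ℂ v (Metric.ball 0 1))
    (hre : ∀ z ∈ Metric.ball (0:ℂ) 1, 0 ≤ (v z).re)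
    (h0 : Tendsto (fun r : ℝ => v r) lfil (nhds 0))
    (h1 : Tendsto (fun r : ℝ => (v r).re / (1 - r)) lfil (nhds 0)) :
    ∀ z ∈ Metric.ball (0:ℂ) 1, v z = 0 := by
  by_cases hcase : ∀ z ∈ Metric.ball (0:ℂ) 1, 0 < (v z).re
  · exfalso
    have h0mem : (0:ℂ) ∈ Metric.ball (0:ℂ) 1 := by simp
    set a : ℂ := v 0 with ha
    have hp : 0 < a.re := hcase 0 h0mem
    have hden : ∀ z ∈ Metric.ball (0:ℂ) 1, v z + (starRingEnd ℂ) a ≠ 0 := by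
      intro z hz h
      have h2 : (v z + (starRingEnd ℂ) a).re = (v z).re + a.re := by
        simp [Complex.add_re]
      rw [h] at h2
      simp at h2
      nlinarith [hcase z hz]
    set g : ℂ → ℂ := fun z => (v z - a) / (v z + (starRingEnd ℂ) a) with hg
    have hgdiff : DifferentiableOn ℂ g (Metric.ball (0:ℂ) 1) :=
      (hd.sub (differentiable_const a).differentiableOn).div
        (hd.add (differentiable_const _).differentiableOn) hden
    have hgmaps : Set.MapsTo g (Metric.ball (0:ℂ) 1) (Metric.ball (0:ℂ) 1) := by
      intro z hz
      rw [mem_ball_iff_normSq, hg, Complex.normSq_div,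
        div_lt_one (Complex.normSq_pos.2 (hden z hz)), normSq_halfplane]
      nlinarith [hcase z hz]
    have hg0 : g 0 = 0 := by simp [hg, ha]
    have hkey : ∀ r ∈ Set.Ioo (0:ℝ) 1, a.re * (1 - r) ≤ (v r).re * (1 + r) := by
      intro r hr
      have hrabs : ‖(r:ℂ)‖ < 1 := by
        rw [Complex.norm_real, Real.norm_eq_abs, abs_of_pos hr.1]; exact hr.2
      have hsch := norm_le_norm_of_mapsTo_ball hgdiff (hgmaps.mono_right Metric.ball_subset_closedBall) hg0 hrabs
      have hrmem := coe_mem_ball hr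
      have hdne := hden _ hrmem
      have habs : ‖v r - a‖ ≤ r * ‖v r + (starRingEnd ℂ) a‖ := by
        rw [hg, norm_div] at hsch
        rw [div_le_iff₀ (norm_pos_iff.mpr hdne)] at hsch
        calc ‖v ↑r - a‖
            ≤ ‖(r:ℂ)‖ * ‖v ↑r + (starRingEnd ℂ) a‖ := hsch
          _ = r * ‖v ↑r + (starRingEnd ℂ) a‖ := by
              rw [Complex.norm_real, Real.norm_eq_abs, abs_of_pos hr.1]
      have hnormSq : Complex.normSq (v r - a) ≤
          r^2 * Complex.normSq (v r + (starRingEnd ℂ) a) := by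
        have h2 := mul_le_mul habs habs (norm_nonneg _)
          (mul_nonneg (le_of_lt hr.1) (norm_nonneg _))
        rw [← Complex.sq_norm, ← Complex.sq_norm]
        nlinarith [h2]
      rw [normSq_halfplane] at hnormSq
      have hx : 0 < (v r).re := hcase _ hrmem
      have hexp : Complex.normSq (v ↑r - a) = ((v ↑r).re - a.re)^2 + ((v ↑r).im - a.im)^2 := by
        simp [Complex.normSq_apply, Complex.sub_re, Complex.sub_im]; ring
      rw [hexp] at hnormSq
      have h5 : ((v ↑r).re - a.re)^2 ≤ r^2 * ((v ↑r).re + a.re)^2 := by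
        nlinarith [mul_nonneg (by nlinarith [hr.1, hr.2] : (0:ℝ) ≤ 1 - r^2)
          (sq_nonneg ((v ↑r).im - a.im))]
      have hrp : (0:ℝ) ≤ r * ((v ↑r).re + a.re) := by
        apply mul_nonneg (le_of_lt hr.1); nlinarith [hx, hp]
      have h6 : |a.re - (v ↑r).re| ≤ r * ((v ↑r).re + a.re) := by
        rw [← Real.sqrt_sq hrp, ← Real.sqrt_sq_eq_abs]
        apply Real.sqrt_le_sqrt
        rw [mul_pow]
        nlinarith [h5]
      have h7 : a.re - (v ↑r).re ≤ r * ((v ↑r).re + a.re) := le_trans (le_abs_self _) h6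
      nlinarith [h7]
    have hle : ∀ᶠ r : ℝ in lfil, a.re / (1 + r) ≤ (v r).re / (1 - r) := by
      filter_upwards [eventually_mem_nhdsWithin] with r hr
      rw [div_le_div_iff₀ (by nlinarith [hr.1] : (0:ℝ) < 1 + r)
        (by nlinarith [hr.2] : (0:ℝ) < 1 - r)]
      exact hkey r hr
    have hlim : Tendsto (fun r : ℝ => a.re / (1 + r)) lfil (nhds (a.re / 2)) := by
      have h2 : Tendsto (fun r : ℝ => (1:ℝ) + r) lfil (nhds 2) := by
        have h3 : Tendsto (fun r : ℝ => (1:ℝ) + r) (nhds 1) (nhds ((1:ℝ) + 1)) :=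
          tendsto_const_nhds.add tendsto_id
        norm_num at h3
        exact h3.mono_left nhdsWithin_le_nhds
      exact tendsto_const_nhds.div h2 (by norm_num)
    have := le_of_tendsto_of_tendsto hlim h1 hle
    nlinarith [hp, this]
  · push_neg at hcase
    obtain ⟨z₀, hz₀, hz₀re⟩ := hcase
    have han : AnalyticOnNhd ℂ v (Metric.ball (0:ℂ) 1) :=
      hd.analyticOnNhd Metric.isOpen_ball
    rcases (han z₀ hz₀).eventually_constant_or_nhds_le_map_nhds with hconst | hopen
    · have heq : Set.EqOn v (fun _ => v z₀) (Metric.ball (0:ℂ) 1) := by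
        apply han.eqOn_of_preconnected_of_eventuallyEq analyticOnNhd_const
          (convex_ball (0:ℂ) 1).isPreconnected hz₀
        exact hconst
      have hev : ∀ᶠ r : ℝ in lfil, v r = v z₀ := by
        filter_upwards [eventually_mem_nhdsWithin] with r hr
        exact heq (coe_mem_ball hr)
      have hval : v z₀ = 0 :=
        tendsto_nhds_unique tendsto_const_nhds (Filter.Tendsto.congr' hev h0)
      intro z hz
      rw [heq hz, hval]
    · exfalso
      have himg : v '' (Metric.ball (0:ℂ) 1) ∈ nhds (v z₀) := by
        apply hopen
        exact image_mem_map (Metric.isOpen_ball.mem_nhds hz₀)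
      obtain ⟨ε, hε, hsub⟩ := Metric.mem_nhds_iff.1 himg
      have hwmem : v z₀ - ((ε/2:ℝ) : ℂ) ∈ Metric.ball (v z₀) ε := by
        rw [Metric.mem_ball, Complex.dist_eq]
        have he : v z₀ - ((ε/2:ℝ):ℂ) - v z₀ = -((ε/2:ℝ):ℂ) := by ring
        rw [he, norm_neg, Complex.norm_real, Real.norm_eq_abs, abs_of_pos (by linarith)]
        linarith
      obtain ⟨z₁, hz₁, hval⟩ := hsub hwmem
      have hlt : (v z₁).re < 0 := by
        rw [hval]
        simp only [Complex.sub_re, Complex.ofReal_re]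
        nlinarith [hz₀re]
      nlinarith [hre z₁ hz₁]

lemma normSq_schur_identity (c : ℝ) (u : ℂ) :
    Complex.normSq (((c:ℝ):ℂ) * u + 2 - ((c:ℝ):ℂ)) =
      Complex.normSq ((((2+c:ℝ)):ℂ) * u - ((c:ℝ):ℂ)) +
        4 * ((1 - Complex.normSq u) - c * Complex.normSq (1 - u)) := by
  simp [Complex.normSq_apply, Complex.add_re, Complex.add_im, Complex.sub_re, Complex.sub_im,
    Complex.mul_re, Complex.mul_im, Complex.ofReal_re, Complex.ofReal_im]
  ring

lemma one_sub_normSq (u : ℂ) :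
    1 - Complex.normSq u = 2 * (1 - u).re - Complex.normSq (1 - u) := by
  simp [Complex.normSq_apply, Complex.sub_re, Complex.sub_im]
  ring

lemma re_term1 (c : ℝ) (u : ℂ) :
    (((((1+c:ℝ)):ℂ) * u + 1 - ((c:ℝ):ℂ)) / (1-u)).re =
      ((1 - Complex.normSq u) - c * Complex.normSq (1 - u)) / Complex.normSq (1-u) := by
  rw [Complex.div_re, ← add_div]
  congr 1
  simp [Complex.normSq_apply, Complex.add_re, Complex.add_im, Complex.sub_re, Complex.sub_im,
    Complex.mul_re, Complex.mul_im, Complex.ofReal_re, Complex.ofReal_im]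
  ring

lemma re_term2 (t : ℝ) (z : ℂ) :
    ((((t:ℝ):ℂ) * (1+z)) / (1-z)).re = t * (1 - Complex.normSq z) / Complex.normSq (1-z) := by
  rw [Complex.div_re, ← add_div, mul_div_assoc]
  rw [← mul_div_assoc]
  congr 1
  simp [Complex.normSq_apply, Complex.add_re, Complex.add_im, Complex.sub_re, Complex.sub_im,
    Complex.mul_re, Complex.mul_im, Complex.ofReal_re, Complex.ofReal_im]
  ring

end RigidityAux

open RigidityAux

set_option maxHeartbeats 2000000 in
theorem rigidity_horocycle (α : ℝ) (hα : α ∈ Set.Ioo (0 : ℝ) 1)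
    (s : ℂ → ℂ) (hs : SchurFunction s)
    (hO : NTBigO (fun z => s z - (α * z + 1 - α)) 4) :
    (∀ z ∈ unitDisk, s z = α * z + 1 - α) ↔
      (∀ z ∈ unitDisk,
        ‖1 - s z‖ ^ 2 < (α / (1 - α)) * (1 - ‖s z‖ ^ 2)) := by
  obtain ⟨hα0, hα1⟩ := hα
  have hdisk : unitDisk = Metric.ball (0:ℂ) 1 := by
    ext w; simp [unitDisk, Metric.mem_ball, Complex.dist_eq]
  have hne1ball : ∀ w ∈ Metric.ball (0:ℂ) 1, (1:ℂ) - w ≠ 0 := by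
    intro w hw hcon
    have : w = 1 := by linear_combination -hcon
    rw [this, mem_ball_iff_normSq] at hw
    simp [Complex.normSq_apply] at hw
  constructor
  · -- forward: the affine map satisfies the strict horocycle inequality
    intro heq z hz
    rw [heq z hz]
    have hz2 : z.re*z.re + z.im*z.im < 1 := by
      have := (abs_lt_one_iff z).1 hz
      simpa [Complex.normSq_apply] using this
    rw [Complex.sq_norm, Complex.sq_norm, div_mul_eq_mul_div,
      lt_div_iff₀ (by linarith : (0:ℝ) < 1 - α)]
    simp only [Complex.normSq_apply, Complex.sub_re, Complex.sub_im, Complex.add_re,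
      Complex.add_im, Complex.mul_re, Complex.mul_im, Complex.ofReal_re, Complex.ofReal_im,
      Complex.one_re, Complex.one_im]
    ring_nf
    nlinarith [mul_pos (mul_pos hα0 hα0) (by nlinarith [hz2] : (0:ℝ) < 1 - (z.re*z.re + z.im*z.im)),
      hα0, hα1, hz2, sq_nonneg z.re, sq_nonneg z.im]
  · -- backward: the rigidity statement
    intro h
    set γ : ℂ := (α:ℂ) with hγ
    set c : ℝ := (1-α)/α with hc
    have hγne : γ ≠ 0 := by
      rw [hγ]; exact_mod_cast ne_of_gt hα0
    have hc0 : 0 < c := div_pos (by linarith) hα0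
    have hcα : α * (1+c) = 1 := by
      rw [hc]; field_simp; ring
    -- pointwise horocycle inequality in `normSq` form
    have hn : ∀ w ∈ Metric.ball (0:ℂ) 1,
        c * Complex.normSq (1 - s w) < 1 - Complex.normSq (s w) := by
      intro w hw
      have hw' : w ∈ unitDisk := by rw [hdisk]; exact hw
      have h1 := h w hw'
      rw [Complex.sq_norm, Complex.sq_norm, div_mul_eq_mul_div,
        lt_div_iff₀ (by linarith : (0:ℝ) < 1 - α)] at h1
      rw [hc, div_mul_eq_mul_div, div_lt_iff₀ hα0]
      nlinarith [h1]
    have hsne : ∀ w ∈ Metric.ball (0:ℂ) 1, s w ≠ 1 := by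
      intro w hw hw1
      have h2 := hn w hw
      rw [hw1] at h2
      simp [Complex.normSq_apply] at h2
    have hslt : ∀ w ∈ Metric.ball (0:ℂ) 1, Complex.normSq (s w) < 1 := by
      intro w hw
      nlinarith [hn w hw, mul_nonneg hc0.le (Complex.normSq_nonneg (1 - s w))]
    have sdiff : DifferentiableOn ℂ s (Metric.ball (0:ℂ) 1) := by
      rw [← hdisk]; exact hs.1
    -- the associated Möbius-transformed Schur function
    set nm : ℂ → ℂ := fun w => (((2+c:ℝ)):ℂ) * s w - ((c:ℝ):ℂ) with hnmdef
    set dn : ℂ → ℂ := fun w => ((c:ℝ):ℂ) * s w + 2 - ((c:ℝ):ℂ) with hdndef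
    have hkeyid : ∀ w : ℂ, Complex.normSq (dn w) = Complex.normSq (nm w) +
        4 * ((1 - Complex.normSq (s w)) - c * Complex.normSq (1 - s w)) :=
      fun w => normSq_schur_identity c (s w)
    have hdenpos : ∀ w ∈ Metric.ball (0:ℂ) 1, 0 < Complex.normSq (dn w) := by
      intro w hw
      have := hkeyid w
      nlinarith [hn w hw, Complex.normSq_nonneg (nm w)]
    have hdenne : ∀ w ∈ Metric.ball (0:ℂ) 1, dn w ≠ 0 :=
      fun w hw => Complex.normSq_pos.1 (hdenpos w hw)
    set sh : ℂ → ℂ := fun w => nm w / dn w with hshdef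
    have hshlt : ∀ w ∈ Metric.ball (0:ℂ) 1, ‖sh w‖ < 1 := by
      intro w hw
      rw [abs_lt_one_iff, hshdef]
      simp only
      rw [Complex.normSq_div, div_lt_one (hdenpos w hw)]
      nlinarith [hkeyid w, hn w hw]
    have hshdiff : DifferentiableOn ℂ sh (Metric.ball (0:ℂ) 1) := by
      apply DifferentiableOn.div
      · exact (sdiff.const_mul _).sub_const _
      · exact ((sdiff.const_mul _).add_const _).sub_const _
      · exact hdenne
    -- radial asymptotics
    have hstolz : Tendsto (fun r : ℝ => (r:ℂ)) lfil (nhdsWithin 1 (stolzRegion 2)) := by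
      apply tendsto_nhdsWithin_of_tendsto_nhds_of_eventually_within _ tendsto_coe_l
      filter_upwards [eventually_mem_nhdsWithin] with r hr
      refine ⟨?_, ?_⟩
      · rw [Complex.norm_real, Real.norm_eq_abs, abs_of_pos hr.1]; exact hr.2
      · have h1 : (r:ℂ) - 1 = ((r - 1 : ℝ):ℂ) := by push_cast; ring
        rw [h1, Complex.norm_real, Complex.norm_real, Real.norm_eq_abs, Real.norm_eq_abs, abs_of_pos hr.1,
          abs_of_neg (by linarith [hr.2] : r - 1 < 0)]
        linarith [hr.2]
    set e : ℝ → ℂ := fun r => s ↑r - (γ * ↑r + 1 - γ) with hedef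
    have he : e =O[lfil] fun r : ℝ => ((r:ℂ) - 1)^4 := (hO 2 one_lt_two).comp_tendsto hstolz
    have hrne : ∀ᶠ r : ℝ in lfil, ((r:ℂ) - 1) ≠ 0 := by
      filter_upwards [eventually_mem_nhdsWithin] with r hr
      simp only [ne_eq, sub_eq_zero]
      exact_mod_cast ne_of_lt hr.2
    have hpow : ∀ k : ℕ, k < 4 →
        Tendsto (fun r : ℝ => e r / ((r:ℂ)-1)^k) lfil (nhds 0) := by
      intro k hk
      have h1 : (fun r : ℝ => e r / ((r:ℂ)-1)^k)
          =O[lfil] fun r : ℝ => ((r:ℂ)-1)^4 * (((r:ℂ)-1)^k)⁻¹ := by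
        simpa [div_eq_mul_inv] using he.mul (Asymptotics.isBigO_refl (fun r : ℝ => (((r:ℂ)-1)^k)⁻¹) lfil)
      apply h1.trans_tendsto
      have h3 : Tendsto (fun r : ℝ => (r:ℂ)-1) lfil (nhds 0) := by
        have := tendsto_coe_l.sub (tendsto_const_nhds (x := (1:ℂ)))
        simpa using this
      have h2 : Tendsto (fun r : ℝ => ((r:ℂ)-1)^(4-k)) lfil (nhds 0) := by
        have h4 := h3.pow (4-k)
        rwa [zero_pow (by omega : 4-k ≠ 0)] at h4
      apply Tendsto.congr' _ h2
      filter_upwards [hrne] with r hr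
      rw [pow_sub₀ _ hr (by omega : k ≤ 4)]
    have hq : Tendsto (fun r : ℝ => (1 - s ↑r)/(1-(r:ℂ))) lfil (nhds γ) := by
      have h1 := (tendsto_const_nhds (x := γ)).add (hpow 1 (by norm_num))
      rw [add_zero] at h1
      apply Tendsto.congr' _ h1
      filter_upwards [hrne] with r hr
      have hr1 : (1:ℂ) - (r:ℂ) ≠ 0 := by
        intro hzero; apply hr; linear_combination -hzero
      simp only [hedef, pow_one]
      field_simp
      ring
    have hs1 : Tendsto (fun r : ℝ => s ↑r) lfil (nhds 1) := by
      have h1 : Tendsto (fun r : ℝ => e r + (γ*↑r + 1 - γ)) lfil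
          (nhds (0 + (γ*1 + 1 - γ))) := by
        apply Tendsto.add
        · exact (hpow 0 (by norm_num)).congr (fun r => by simp)
        · exact ((tendsto_const_nhds.mul tendsto_coe_l).add tendsto_const_nhds).sub
            tendsto_const_nhds
      have h2 : (0 : ℂ) + (γ*1 + 1 - γ) = 1 := by ring
      rw [h2] at h1
      exact h1.congr (fun r => by simp only [hedef]; ring)
    have hplus : Tendsto (fun r : ℝ => 1 + r) lfil (nhds 2) := by
      have h3 : Tendsto (fun r : ℝ => (1:ℝ) + r) (nhds 1) (nhds ((1:ℝ)+1)) :=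
        tendsto_const_nhds.add tendsto_id
      norm_num at h3
      exact h3.mono_left nhdsWithin_le_nhds
    have hratio : Tendsto (fun r : ℝ => (1-r)/(1+r)) lfil (nhds 0) := by
      have hminus : Tendsto (fun r : ℝ => (1:ℝ) - r) lfil (nhds 0) := by
        have h3 : Tendsto (fun r : ℝ => (1:ℝ) - r) (nhds 1) (nhds ((1:ℝ)-1)) :=
          tendsto_const_nhds.sub tendsto_id
        norm_num at h3
        exact h3.mono_left nhdsWithin_le_nhds
      have h7 : Tendsto (fun r : ℝ => (1-r)/(1+r)) lfil (nhds (0/2)) :=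
        Tendsto.div hminus hplus (by norm_num)
      simpa using h7
    have hB : Tendsto (fun r : ℝ => Complex.normSq (1 - s ↑r)/(1-r^2)) lfil (nhds 0) := by
      have h1 : Tendsto (fun r : ℝ =>
          Complex.normSq ((1 - s ↑r)/(1-(r:ℂ))) * ((1-r)/(1+r))) lfil
          (nhds (Complex.normSq γ * 0)) :=
        Tendsto.mul ((Complex.continuous_normSq.tendsto _).comp hq) hratio
      rw [mul_zero] at h1
      apply Tendsto.congr' _ h1
      filter_upwards [eventually_mem_nhdsWithin] with r hr
      have hr1 : (1:ℝ) - r ≠ 0 := by nlinarith [hr.2]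
      have hr2 : (1:ℝ) + r ≠ 0 := by nlinarith [hr.1]
      have hcoe : ((1:ℂ) - (r:ℂ)) = ((1-r:ℝ):ℂ) := by push_cast; ring
      rw [Complex.normSq_div, hcoe, Complex.normSq_ofReal,
        show (1:ℝ) - r^2 = (1-r)*(1+r) by ring]
      field_simp
    have hA1 : Tendsto (fun r : ℝ => (1 - Complex.normSq (s ↑r))/(1-r^2)) lfil (nhds α) := by
      have h1 : Tendsto (fun r : ℝ =>
          2 * (((1 - s ↑r)/(1-(r:ℂ))).re / (1+r)) - Complex.normSq (1 - s ↑r)/(1-r^2)) lfil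
          (nhds (2 * (γ.re / 2) - 0)) := by
        apply Tendsto.sub _ hB
        apply Tendsto.const_mul
        exact ((Complex.continuous_re.tendsto _).comp hq).div hplus (by norm_num)
      have h2 : 2 * (γ.re / 2) - 0 = α := by rw [hγ, Complex.ofReal_re]; ring
      rw [h2] at h1
      apply Tendsto.congr' _ h1
      filter_upwards [eventually_mem_nhdsWithin] with r hr
      have hr1 : (1:ℝ) - r ≠ 0 := by nlinarith [hr.2]
      have hr2 : (1:ℝ) + r ≠ 0 := by nlinarith [hr.1]
      have hcoe : ((1:ℂ) - (r:ℂ)) = ((1-r:ℝ):ℂ) := by push_cast; ring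
      rw [one_sub_normSq (s ↑r), hcoe, Complex.div_ofReal_re,
        show (1:ℝ) - r^2 = (1-r)*(1+r) by ring]
      field_simp
    have hdnlim : Tendsto (fun r : ℝ => dn ↑r) lfil (nhds 2) := by
      have h3 : Tendsto (fun r : ℝ => dn ↑r) lfil
          (nhds (((c:ℝ):ℂ) * 1 + 2 - ((c:ℝ):ℂ))) := by
        simp only [hdndef]
        exact ((tendsto_const_nhds.mul hs1).add tendsto_const_nhds).sub tendsto_const_nhds
      have h4 : (((c:ℝ):ℂ) * 1 + 2 - ((c:ℝ):ℂ)) = 2 := by ring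
      rwa [h4] at h3
    have hdnsqlim : Tendsto (fun r : ℝ => Complex.normSq (dn ↑r)) lfil (nhds 4) := by
      have h4 := (Complex.continuous_normSq.tendsto _).comp hdnlim
      have h5 : Complex.normSq (2:ℂ) = 4 := by
        norm_num [Complex.normSq_apply]
      rwa [h5] at h4
    have hA : Tendsto (fun r : ℝ => (1 - Complex.normSq (sh ↑r))/(1-r^2)) lfil (nhds α) := by
      have h1 : Tendsto (fun r : ℝ => (4/Complex.normSq (dn ↑r)) *
          ((1 - Complex.normSq (s ↑r))/(1-r^2) - c * (Complex.normSq (1 - s ↑r)/(1-r^2))))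
          lfil (nhds ((4/4) * (α - c * 0))) :=
        Tendsto.mul (tendsto_const_nhds.div hdnsqlim (by norm_num))
          (hA1.sub (tendsto_const_nhds.mul hB))
      have h2 : ((4:ℝ)/4) * (α - c*0) = α := by norm_num
      rw [h2] at h1
      apply Tendsto.congr' _ h1
      filter_upwards [eventually_mem_nhdsWithin] with r hr
      have hrmem := coe_mem_ball hr
      have hDpos := hdenpos _ hrmem
      have hDne : Complex.normSq (dn (↑r:ℂ)) ≠ 0 := ne_of_gt hDpos
      have hr2 : (1:ℝ) - r^2 ≠ 0 := by nlinarith [hr.1, hr.2]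
      have hid := hkeyid (↑r:ℂ)
      simp only [hshdef]
      rw [Complex.normSq_div]
      have h9 : 1 - Complex.normSq (nm ↑r)/Complex.normSq (dn ↑r) =
          4*((1 - Complex.normSq (s ↑r)) - c*Complex.normSq (1-s ↑r))/Complex.normSq (dn ↑r) := by
        rw [eq_div_iff hDne, sub_mul, one_mul, div_mul_cancel₀ _ hDne]
        linarith [hid]
      rw [h9]
      rw [mul_div_assoc', div_sub_div_same, div_mul_div_comm, div_div]
    -- Julia's lemma for sh
    have hJ : ∀ w : ℂ, ‖w‖ < 1 →
        Complex.normSq (1 - sh w) * (1 - Complex.normSq w) ≤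
          α * (Complex.normSq (1 - w) * (1 - Complex.normSq (sh w))) := by
      intro w hw
      exact julia hshdiff hshlt
        (by
          have h3 : Tendsto (fun r : ℝ => nm ↑r) lfil (nhds 2) := by
            have h4 : Tendsto (fun r : ℝ => nm ↑r) lfil
                (nhds ((((2+c:ℝ)):ℂ) * 1 - ((c:ℝ):ℂ))) := by
              simp only [hnmdef]
              exact (tendsto_const_nhds.mul hs1).sub tendsto_const_nhds
            have h5 : ((((2+c:ℝ)):ℂ) * 1 - ((c:ℝ):ℂ)) = 2 := by push_cast; ring
            rwa [h5] at h4
          have h6 : Tendsto (fun r : ℝ => nm ↑r / dn ↑r) lfil (nhds ((2:ℂ)/2)) :=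
            h3.div hdnlim (by norm_num)
          rw [show ((2:ℂ)/2) = 1 by norm_num] at h6
          exact h6.congr (fun r => by simp only [hshdef])) hA hw
    -- the auxiliary function with nonnegative real part
    set v : ℂ → ℂ := fun w =>
      ((((1+c:ℝ)):ℂ) * s w + 1 - ((c:ℝ):ℂ))/(1 - s w) -
        ((((1+c:ℝ)):ℂ) * (1+w))/(1-w) with hvdef
    have hveq : ∀ w : ℂ, s w ≠ 1 → (1:ℂ) - w ≠ 0 →
        v w = 2*(s w - (γ*w + 1 - γ))/((1 - s w)*(γ*(1-w))) := by
      intro w h1 h2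
      have h3 : (1:ℂ) - s w ≠ 0 := sub_ne_zero.2 (Ne.symm h1)
      have hγc : ((c:ℝ):ℂ) = (1-γ)/γ := by
        rw [hc, hγ]; push_cast; ring
      have hγc2 : (((1+c:ℝ)):ℂ) = 1 + ((c:ℝ):ℂ) := by push_cast; ring
      simp only [hvdef]
      rw [hγc2, hγc]
      field_simp
      ring
    have hvre : ∀ w ∈ Metric.ball (0:ℂ) 1, 0 ≤ (v w).re := by
      intro w hw
      have hz1 : (1:ℂ) - w ≠ 0 := hne1ball w hw
      have hsw1 : s w ≠ 1 := hsne w hw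
      have h3 : (1:ℂ) - s w ≠ 0 := sub_ne_zero.2 (Ne.symm hsw1)
      have hX : 0 < Complex.normSq (1 - s w) := Complex.normSq_pos.2 h3
      have hY : 0 < Complex.normSq (1 - w) := Complex.normSq_pos.2 hz1
      have hD : 0 < Complex.normSq (dn w) := hdenpos w hw
      have hDne : Complex.normSq (dn w) ≠ 0 := ne_of_gt hD
      have hM : 0 < (1 - Complex.normSq (s w)) - c * Complex.normSq (1 - s w) := by
        nlinarith [hn w hw]
      have hwn : Complex.normSq w < 1 := (mem_ball_iff_normSq w).1 hw
      have hwabs : ‖w‖ < 1 := (abs_lt_one_iff w).2 hwn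
      have hJw := hJ w hwabs
      have hshw : (1 - sh w) * dn w = 2*(1 - s w) := by
        simp only [hshdef]
        rw [sub_mul, one_mul, div_mul_cancel₀ _ (hdenne w hw)]
        simp only [hdndef, hnmdef]
        push_cast
        ring
      have e1 : Complex.normSq (1 - sh w) * Complex.normSq (dn w) =
          4 * Complex.normSq (1 - s w) := by
        rw [← Complex.normSq_mul, hshw, Complex.normSq_mul,
          show Complex.normSq (2:ℂ) = 4 by norm_num [Complex.normSq_apply]]
      have e2 : (1 - Complex.normSq (sh w)) * Complex.normSq (dn w) =
          4 * ((1 - Complex.normSq (s w)) - c * Complex.normSq (1 - s w)) := by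
        simp only [hshdef]
        rw [Complex.normSq_div, sub_mul, one_mul, div_mul_cancel₀ _ hDne]
        linarith [hkeyid w]
      have h6 := mul_le_mul_of_nonneg_right hJw (le_of_lt hD)
      have hIneq : Complex.normSq (1 - s w) * (1 - Complex.normSq w) ≤
          α * (Complex.normSq (1-w) *
            ((1 - Complex.normSq (s w)) - c * Complex.normSq (1 - s w))) := by
        have k1 : 4*(Complex.normSq (1 - s w) * (1 - Complex.normSq w)) =
            Complex.normSq (1 - sh w) * (1 - Complex.normSq w) * Complex.normSq (dn w) := by
          linear_combination (-(1 - Complex.normSq w)) * e1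
        have k2 : α * (Complex.normSq (1-w) *
            ((1 - Complex.normSq (s w)) - c * Complex.normSq (1 - s w))) * 4 =
            α * (Complex.normSq (1-w) * (1 - Complex.normSq (sh w))) * Complex.normSq (dn w) := by
          linear_combination (-(α * Complex.normSq (1-w))) * e2
        linarith [h6, k1, k2]
      simp only [hvdef]
      rw [Complex.sub_re, re_term1 c (s w), re_term2 (1+c) w]
      rw [sub_nonneg, div_le_div_iff₀ hY hX]
      have k3 := mul_le_mul_of_nonneg_left hIneq (by linarith [hc0] : (0:ℝ) ≤ 1 + c)
      have k4 : (1+c) * (α * (Complex.normSq (1-w) *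
          ((1 - Complex.normSq (s w)) - c * Complex.normSq (1 - s w)))) =
          Complex.normSq (1-w) * ((1 - Complex.normSq (s w)) - c * Complex.normSq (1 - s w)) := by
        linear_combination (Complex.normSq (1-w) *
          ((1 - Complex.normSq (s w)) - c * Complex.normSq (1 - s w))) * hcα
      linarith [k3, k4]
    have hvdiff : DifferentiableOn ℂ v (Metric.ball (0:ℂ) 1) := by
      simp only [hvdef]
      apply DifferentiableOn.sub
      · apply DifferentiableOn.div
        · exact ((sdiff.const_mul _).add_const _).sub_const _
        · exact (differentiable_const (1:ℂ)).differentiableOn.sub sdiff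
        · intro w hw; exact sub_ne_zero.2 (Ne.symm (hsne w hw))
      · apply DifferentiableOn.div
        · exact ((differentiable_const _).mul
            ((differentiable_const (1:ℂ)).add differentiable_id)).differentiableOn
        · exact ((differentiable_const (1:ℂ)).sub differentiable_id).differentiableOn
        · exact hne1ball
    have hv3 : Tendsto (fun r : ℝ => v ↑r / (1 - (r:ℂ))) lfil (nhds 0) := by
      have hneg : Tendsto (fun r : ℝ => e r/(1-(r:ℂ))^3) lfil (nhds 0) := by
        have h9 := (hpow 3 (by norm_num)).neg
        rw [neg_zero] at h9
        apply h9.congr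
        intro r
        rw [show ((1:ℂ)-(r:ℂ))^3 = -(((r:ℂ)-1)^3) from by ring, div_neg]
      have hbase : Tendsto (fun r : ℝ =>
          (e r/(1-(r:ℂ))^3) * (((1 - s ↑r)/(1-(r:ℂ)))⁻¹ * (2/γ))) lfil
          (nhds (0 * (γ⁻¹ * (2/γ)))) :=
        hneg.mul ((hq.inv₀ hγne).mul tendsto_const_nhds)
      rw [zero_mul] at hbase
      apply Tendsto.congr' _ hbase
      filter_upwards [eventually_mem_nhdsWithin] with r hr
      have hrmem := coe_mem_ball hr
      have h2 : (1:ℂ) - ↑r ≠ 0 := hne1ball _ hrmem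
      have h3 : (1:ℂ) - s ↑r ≠ 0 := sub_ne_zero.2 (Ne.symm (hsne _ hrmem))
      rw [hveq ↑r (hsne _ hrmem) h2, inv_div]
      simp only [hedef]
      field_simp
    have hv0 : Tendsto (fun r : ℝ => v ↑r) lfil (nhds 0) := by
      have h1 : Tendsto (fun r : ℝ => v ↑r/(1-(r:ℂ)) * (1-(r:ℂ))) lfil (nhds (0 * 0)) := by
        apply hv3.mul
        have h3 : Tendsto (fun r : ℝ => (1:ℂ) - ↑r) lfil (nhds (1 - 1)) :=
          tendsto_const_nhds.sub tendsto_coe_l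
        simpa using h3
      rw [mul_zero] at h1
      apply Tendsto.congr' _ h1
      filter_upwards [eventually_mem_nhdsWithin] with r hr
      exact div_mul_cancel₀ _ (hne1ball _ (coe_mem_ball hr))
    have hv4 : Tendsto (fun r : ℝ => (v ↑r).re / (1 - r)) lfil (nhds 0) := by
      have h1 : Tendsto (fun r : ℝ => (v ↑r / (1-(r:ℂ))).re) lfil (nhds ((0:ℂ).re)) :=
        (Complex.continuous_re.tendsto _).comp hv3
      rw [Complex.zero_re] at h1
      apply Tendsto.congr' _ h1
      filter_upwards with r
      rw [show ((1:ℂ) - ↑r) = ((1-r:ℝ):ℂ) from by push_cast; ring, Complex.div_ofReal_re]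
    have hvz := herglotz_vanish hvdiff hvre hv0 hv4
    intro z hz
    have hz' : z ∈ Metric.ball (0:ℂ) 1 := by rw [← hdisk]; exact hz
    have h0 := hvz z hz'
    rw [hveq z (hsne z hz') (hne1ball z hz')] at h0
    have hden2 : (1 - s z)*(γ*(1-z)) ≠ 0 :=
      mul_ne_zero (sub_ne_zero.2 (Ne.symm (hsne z hz'))) (mul_ne_zero hγne (hne1ball z hz'))
    rcases div_eq_zero_iff.1 h0 with h0 | h0
    · have h5 : s z - (γ*z + 1 - γ) = 0 :=
        (mul_eq_zero.1 h0).resolve_left two_ne_zero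
      linear_combination h5
    · exact absurd h0 hden2
end
end
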